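/- arXiv:2504.17008 — 14 statements merged into one kernel-verified Lean document; each statement's English description precedes it below -/
import Mathlib

section
/- Let γ > 0 and let φ : [0,∞) → ℝ be strictly increasing on [0,∞) such that ψ(z) = φ(e^z) is convex on ℝ. Then for all g, f ∈ F_γ, the functional density power divergence is nonnegative: D_{φ,γ}(g,f) = (1/γ)φ(⟨g^{1+γ}⟩) − ((1+γ)/γ)φ(⟨g f^γ⟩) + φ(⟨f^{1+γ}⟩) ≥ 0. -/
open MeasureTheory

/-- `⟨g^{1+γ}⟩`, `⟨g f^γ⟩`, `⟨f^{1+γ}⟩`-based functional density power divergence. -/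
noncomputable def FDPD {X : Type*} [MeasurableSpace X] (ν : Measure X)
    (φ : ℝ → ℝ) (γ : ℝ) (g f : X → NNReal) : ℝ :=
  (1 / γ) * φ (∫⁻ x, (g x : ENNReal) ^ (1 + γ) ∂ν).toReal
    - ((1 + γ) / γ) * φ (∫⁻ x, (g x : ENNReal) * (f x : ENNReal) ^ γ ∂ν).toReal
    + φ (∫⁻ x, (f x : ENNReal) ^ (1 + γ) ∂ν).toReal

/-- Membership in the class `F_γ`: measurable, not a.e. zero, with `⟨g^{1+γ}⟩ < ∞`. -/
def MemF {X : Type*} [MeasurableSpace X] (ν : Measure X) (γ : ℝ) (g : X → NNReal) : Prop :=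
  Measurable g ∧ ¬ (g =ᵐ[ν] 0) ∧ (∫⁻ x, (g x : ENNReal) ^ (1 + γ) ∂ν) ≠ ⊤

/-- If `∫ g^{1+γ} = 0` then `g = 0` a.e. -/
lemma lintegral_rpow_ne_zero {X : Type*} [MeasurableSpace X] {ν : Measure X} {γ : ℝ}
    (hγ : 0 < γ) {g : X → NNReal} (hgm : Measurable g) (hg0 : ¬ (g =ᵐ[ν] 0)) :
    (∫⁻ x, (g x : ENNReal) ^ (1 + γ) ∂ν) ≠ 0 := by
  intro h
  rw [lintegral_eq_zero_iff (by fun_prop)] at h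
  apply hg0
  filter_upwards [h] with x hx
  simp only [Pi.zero_apply] at hx ⊢
  rw [ENNReal.rpow_eq_zero_iff] at hx
  rcases hx with ⟨h0, _⟩ | ⟨ht, _⟩
  · exact_mod_cast h0
  · exact absurd ht (by simp)

theorem fdpd_nonneg {X : Type*} [MeasurableSpace X] (ν : Measure X) (γ : ℝ) (hγ : 0 < γ)
    (φ : ℝ → ℝ) (hφ : StrictMonoOn φ (Set.Ici (0 : ℝ)))
    (hψ : ConvexOn ℝ Set.univ (fun z : ℝ => φ (Real.exp z)))
    (g f : X → NNReal) (hg : MemF ν γ g) (hf : MemF ν γ f) :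
    0 ≤ FDPD ν φ γ g f := by
  obtain ⟨hgm, hg0, hgT⟩ := hg
  obtain ⟨hfm, hf0, hfT⟩ := hf
  set A := ∫⁻ x, (g x : ENNReal) ^ (1 + γ) ∂ν with hA
  set C := ∫⁻ x, (f x : ENNReal) ^ (1 + γ) ∂ν with hC
  set B := ∫⁻ x, (g x : ENNReal) * (f x : ENNReal) ^ γ ∂ν with hB
  have h1γ : (0:ℝ) < 1 + γ := by linarith
  -- conjugate exponents
  have hpq : (1 + γ).HolderConjugate ((1 + γ) / γ) := by
    rw [Real.holderConjugate_iff]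
    constructor
    · linarith
    · field_simp
  -- Hölder
  have holder : B ≤ A ^ (1 / (1 + γ)) * C ^ (γ / (1 + γ)) := by
    have h := ENNReal.lintegral_mul_le_Lp_mul_Lq ν hpq
      (f := fun x => (g x : ENNReal)) (g := fun x => (f x : ENNReal) ^ γ)
      (by fun_prop) (by fun_prop)
    simp only [Pi.mul_apply] at h
    have hrw : ∀ x : X, ((f x : ENNReal) ^ γ) ^ ((1 + γ) / γ) = (f x : ENNReal) ^ (1 + γ) := by
      intro x
      rw [← ENNReal.rpow_mul]
      congr 1
      field_simp
    have hq : 1 / ((1 + γ) / γ) = γ / (1 + γ) := by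
      field_simp
    simp only [hrw, hq] at h
    exact h
  -- positivity of A and C
  have hA0 : A ≠ 0 := lintegral_rpow_ne_zero hγ hgm hg0
  have hC0 : C ≠ 0 := lintegral_rpow_ne_zero hγ hfm hf0
  have haR : 0 < A.toReal := ENNReal.toReal_pos hA0 hgT
  have hcR : 0 < C.toReal := ENNReal.toReal_pos hC0 hfT
  set a := A.toReal
  set c := C.toReal
  -- RHS of Hölder is finite
  have hRT : A ^ (1 / (1 + γ)) * C ^ (γ / (1 + γ)) ≠ ⊤ := by
    apply ENNReal.mul_ne_top
    · exact ENNReal.rpow_ne_top_of_nonneg (by positivity) hgT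
    · exact ENNReal.rpow_ne_top_of_nonneg (by positivity) hfT
  have hBT : B ≠ ⊤ := by
    intro h
    rw [h] at holder
    exact hRT (top_le_iff.mp holder)
  -- Hölder in ℝ
  have holderR : B.toReal ≤ a ^ (1 / (1 + γ)) * c ^ (γ / (1 + γ)) := by
    have := ENNReal.toReal_mono hRT holder
    rwa [ENNReal.toReal_mul, ← ENNReal.toReal_rpow, ← ENNReal.toReal_rpow] at this
  set b := B.toReal
  have hb0 : 0 ≤ b := ENNReal.toReal_nonneg
  -- convexity step
  have hlam : (0:ℝ) ≤ 1 / (1 + γ) := by positivity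
  have hmu : (0:ℝ) ≤ γ / (1 + γ) := by positivity
  have hsum : 1 / (1 + γ) + γ / (1 + γ) = 1 := by field_simp
  have hconv := hψ.2 (Set.mem_univ (Real.log a)) (Set.mem_univ (Real.log c)) hlam hmu hsum
  simp only [smul_eq_mul] at hconv
  have hexp : Real.exp (1 / (1 + γ) * Real.log a + γ / (1 + γ) * Real.log c)
      = a ^ (1 / (1 + γ)) * c ^ (γ / (1 + γ)) := by
    rw [Real.exp_add, Real.rpow_def_of_pos haR, Real.rpow_def_of_pos hcR,
      mul_comm (Real.log a), mul_comm (Real.log c)]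
  rw [hexp, Real.exp_log haR, Real.exp_log hcR] at hconv
  -- monotonicity step
  have hmem : a ^ (1 / (1 + γ)) * c ^ (γ / (1 + γ)) ∈ Set.Ici (0:ℝ) := by
    simp only [Set.mem_Ici]; positivity
  have hmono : φ b ≤ φ (a ^ (1 / (1 + γ)) * c ^ (γ / (1 + γ))) :=
    hφ.monotoneOn (Set.mem_Ici.mpr hb0) hmem holderR
  have key : φ b ≤ 1 / (1 + γ) * φ a + γ / (1 + γ) * φ c := le_trans hmono hconv
  -- finish
  show 0 ≤ (1 / γ) * φ a - ((1 + γ) / γ) * φ b + φ c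
  have := mul_le_mul_of_nonneg_left key (le_of_lt (by positivity : (0:ℝ) < (1 + γ) / γ))
  have heq : (1 + γ) / γ * (1 / (1 + γ) * φ a + γ / (1 + γ) * φ c)
      = (1 / γ) * φ a + φ c := by
    field_simp
  rw [heq] at this
  linarith
end

section
/- Let γ > 0 and let φ : [0,∞) → ℝ be strictly increasing on [0,∞) such that ψ(z) = φ(e^z) is strictly convex on ℝ. Then for g, f ∈ F_γ, D_{φ,γ}(g,f) = 0 holds if and only if g = f ν-almost everywhere. -/
open MeasureTheory

private lemma young_eq {γ u v : ℝ} (hγ : 0 < γ) (hu : 0 ≤ u) (hv : 0 ≤ v)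
    (h : u * v ^ γ = u ^ (1 + γ) / (1 + γ) + v ^ (1 + γ) / ((1 + γ) / γ)) : u = v := by
  have hp : (0:ℝ) < 1 + γ := by linarith
  rcases hu.eq_or_lt with hu0 | hu0
  · -- u = 0 : deduce v = 0
    rw [← hu0, zero_mul, Real.zero_rpow hp.ne', zero_div, zero_add] at h
    have hq : (0:ℝ) < (1 + γ) / γ := by positivity
    rw [← hu0]
    have hv0 : v ^ (1 + γ) = 0 := by
      by_contra hvne
      have : 0 < v ^ (1 + γ) / ((1 + γ) / γ) := by
        have : 0 < v ^ (1 + γ) := lt_of_le_of_ne (Real.rpow_nonneg hv _) (Ne.symm hvne)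
        positivity
      linarith
    exact ((Real.rpow_eq_zero hv hp.ne').mp hv0).symm
  rcases hv.eq_or_lt with hv0 | hv0
  · -- v = 0 : deduce u = 0, contradiction with u > 0
    rw [← hv0, Real.zero_rpow hγ.ne', mul_zero, Real.zero_rpow hp.ne', zero_div, add_zero] at h
    have h0 : u ^ (1 + γ) = 0 := by
      by_contra hune
      have : 0 < u ^ (1 + γ) / (1 + γ) := by
        have : 0 < u ^ (1 + γ) := lt_of_le_of_ne (Real.rpow_nonneg hu _) (Ne.symm hune)
        positivity
      linarith
    exact absurd ((Real.rpow_eq_zero hu hp.ne').mp h0) hu0.ne'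
  · by_contra hne
    set s := Real.log u * (1 + γ) with hs
    set t := Real.log v * (1 + γ) with ht
    have hst : s ≠ t := by
      intro hh
      exact hne (Real.log_injOn_pos (Set.mem_Ioi.2 hu0) (Set.mem_Ioi.2 hv0)
        (mul_right_cancel₀ hp.ne' hh))
    have ha : (0:ℝ) < 1 / (1 + γ) := by positivity
    have hb : (0:ℝ) < γ / (1 + γ) := by positivity
    have hab : 1 / (1 + γ) + γ / (1 + γ) = 1 := by field_simp
    have strict := strictConvexOn_exp.2 (Set.mem_univ s) (Set.mem_univ t) hst ha hb hab
    simp only [smul_eq_mul] at strict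
    have hls : Real.exp s = u ^ (1 + γ) := by
      rw [Real.rpow_def_of_pos hu0]
    have hlt : Real.exp t = v ^ (1 + γ) := by
      rw [Real.rpow_def_of_pos hv0]
    have hlhs : Real.exp (1 / (1 + γ) * s + γ / (1 + γ) * t) = u * v ^ γ := by
      have h1 : 1 / (1 + γ) * s = Real.log u := by field_simp [hs]; rw [hs]; ring
      have h2 : γ / (1 + γ) * t = Real.log v * γ := by field_simp [ht]; ring
      rw [h1, h2, Real.exp_add, Real.exp_log hu0, ← Real.rpow_def_of_pos hv0]
    rw [hlhs, hls, hlt] at strict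
    have hq : v ^ (1 + γ) / ((1 + γ) / γ) = γ / (1 + γ) * v ^ (1 + γ) := by
      field_simp
    rw [hq] at h
    have : 1 / (1 + γ) * u ^ (1 + γ) = u ^ (1 + γ) / (1 + γ) := by ring
    linarith [strict]

theorem fdpd_eq_zero_iff {X : Type*} [MeasurableSpace X] (ν : Measure X) (γ : ℝ) (hγ : 0 < γ)
    (φ : ℝ → ℝ) (hφ : StrictMonoOn φ (Set.Ici (0 : ℝ)))
    (hψ : StrictConvexOn ℝ Set.univ (fun z : ℝ => φ (Real.exp z)))
    (g f : X → NNReal) (hg : MemF ν γ g) (hf : MemF ν γ f) :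
    FDPD ν φ γ g f = 0 ↔ g =ᵐ[ν] f := by
  obtain ⟨hgm, hg0, hgtop⟩ := hg
  obtain ⟨hfm, hf0, hftop⟩ := hf
  have hp : (0:ℝ) < 1 + γ := by linarith
  have hq : (0:ℝ) < (1 + γ) / γ := by positivity
  have hpq : Real.HolderConjugate (1 + γ) ((1 + γ) / γ) :=
    ⟨by rw [inv_one]; field_simp, hp, hq⟩
  have hgme : Measurable fun x => (g x : ENNReal) := hgm.coe_nnreal_ennreal
  have hfme : Measurable fun x => (f x : ENNReal) := hfm.coe_nnreal_ennreal
  simp only [FDPD]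
  set A := ∫⁻ x, (g x : ENNReal) ^ (1 + γ) ∂ν with hA
  set B := ∫⁻ x, (g x : ENNReal) * (f x : ENNReal) ^ γ ∂ν with hB
  set C := ∫⁻ x, (f x : ENNReal) ^ (1 + γ) ∂ν with hC
  -- positivity of A and C
  have key0 : ∀ (h : X → NNReal), Measurable h → ¬ (h =ᵐ[ν] 0) →
      (∫⁻ x, (h x : ENNReal) ^ (1 + γ) ∂ν) ≠ 0 := by
    intro h hm h0 hzero
    apply h0
    have hmeas : Measurable fun x => (h x : ENNReal) ^ (1 + γ) :=
      hm.coe_nnreal_ennreal.pow_const _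
    filter_upwards [(lintegral_eq_zero_iff hmeas).mp hzero] with x hx
    simp only [Pi.zero_apply] at hx ⊢
    rcases ENNReal.rpow_eq_zero_iff.mp hx with ⟨h1, _⟩ | ⟨h1, _⟩
    · exact_mod_cast h1
    · exact absurd h1 ENNReal.coe_ne_top
  have hA0 : A ≠ 0 := key0 g hgm hg0
  have hC0 : C ≠ 0 := key0 f hfm hf0
  have ha : 0 < A.toReal := ENNReal.toReal_pos hA0 hgtop
  have hc : 0 < C.toReal := ENNReal.toReal_pos hC0 hftop
  -- Hölder's inequality
  have hBholder : B ≤ A ^ (1/(1+γ)) * C ^ (1/((1+γ)/γ)) := by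
    have hH := ENNReal.lintegral_mul_le_Lp_mul_Lq ν hpq hgme.aemeasurable
      ((hfme.pow_const γ).aemeasurable)
    calc B = ∫⁻ x, ((fun x => (g x : ENNReal)) * fun x => (f x : ENNReal) ^ γ) x ∂ν := rfl
    _ ≤ (∫⁻ x, (g x : ENNReal) ^ (1+γ) ∂ν) ^ (1/(1+γ)) *
        (∫⁻ x, ((f x : ENNReal) ^ γ) ^ ((1+γ)/γ) ∂ν) ^ (1/((1+γ)/γ)) := hH
    _ = A ^ (1/(1+γ)) * C ^ (1/((1+γ)/γ)) := by
        congr 2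
        apply lintegral_congr
        intro x
        rw [← ENNReal.rpow_mul]
        congr 1
        field_simp
  have hBtop : B ≠ ⊤ :=
    ne_top_of_le_ne_top (ENNReal.mul_ne_top
      (ENNReal.rpow_ne_top_of_nonneg (by positivity) hgtop)
      (ENNReal.rpow_ne_top_of_nonneg (by positivity) hftop)) hBholder
  constructor
  · -- forward direction
    intro h
    by_cases hB0 : B = 0
    · exfalso
      rw [hB0, ENNReal.toReal_zero] at h
      have h1 : φ 0 < φ A.toReal := hφ Set.self_mem_Ici (Set.mem_Ici.2 ha.le) ha
      have h2 : φ 0 < φ C.toReal := hφ Set.self_mem_Ici (Set.mem_Ici.2 hc.le) hc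
      have hγi : (0:ℝ) < 1/γ := by positivity
      have hco : (1+γ)/γ = 1/γ + 1 := by field_simp
      rw [hco] at h
      have e1 : (1/γ + 1) * φ 0 = (1/γ) * φ 0 + φ 0 := by ring
      have e2 : (1/γ) * φ 0 < (1/γ) * φ A.toReal := by
        exact mul_lt_mul_of_pos_left h1 hγi
      linarith
    · have hb : 0 < B.toReal := ENNReal.toReal_pos hB0 hBtop
      have hreal : B.toReal ≤ A.toReal ^ (1/(1+γ)) * C.toReal ^ (1/((1+γ)/γ)) := by
        have := ENNReal.toReal_mono (ENNReal.mul_ne_top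
          (ENNReal.rpow_ne_top_of_nonneg (by positivity) hgtop)
          (ENNReal.rpow_ne_top_of_nonneg (by positivity) hftop)) hBholder
        rwa [ENNReal.toReal_mul, ← ENNReal.toReal_rpow, ← ENNReal.toReal_rpow] at this
      set la := Real.log A.toReal with hla
      set lc := Real.log C.toReal with hlc
      have hw1 : (0:ℝ) < 1/(1+γ) := by positivity
      have hw2 : (0:ℝ) < 1/((1+γ)/γ) := by positivity
      have hwsum : 1/(1+γ) + 1/((1+γ)/γ) = 1 := by
        rw [one_div, one_div]; exact hpq.inv_add_inv_eq_one
      have hlog : Real.log B.toReal ≤ 1/(1+γ) * la + 1/((1+γ)/γ) * lc := by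
        have h1 : Real.log (A.toReal ^ (1/(1+γ)) * C.toReal ^ (1/((1+γ)/γ)))
            = 1/(1+γ) * la + 1/((1+γ)/γ) * lc := by
          rw [Real.log_mul (ne_of_gt (Real.rpow_pos_of_pos ha _))
            (ne_of_gt (Real.rpow_pos_of_pos hc _)), Real.log_rpow ha, Real.log_rpow hc]
        rw [← h1]
        exact Real.log_le_log hb hreal
      have hmono : ∀ {x y : ℝ}, x ≤ y → φ (Real.exp x) ≤ φ (Real.exp y) := fun hxy =>
        hφ.monotoneOn (Set.mem_Ici.2 (Real.exp_nonneg _)) (Set.mem_Ici.2 (Real.exp_nonneg _))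
          (Real.exp_le_exp.2 hxy)
      have step1 : φ B.toReal ≤ φ (Real.exp (1/(1+γ) * la + 1/((1+γ)/γ) * lc)) := by
        have := hmono hlog
        rwa [Real.exp_log hb] at this
      have step2 : φ (Real.exp (1/(1+γ) * la + 1/((1+γ)/γ) * lc))
          ≤ 1/(1+γ) * φ A.toReal + 1/((1+γ)/γ) * φ C.toReal := by
        have := hψ.convexOn.2 (Set.mem_univ la) (Set.mem_univ lc) hw1.le hw2.le hwsum
        simp only [smul_eq_mul] at this
        rwa [hla, hlc, Real.exp_log ha, Real.exp_log hc] at this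
      have key : (1+γ) * φ B.toReal = φ A.toReal + γ * φ C.toReal := by
        field_simp at h
        linarith
      have heq : φ B.toReal = 1/(1+γ) * φ A.toReal + 1/((1+γ)/γ) * φ C.toReal := by
        rw [one_div_div]
        field_simp
        linarith
      have hac : A.toReal = C.toReal := by
        by_contra hnea
        have hlane : la ≠ lc := fun hh =>
          hnea (by rw [← Real.exp_log ha, ← Real.exp_log hc, ← hla, ← hlc, hh])
        have hst := hψ.2 (Set.mem_univ la) (Set.mem_univ lc) hlane hw1 hw2 hwsum
        simp only [smul_eq_mul] at hst
        rw [hla, hlc, Real.exp_log ha, Real.exp_log hc] at hst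
        rw [← hla, ← hlc] at hst
        linarith
      have hφba : φ B.toReal = φ A.toReal := by
        rw [hac] at heq ⊢
        rw [heq]
        field_simp
      have hba : B.toReal = A.toReal :=
        hφ.injOn (Set.mem_Ici.2 hb.le) (Set.mem_Ici.2 ha.le) hφba
      have hBA : B = A := (ENNReal.toReal_eq_toReal_iff' hBtop hgtop).mp hba
      have hCA : C = A := (ENNReal.toReal_eq_toReal_iff' hftop hgtop).mp hac.symm
      -- Young a.e. equality
      have hpy : ∀ x, (g x : ENNReal) * (f x : ENNReal) ^ γ ≤
          (g x : ENNReal) ^ (1+γ) / ENNReal.ofReal (1+γ)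
            + (f x : ENNReal) ^ (1+γ) / ENNReal.ofReal ((1+γ)/γ) := by
        intro x
        have hy := ENNReal.young_inequality (g x : ENNReal) ((f x : ENNReal) ^ γ) hpq
        rwa [← ENNReal.rpow_mul, (show γ * ((1+γ)/γ) = 1+γ by field_simp)] at hy
      have hmeas1 : Measurable fun x => (g x : ENNReal) * (f x : ENNReal) ^ γ :=
        hgme.mul (hfme.pow_const γ)
      have hmeas2 : Measurable fun x => (g x : ENNReal) ^ (1+γ) / ENNReal.ofReal (1+γ)
          + (f x : ENNReal) ^ (1+γ) / ENNReal.ofReal ((1+γ)/γ) :=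
        ((hgme.pow_const _).div_const _).add ((hfme.pow_const _).div_const _)
      have hsum1 : (ENNReal.ofReal (1+γ))⁻¹ + (ENNReal.ofReal ((1+γ)/γ))⁻¹ = 1 := by
        rw [← ENNReal.ofReal_inv_of_pos hp, ← ENNReal.ofReal_inv_of_pos hq,
          ← ENNReal.ofReal_add (by positivity) (by positivity)]
        rw [show (1+γ)⁻¹ + ((1+γ)/γ)⁻¹ = 1 by field_simp]
        exact ENNReal.ofReal_one
      have hint2 : (∫⁻ x, ((g x : ENNReal) ^ (1+γ) / ENNReal.ofReal (1+γ)
          + (f x : ENNReal) ^ (1+γ) / ENNReal.ofReal ((1+γ)/γ)) ∂ν) = B := by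
        rw [lintegral_add_left ((hgme.pow_const _).div_const _)]
        simp only [div_eq_mul_inv]
        rw [lintegral_mul_const _ (hgme.pow_const _), lintegral_mul_const _ (hfme.pow_const _)]
        rw [← hA, ← hC, hCA, hBA, ← mul_add, ← div_eq_mul_inv (1+γ) γ, hsum1, mul_one]
      have hsub : (fun x => ((g x : ENNReal) ^ (1+γ) / ENNReal.ofReal (1+γ)
          + (f x : ENNReal) ^ (1+γ) / ENNReal.ofReal ((1+γ)/γ))
            - (g x : ENNReal) * (f x : ENNReal) ^ γ) =ᵐ[ν] 0 := by
        rw [← lintegral_eq_zero_iff (show Measurable (fun x => (g x : ENNReal) ^ (1+γ) / ENNReal.ofReal (1+γ)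
          + (f x : ENNReal) ^ (1+γ) / ENNReal.ofReal ((1+γ)/γ) - (g x : ENNReal) * (f x : ENNReal) ^ γ)
          from hmeas2.sub hmeas1)]
        rw [lintegral_sub hmeas1 (hB ▸ hBtop) (Filter.Eventually.of_forall hpy)]
        rw [hint2, ← hB, tsub_self]
      filter_upwards [hsub] with x hx
      simp only [Pi.zero_apply] at hx
      have hxeq : (g x : ENNReal) * (f x : ENNReal) ^ γ
          = (g x : ENNReal) ^ (1+γ) / ENNReal.ofReal (1+γ)
            + (f x : ENNReal) ^ (1+γ) / ENNReal.ofReal ((1+γ)/γ) :=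
        le_antisymm (hpy x) (tsub_eq_zero_iff_le.mp hx)
      have hr := congrArg ENNReal.toReal hxeq
      have hfin1 : (g x : ENNReal) ^ (1+γ) / ENNReal.ofReal (1+γ) ≠ ⊤ := by
        refine (ENNReal.div_lt_top (ENNReal.rpow_ne_top_of_nonneg hp.le ENNReal.coe_ne_top) ?_).ne
        simp [ENNReal.ofReal_eq_zero, not_le, hp]
      have hfin2 : (f x : ENNReal) ^ (1+γ) / ENNReal.ofReal ((1+γ)/γ) ≠ ⊤ := by
        refine (ENNReal.div_lt_top (ENNReal.rpow_ne_top_of_nonneg hp.le ENNReal.coe_ne_top) ?_).ne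
        simp [ENNReal.ofReal_eq_zero, not_le, hq]
      rw [ENNReal.toReal_mul, ENNReal.toReal_add hfin1 hfin2, ENNReal.toReal_div,
        ENNReal.toReal_div, ← ENNReal.toReal_rpow, ← ENNReal.toReal_rpow,
        ← ENNReal.toReal_rpow, ENNReal.coe_toReal, ENNReal.coe_toReal,
        ENNReal.toReal_ofReal hp.le, ENNReal.toReal_ofReal hq.le] at hr
      exact NNReal.coe_injective (young_eq hγ (g x).coe_nonneg (f x).coe_nonneg hr)
  · -- reverse direction
    intro h
    have hAC : A = C := lintegral_congr_ae (by filter_upwards [h] with x hx; simp [hx])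
    have hBC : B = C := by
      apply lintegral_congr_ae
      filter_upwards [h] with x hx
      simp only [hx]
      rcases eq_or_ne (f x : ENNReal) 0 with h0 | h0
      · rw [h0, zero_mul, ENNReal.zero_rpow_of_pos hp]
      · rw [ENNReal.rpow_add 1 γ h0 ENNReal.coe_ne_top, ENNReal.rpow_one]
    rw [hAC, hBC]
    field_simp
    ring
end

section
/- Let γ > 0 and let φ : [0,∞) → ℝ be strictly increasing on [0,∞) such that ψ(z) = φ(e^z) is convex on ℝ. If q, p ∈ F_γ are probability densities (⟨q⟩ = ⟨p⟩ = 1), then D_{φ,γ}(q,p) = 0 holds if and only if q = p ν-almost everywhere. -/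
open MeasureTheory

lemma young_aux {γ u v : ℝ} (hγ : 0 < γ) (hu : 0 ≤ u) (hv : 0 ≤ v) :
    (1 + γ) * (u * v ^ γ) ≤ u ^ (1 + γ) + γ * v ^ (1 + γ) ∧
    ((1 + γ) * (u * v ^ γ) = u ^ (1 + γ) + γ * v ^ (1 + γ) → u = v) := by
  rcases eq_or_lt_of_le hv with hv0 | hv'
  · subst hv0
    rw [Real.zero_rpow hγ.ne', Real.zero_rpow (by positivity : (1:ℝ) + γ ≠ 0)]
    constructor
    · have : 0 ≤ u ^ (1 + γ) := Real.rpow_nonneg hu _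
      nlinarith
    · intro heq
      have : u ^ (1 + γ) = 0 := by linarith
      exact (Real.rpow_eq_zero hu (by positivity)).mp this
  · set t := u / v with ht_def
    have ht : 0 ≤ t := div_nonneg hu hv'.le
    have hV : 0 < v ^ (1 + γ) := Real.rpow_pos_of_pos hv' _
    have huv : u = t * v := by rw [ht_def, div_mul_cancel₀ _ hv'.ne']
    have h1 : u * v ^ γ = t * v ^ (1 + γ) := by
      rw [huv, Real.rpow_add hv', Real.rpow_one]; ring
    have h2 : u ^ (1 + γ) = t ^ (1 + γ) * v ^ (1 + γ) := by
      rw [huv, Real.mul_rpow ht hv'.le]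
    have hber : 1 + (1 + γ) * (t - 1) ≤ t ^ (1 + γ) := by
      have h := one_add_mul_self_le_rpow_one_add
        (show (-1:ℝ) ≤ t - 1 by linarith) (show (1:ℝ) ≤ 1 + γ by linarith)
      have e : (1:ℝ) + (t - 1) = t := by ring
      rwa [e] at h
    constructor
    · have key := mul_le_mul_of_nonneg_right hber hV.le
      nlinarith [key, h1, h2]
    · intro heq
      by_contra hne
      have htne : t ≠ 1 := by
        intro h; apply hne; rw [huv, h, one_mul]
      have hber' : 1 + (1 + γ) * (t - 1) < t ^ (1 + γ) := by
        have h := one_add_mul_self_lt_rpow_one_add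
          (show (-1:ℝ) ≤ t - 1 by linarith) (by intro h; apply htne; linarith)
          (show (1:ℝ) < 1 + γ by linarith)
        have e : (1:ℝ) + (t - 1) = t := by ring
        rwa [e] at h
      have key := mul_lt_mul_of_pos_right hber' hV
      nlinarith [key, h1, h2]

lemma ae_eq_of_le_lintegral_eq {X : Type*} [MeasurableSpace X] {ν : Measure X}
    {f g : X → ENNReal} (hf : Measurable f) (hg : Measurable g)
    (hle : ∀ x, f x ≤ g x) (hint : ∫⁻ x, f x ∂ν = ∫⁻ x, g x ∂ν)
    (hfin : ∫⁻ x, g x ∂ν ≠ ⊤) : f =ᵐ[ν] g := by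
  have hsub : ∫⁻ x, g x - f x ∂ν = ∫⁻ x, g x ∂ν - ∫⁻ x, f x ∂ν :=
    lintegral_sub hf (hint ▸ hfin) (Filter.Eventually.of_forall hle)
  rw [hint, tsub_self] at hsub
  have h0 : (fun x => g x - f x) =ᵐ[ν] 0 := (lintegral_eq_zero_iff (hg.sub hf)).mp hsub
  filter_upwards [h0] with x hx
  exact le_antisymm (hle x) (tsub_eq_zero_iff_le.mp hx)

theorem fdpd_eq_zero_iff_of_prob {X : Type*} [MeasurableSpace X] (ν : Measure X)
    (γ : ℝ) (hγ : 0 < γ)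
    (φ : ℝ → ℝ) (hφ : StrictMonoOn φ (Set.Ici (0 : ℝ)))
    (hψ : ConvexOn ℝ Set.univ (fun z : ℝ => φ (Real.exp z)))
    (q p : X → NNReal) (hq : MemF ν γ q) (hp : MemF ν γ p)
    (hq1 : ∫⁻ x, (q x : ENNReal) ∂ν = 1) (hp1 : ∫⁻ x, (p x : ENNReal) ∂ν = 1) :
    FDPD ν φ γ q p = 0 ↔ q =ᵐ[ν] p := by
  have h1γ : (0:ℝ) < 1 + γ := by linarith
  have mq : Measurable fun x => (q x : ENNReal) := hq.1.coe_nnreal_ennreal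
  have mp' : Measurable fun x => (p x : ENNReal) := hp.1.coe_nnreal_ennreal
  set A := ∫⁻ x, (q x : ENNReal) ^ (1 + γ) ∂ν with hA_def
  set B := ∫⁻ x, (p x : ENNReal) ^ (1 + γ) ∂ν with hB_def
  set M := ∫⁻ x, (q x : ENNReal) * (p x : ENNReal) ^ γ ∂ν with hM_def
  -- rpow pointwise identity
  have hrpow_split : ∀ (y : NNReal), ((y : ENNReal)) ^ (1 + γ) = (y : ENNReal) * (y : ENNReal) ^ γ := by
    intro y
    rw [ENNReal.rpow_add_of_nonneg 1 γ zero_le_one hγ.le, ENNReal.rpow_one]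
  constructor
  · intro hFD
    -- measurability
    have mQp : Measurable fun x => (q x : ENNReal) ^ (1 + γ) := mq.pow_const _
    have mPp : Measurable fun x => (p x : ENNReal) ^ (1 + γ) := mp'.pow_const _
    have mPg : Measurable fun x => (p x : ENNReal) ^ γ := mp'.pow_const _
    -- positivity and finiteness of A, B
    have hA0 : A ≠ 0 := by
      rw [hA_def, Ne, lintegral_eq_zero_iff mQp]
      intro h
      apply hq.2.1
      filter_upwards [h] with x hx
      simp only [Pi.zero_apply] at hx ⊢
      rcases ENNReal.rpow_eq_zero_iff.mp hx with ⟨h0, _⟩ | ⟨htop, _⟩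
      · exact_mod_cast h0
      · exact absurd htop ENNReal.coe_ne_top
    have hB0 : B ≠ 0 := by
      rw [hB_def, Ne, lintegral_eq_zero_iff mPp]
      intro h
      apply hp.2.1
      filter_upwards [h] with x hx
      simp only [Pi.zero_apply] at hx ⊢
      rcases ENNReal.rpow_eq_zero_iff.mp hx with ⟨h0, _⟩ | ⟨htop, _⟩
      · exact_mod_cast h0
      · exact absurd htop ENNReal.coe_ne_top
    have hAt : A ≠ ⊤ := hq.2.2
    have hBt : B ≠ ⊤ := hp.2.2
    -- rpow cancel helper
    have hcancel : ∀ (x : ENNReal), x ≠ 0 → x ≠ ⊤ → ∀ y : ℝ, x ^ y * x ^ (-y) = 1 := by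
      intro x h0 ht y
      rw [← ENNReal.rpow_add _ _ h0 ht, add_neg_cancel, ENNReal.rpow_zero]
    have hrpow_ne_top : ∀ (x : ENNReal), x ≠ 0 → x ≠ ⊤ → ∀ y : ℝ, x ^ y ≠ ⊤ := by
      intro x h0 ht y
      simp [ENNReal.rpow_eq_top_iff, h0, ht]
    have hrpow_ne_zero : ∀ (x : ENNReal), x ≠ 0 → x ≠ ⊤ → ∀ y : ℝ, x ^ y ≠ 0 := by
      intro x h0 ht y
      simp [ENNReal.rpow_eq_zero_iff, h0, ht]
    -- Hölder's inequality
    have hconj : Real.HolderConjugate (1 + γ) ((1 + γ) / γ) := by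
      rw [Real.holderConjugate_iff]; constructor
      · linarith
      · field_simp
    have hholder : M ≤ A ^ (1 / (1 + γ)) * B ^ (γ / (1 + γ)) := by
      have h := ENNReal.lintegral_mul_le_Lp_mul_Lq ν hconj mq.aemeasurable mPg.aemeasurable
      simp only [Pi.mul_apply] at h
      have e1 : ∫⁻ a, ((p a : ENNReal) ^ γ) ^ ((1 + γ) / γ) ∂ν = B := by
        rw [hB_def]
        refine lintegral_congr fun x => ?_
        rw [← ENNReal.rpow_mul]
        congr 1
        field_simp
      have e2 : 1 / ((1 + γ) / γ) = γ / (1 + γ) := by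
        field_simp
      rw [e1, e2] at h
      exact h
    set C := A ^ (1 / (1 + γ)) * B ^ (γ / (1 + γ)) with hC_def
    have hCt : C ≠ ⊤ := ENNReal.mul_ne_top (hrpow_ne_top A hA0 hAt _) (hrpow_ne_top B hB0 hBt _)
    have hMt : M ≠ ⊤ := ne_top_of_le_ne_top hCt hholder
    have ha : 0 < A.toReal := ENNReal.toReal_pos hA0 hAt
    have hb : 0 < B.toReal := ENNReal.toReal_pos hB0 hBt
    have hCr : C.toReal = A.toReal ^ (1 / (1 + γ)) * B.toReal ^ (γ / (1 + γ)) := by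
      rw [hC_def, ENNReal.toReal_mul, ← ENNReal.toReal_rpow, ← ENNReal.toReal_rpow]
    have hm_le : M.toReal ≤ C.toReal := ENNReal.toReal_mono hCt hholder
    -- convexity of ψ
    have hw1 : (0:ℝ) < 1 / (1 + γ) := by positivity
    have hw2 : (0:ℝ) < γ / (1 + γ) := by positivity
    have hsum : 1 / (1 + γ) + γ / (1 + γ) = 1 := by field_simp
    have hconv := hψ.2 (Set.mem_univ (Real.log A.toReal)) (Set.mem_univ (Real.log B.toReal))
      hw1.le hw2.le hsum
    simp only [smul_eq_mul] at hconv
    rw [Real.exp_log ha, Real.exp_log hb] at hconv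
    have hexp_eq : Real.exp (1 / (1 + γ) * Real.log A.toReal + γ / (1 + γ) * Real.log B.toReal)
        = A.toReal ^ (1 / (1 + γ)) * B.toReal ^ (γ / (1 + γ)) := by
      rw [Real.exp_add, Real.rpow_def_of_pos ha, Real.rpow_def_of_pos hb,
        mul_comm (Real.log A.toReal), mul_comm (Real.log B.toReal)]
    rw [hexp_eq, ← hCr] at hconv
    -- extract φ M.toReal from FDPD = 0
    rw [FDPD, ← hA_def, ← hB_def, ← hM_def] at hFD
    have hφm_eq : φ M.toReal = 1 / (1 + γ) * φ A.toReal + γ / (1 + γ) * φ B.toReal := by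
      field_simp at hFD ⊢
      linarith
    have hmono : φ M.toReal ≤ φ C.toReal := by
      rcases eq_or_lt_of_le hm_le with he | hlt
      · rw [he]
      · exact (hφ (Set.mem_Ici.mpr ENNReal.toReal_nonneg)
          (Set.mem_Ici.mpr ENNReal.toReal_nonneg) hlt).le
    have hφeq : φ M.toReal = φ C.toReal := le_antisymm hmono (by linarith)
    have hmC : M.toReal = C.toReal :=
      hφ.injOn (Set.mem_Ici.mpr ENNReal.toReal_nonneg)
        (Set.mem_Ici.mpr ENNReal.toReal_nonneg) hφeq
    have hMC : M = C := (ENNReal.toReal_eq_toReal_iff' hMt hCt).mp hmC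
    -- normalized functions
    set c1 : ENNReal := A ^ (-(1 / (1 + γ))) with hc1_def
    set c2 : ENNReal := B ^ (-(1 / (1 + γ))) with hc2_def
    have hc1t : c1 ≠ ⊤ := hrpow_ne_top A hA0 hAt _
    have hc2t : c2 ≠ ⊤ := hrpow_ne_top B hB0 hBt _
    have hc10 : c1 ≠ 0 := hrpow_ne_zero A hA0 hAt _
    have hc20 : c2 ≠ 0 := hrpow_ne_zero B hB0 hBt _
    set Qf : X → ENNReal := fun x => (q x : ENNReal) * c1 with hQf_def
    set Pf : X → ENNReal := fun x => (p x : ENNReal) * c2 with hPf_def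
    have mQf : Measurable Qf := mq.mul_const _
    have mPf : Measurable Pf := mp'.mul_const _
    have hQft : ∀ x, Qf x ≠ ⊤ := fun x => ENNReal.mul_ne_top ENNReal.coe_ne_top hc1t
    have hPft : ∀ x, Pf x ≠ ⊤ := fun x => ENNReal.mul_ne_top ENNReal.coe_ne_top hc2t
    -- integrals of the normalized functions
    have hintQ : ∫⁻ x, Qf x ^ (1 + γ) ∂ν = 1 := by
      have e : ∀ x, Qf x ^ (1 + γ) = (q x : ENNReal) ^ (1 + γ) * c1 ^ (1 + γ) := fun x =>
        ENNReal.mul_rpow_of_ne_top ENNReal.coe_ne_top hc1t _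
      rw [lintegral_congr e, lintegral_mul_const _ mQp, ← hA_def, hc1_def,
        ← ENNReal.rpow_mul]
      have e2 : -(1 / (1 + γ)) * (1 + γ) = -1 := by field_simp
      rw [e2]
      have := hcancel A hA0 hAt 1
      rwa [ENNReal.rpow_one] at this
    have hintP : ∫⁻ x, Pf x ^ (1 + γ) ∂ν = 1 := by
      have e : ∀ x, Pf x ^ (1 + γ) = (p x : ENNReal) ^ (1 + γ) * c2 ^ (1 + γ) := fun x =>
        ENNReal.mul_rpow_of_ne_top ENNReal.coe_ne_top hc2t _
      rw [lintegral_congr e, lintegral_mul_const _ mPp, ← hB_def, hc2_def,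
        ← ENNReal.rpow_mul]
      have e2 : -(1 / (1 + γ)) * (1 + γ) = -1 := by field_simp
      rw [e2]
      have := hcancel B hB0 hBt 1
      rwa [ENNReal.rpow_one] at this
    have hintM : ∫⁻ x, Qf x * Pf x ^ γ ∂ν = 1 := by
      have e : ∀ x, Qf x * Pf x ^ γ
          = ((q x : ENNReal) * (p x : ENNReal) ^ γ) * (c1 * c2 ^ γ) := by
        intro x
        rw [hQf_def, hPf_def]
        simp only []
        rw [ENNReal.mul_rpow_of_ne_top ENNReal.coe_ne_top hc2t]
        ring
      rw [lintegral_congr e, lintegral_mul_const (f := fun x => (q x : ENNReal) * (p x : ENNReal) ^ γ) _ (mq.mul mPg), ← hM_def, hMC, hC_def,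
        hc1_def, hc2_def, ← ENNReal.rpow_mul]
      have e2 : -(1 / (1 + γ)) * γ = -(γ / (1 + γ)) := by ring
      rw [e2]
      calc A ^ (1 / (1 + γ)) * B ^ (γ / (1 + γ))
            * (A ^ (-(1 / (1 + γ))) * B ^ (-(γ / (1 + γ))))
          = (A ^ (1 / (1 + γ)) * A ^ (-(1 / (1 + γ))))
            * (B ^ (γ / (1 + γ)) * B ^ (-(γ / (1 + γ)))) := by ring
        _ = 1 := by rw [hcancel A hA0 hAt, hcancel B hB0 hBt, one_mul]
    -- pointwise Young functions
    set F : X → ENNReal := fun x => ENNReal.ofReal (1 + γ) * (Qf x * Pf x ^ γ) with hF_def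
    set G : X → ENNReal := fun x => Qf x ^ (1 + γ) + ENNReal.ofReal γ * Pf x ^ (1 + γ)
      with hG_def
    have mF : Measurable F := (mQf.mul (mPf.pow_const _)).const_mul _
    have mG : Measurable G := (mQf.pow_const _).add ((mPf.pow_const _).const_mul _)
    have hFr : ∀ x, F x
        = ENNReal.ofReal ((1 + γ) * ((Qf x).toReal * (Pf x).toReal ^ γ)) := by
      intro x
      rw [hF_def]
      simp only []
      rw [ENNReal.ofReal_mul h1γ.le, ENNReal.ofReal_mul ENNReal.toReal_nonneg,
        ← ENNReal.ofReal_rpow_of_nonneg ENNReal.toReal_nonneg hγ.le,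
        ENNReal.ofReal_toReal (hQft x), ENNReal.ofReal_toReal (hPft x)]
    have hGr : ∀ x, G x
        = ENNReal.ofReal ((Qf x).toReal ^ (1 + γ) + γ * (Pf x).toReal ^ (1 + γ)) := by
      intro x
      rw [hG_def]
      simp only []
      rw [ENNReal.ofReal_add (Real.rpow_nonneg ENNReal.toReal_nonneg _)
          (by positivity), ENNReal.ofReal_mul hγ.le,
        ← ENNReal.ofReal_rpow_of_nonneg ENNReal.toReal_nonneg h1γ.le,
        ← ENNReal.ofReal_rpow_of_nonneg ENNReal.toReal_nonneg h1γ.le,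
        ENNReal.ofReal_toReal (hQft x), ENNReal.ofReal_toReal (hPft x)]
    have hle : ∀ x, F x ≤ G x := by
      intro x
      rw [hFr, hGr]
      exact ENNReal.ofReal_le_ofReal
        (young_aux hγ ENNReal.toReal_nonneg ENNReal.toReal_nonneg).1
    have hintF : ∫⁻ x, F x ∂ν = ENNReal.ofReal (1 + γ) := by
      rw [hF_def]
      simp only []
      rw [lintegral_const_mul (f := fun x => Qf x * Pf x ^ γ) _ (mQf.mul (mPf.pow_const _)), hintM, mul_one]
    have hintG : ∫⁻ x, G x ∂ν = 1 + ENNReal.ofReal γ := by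
      rw [hG_def]
      simp only []
      rw [lintegral_add_left (mQf.pow_const _), hintQ,
        lintegral_const_mul _ (mPf.pow_const _), hintP, mul_one]
    have hFG : ∫⁻ x, F x ∂ν = ∫⁻ x, G x ∂ν := by
      rw [hintF, hintG, ENNReal.ofReal_add zero_le_one hγ.le, ENNReal.ofReal_one]
    have hGfin : ∫⁻ x, G x ∂ν ≠ ⊤ := by
      rw [hintG]
      exact ENNReal.add_ne_top.mpr ⟨ENNReal.one_ne_top, ENNReal.ofReal_ne_top⟩
    have hae : F =ᵐ[ν] G := ae_eq_of_le_lintegral_eq mF mG hle hFG hGfin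
    have hQP : Qf =ᵐ[ν] Pf := by
      filter_upwards [hae] with x hx
      rw [hFr, hGr] at hx
      have hx' := (ENNReal.ofReal_eq_ofReal_iff
        (by positivity) (by positivity)).mp hx
      have huv := (young_aux hγ ENNReal.toReal_nonneg ENNReal.toReal_nonneg).2 hx'
      exact (ENNReal.toReal_eq_toReal_iff' (hQft x) (hPft x)).mp huv
    -- conclude c1 = c2 and q = p a.e.
    have hic1 : ∫⁻ x, Qf x ∂ν = c1 := by
      rw [hQf_def]
      simp only []
      rw [lintegral_mul_const _ mq, hq1, one_mul]
    have hic2 : ∫⁻ x, Pf x ∂ν = c2 := by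
      rw [hPf_def]
      simp only []
      rw [lintegral_mul_const _ mp', hp1, one_mul]
    have hc12 : c1 = c2 := by rw [← hic1, lintegral_congr_ae hQP, hic2]
    filter_upwards [hQP] with x hx
    have h1 : (q x : ENNReal) * c1 = (p x : ENNReal) * c1 := by
      have hx' : (q x : ENNReal) * c1 = (p x : ENNReal) * c2 := hx
      rwa [← hc12] at hx' 
    have h2 : (q x : ENNReal) = (p x : ENNReal) := by
      calc (q x : ENNReal) = (q x : ENNReal) * (c1 * c1⁻¹) := by
            rw [ENNReal.mul_inv_cancel hc10 hc1t, mul_one]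
        _ = ((q x : ENNReal) * c1) * c1⁻¹ := by rw [mul_assoc]
        _ = ((p x : ENNReal) * c1) * c1⁻¹ := by rw [h1]
        _ = (p x : ENNReal) * (c1 * c1⁻¹) := by rw [mul_assoc]
        _ = (p x : ENNReal) := by rw [ENNReal.mul_inv_cancel hc10 hc1t, mul_one]
    exact_mod_cast h2

    
  · intro hqp
    have e1 : A = B := lintegral_congr_ae (hqp.mono fun x hx => by simp only []; rw [hx])
    have e2 : M = B := lintegral_congr_ae (hqp.mono fun x hx => by
      simp only []; rw [hx, ← hrpow_split])
    rw [FDPD] at *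
    rw [← hA_def, ← hB_def, ← hM_def, e1, e2]
    field_simp
    ring
end

section
/- Let γ > 0 and let φ : [0,∞) → ℝ be strictly increasing on [0,∞) such that ψ(z) = φ(e^z) is convex on ℝ. If g, f ∈ F_γ satisfy D_{φ,γ}(g,f) = 0, then there exists a constant c > 0 such that g^{1+γ} = c · f^{1+γ} ν-almost everywhere. In particular, the supports of g and f coincide up to a ν-null set. -/
open MeasureTheory
open scoped ENNReal NNReal

private lemma real_young_eq {p q x y : ℝ} (hpq : Real.HolderConjugate p q) (hx : 0 ≤ x) (hy : 0 ≤ y)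
    (h : x * y = x ^ p / p + y ^ q / q) : x ^ p = y ^ q := by
  rcases hx.eq_or_lt with hx0 | hx0
  · rw [← hx0] at h ⊢
    rw [Real.zero_rpow hpq.ne_zero] at h ⊢
    have : y ^ q = 0 := by
      have hq := hpq.symm.pos
      field_simp at h
      simp only [mul_zero, zero_mul, zero_div, zero_add, add_zero] at h
      linarith [h]
    simp [this]
  rcases hy.eq_or_lt with hy0 | hy0
  · rw [← hy0] at h ⊢
    rw [Real.zero_rpow hpq.symm.ne_zero] at h ⊢
    have hp := hpq.pos
    have : x ^ p = 0 := by field_simp at h; simp only [mul_zero, zero_mul, zero_div, zero_add, add_zero] at h; linarith [h]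
    simp [this]
  by_contra hne
  have hsne : p * Real.log x ≠ q * Real.log y := by
    intro he
    apply hne
    rw [Real.rpow_def_of_pos hx0, Real.rpow_def_of_pos hy0, mul_comm, he, mul_comm]
  have hkey := strictConvexOn_exp.2 (Set.mem_univ (p * Real.log x))
    (Set.mem_univ (q * Real.log y)) hsne hpq.inv_pos hpq.symm.inv_pos hpq.inv_add_inv_eq_one
  simp only [smul_eq_mul] at hkey
  rw [inv_mul_cancel_left₀ hpq.ne_zero, inv_mul_cancel_left₀ hpq.symm.ne_zero,
    Real.exp_add, Real.exp_log hx0, Real.exp_log hy0] at hkey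
  rw [Real.rpow_def_of_pos hx0, Real.rpow_def_of_pos hy0, mul_comm (Real.log x),
    mul_comm (Real.log y)] at hne h
  rw [h] at hkey
  rw [div_eq_inv_mul, div_eq_inv_mul] at hkey
  exact lt_irrefl _ hkey

private lemma ennreal_young_eq {p q : ℝ} (hpq : Real.HolderConjugate p q) {a b : ℝ≥0∞}
    (ha : a ≠ ⊤) (hb : b ≠ ⊤)
    (h : a * b = a ^ p / ENNReal.ofReal p + b ^ q / ENNReal.ofReal q) : a ^ p = b ^ q := by
  have hap : a ^ p ≠ ⊤ := ENNReal.rpow_ne_top_of_nonneg hpq.nonneg ha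
  have hbq : b ^ q ≠ ⊤ := ENNReal.rpow_ne_top_of_nonneg hpq.symm.nonneg hb
  have hdp : a ^ p / ENNReal.ofReal p ≠ ⊤ := by
    exact (ENNReal.div_lt_top hap (by simp [hpq.pos])).ne
  have hdq : b ^ q / ENNReal.ofReal q ≠ ⊤ := by
    exact (ENNReal.div_lt_top hbq (by simp [hpq.symm.pos])).ne
  have hreal : a.toReal * b.toReal = a.toReal ^ p / p + b.toReal ^ q / q := by
    have := congrArg ENNReal.toReal h
    rw [ENNReal.toReal_mul, ENNReal.toReal_add hdp hdq, ENNReal.toReal_div,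
      ENNReal.toReal_div, ENNReal.toReal_ofReal hpq.nonneg,
      ENNReal.toReal_ofReal hpq.symm.nonneg, ← ENNReal.toReal_rpow, ← ENNReal.toReal_rpow] at this
    exact this
  have := real_young_eq hpq ENNReal.toReal_nonneg ENNReal.toReal_nonneg hreal
  rw [ENNReal.toReal_rpow, ENNReal.toReal_rpow] at this
  exact (ENNReal.toReal_eq_toReal_iff' hap hbq).mp this

private lemma holder_eq {X : Type*} [MeasurableSpace X] (ν : Measure X) {p q : ℝ}
    (hpq : Real.HolderConjugate p q) {u v : X → ℝ≥0∞}
    (hu : Measurable u) (hv : Measurable v)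
    (hut : ∀ x, u x ≠ ⊤) (hvt : ∀ x, v x ≠ ⊤)
    (hup : ∫⁻ x, u x ^ p ∂ν = 1) (hvq : ∫⁻ x, v x ^ q ∂ν = 1)
    (huv : ∫⁻ x, u x * v x ∂ν = 1) :
    (fun x => u x ^ p) =ᵐ[ν] fun x => v x ^ q := by
  have hup_m : Measurable fun x => u x ^ p := hu.pow_const p
  have hvq_m : Measurable fun x => v x ^ q := hv.pow_const q
  have hint : ∫⁻ x, (u x ^ p / ENNReal.ofReal p + v x ^ q / ENNReal.ofReal q) ∂ν = 1 := by
    simp only [div_eq_mul_inv]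
    rw [lintegral_add_left (hup_m.mul_const _), lintegral_mul_const _ hup_m,
      lintegral_mul_const _ hvq_m, hup, hvq, one_mul, one_mul,
      hpq.inv_add_inv_ennreal]
  have hae : (fun x => u x * v x) =ᵐ[ν]
      fun x => u x ^ p / ENNReal.ofReal p + v x ^ q / ENNReal.ofReal q := by
    refine ae_eq_of_ae_le_of_lintegral_le (Filter.Eventually.of_forall fun x =>
      ENNReal.young_inequality (u x) (v x) hpq) (by rw [huv]; exact ENNReal.one_ne_top)
      ((hup_m.div_const _).add (hvq_m.div_const _)).aemeasurable (by rw [hint, huv])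
  filter_upwards [hae] with x hx
  exact ennreal_young_eq hpq (hut x) (hvt x) hx

open scoped symmDiff in
theorem fdpd_eq_zero_imp_proportional {X : Type*} [MeasurableSpace X] (ν : Measure X)
    (γ : ℝ) (hγ : 0 < γ)
    (φ : ℝ → ℝ) (hφ : StrictMonoOn φ (Set.Ici (0 : ℝ)))
    (hψ : ConvexOn ℝ Set.univ (fun z : ℝ => φ (Real.exp z)))
    (g f : X → NNReal) (hg : MemF ν γ g) (hf : MemF ν γ f)
    (hzero : FDPD ν φ γ g f = 0) :
    (∃ c : NNReal, 0 < c ∧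
      (fun x => (g x : ENNReal) ^ (1 + γ)) =ᵐ[ν]
        (fun x => (c : ENNReal) * (f x : ENNReal) ^ (1 + γ))) ∧
    ν (Function.support g ∆ Function.support f) = 0 := by
  obtain ⟨hgm, hgne, hgtop⟩ := hg
  obtain ⟨hfm, hfne, hftop⟩ := hf
  set p : ℝ := 1 + γ with hp
  set q : ℝ := p / γ with hq
  have hγ0 : γ ≠ 0 := hγ.ne'
  have hpq : Real.HolderConjugate p q := by
    rw [Real.holderConjugate_iff]
    constructor
    · rw [hp]; linarith
    · rw [hq, hp]; field_simp
  have hγq : γ * q = p := by rw [hq]; field_simp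
  have mg : Measurable fun x => (g x : ℝ≥0∞) := hgm.coe_nnreal_ennreal
  have mf : Measurable fun x => (f x : ℝ≥0∞) := hfm.coe_nnreal_ennreal
  have hfγm : Measurable fun x => (f x : ℝ≥0∞) ^ γ := mf.pow_const γ
  set A := ∫⁻ x, (g x : ℝ≥0∞) ^ p ∂ν with hA
  set B := ∫⁻ x, (g x : ℝ≥0∞) * (f x : ℝ≥0∞) ^ γ ∂ν with hB
  set C := ∫⁻ x, (f x : ℝ≥0∞) ^ p ∂ν with hC
  have hp0 : (0:ℝ) < p := hpq.pos
  -- nonvanishing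
  have hA0 : A ≠ 0 := by
    intro h0
    rw [hA, lintegral_eq_zero_iff (mg.pow_const p)] at h0
    apply hgne
    filter_upwards [h0] with x hx
    simp only [Pi.zero_apply] at hx ⊢
    rcases ENNReal.rpow_eq_zero_iff.mp hx with ⟨h1, _⟩ | ⟨h1, _⟩
    · exact_mod_cast h1
    · exact absurd h1 ENNReal.coe_ne_top
  have hC0 : C ≠ 0 := by
    intro h0
    rw [hC, lintegral_eq_zero_iff (mf.pow_const p)] at h0
    apply hfne
    filter_upwards [h0] with x hx
    simp only [Pi.zero_apply] at hx ⊢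
    rcases ENNReal.rpow_eq_zero_iff.mp hx with ⟨h1, _⟩ | ⟨h1, _⟩
    · exact_mod_cast h1
    · exact absurd h1 ENNReal.coe_ne_top
  -- Hölder
  have hH : B ≤ A ^ (1/p) * C ^ (1/q) := by
    have h := ENNReal.lintegral_mul_le_Lp_mul_Lq ν hpq mg.aemeasurable hfγm.aemeasurable
    simp only [Pi.mul_apply] at h
    have hrw : ∫⁻ x, ((f x : ℝ≥0∞) ^ γ) ^ q ∂ν = C := by
      rw [hC]; congr 1; funext x; rw [← ENNReal.rpow_mul, hγq]
    rwa [hrw] at h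
  have hRT : A ^ (1/p) * C ^ (1/q) ≠ ⊤ :=
    ENNReal.mul_ne_top (ENNReal.rpow_ne_top_of_nonneg hpq.one_div_nonneg hgtop)
      (ENNReal.rpow_ne_top_of_nonneg hpq.symm.one_div_nonneg hftop)
  have hBtop : B ≠ ⊤ := ne_top_of_le_ne_top hRT hH
  -- real versions
  have haR : 0 < A.toReal := ENNReal.toReal_pos hA0 hgtop
  have hcR : 0 < C.toReal := ENNReal.toReal_pos hC0 hftop
  -- from FDPD = 0
  have hφb : φ B.toReal = p⁻¹ * φ A.toReal + q⁻¹ * φ C.toReal := by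
    rw [FDPD] at hzero
    rw [← hA, ← hB, ← hC, ← hp] at hzero
    have h1 : φ A.toReal - p * φ B.toReal + γ * φ C.toReal = 0 := by
      have := congrArg (γ * ·) hzero
      rw [hp] at this ⊢
      field_simp at this
      linarith
    have hq' : q⁻¹ = γ / p := by rw [hq]; field_simp
    rw [hq']
    field_simp
    linarith
  -- convexity
  have hconv : φ (A.toReal ^ (1/p) * C.toReal ^ (1/q)) ≤ φ B.toReal := by
    have h := hψ.2 (Set.mem_univ (Real.log A.toReal)) (Set.mem_univ (Real.log C.toReal))
      hpq.inv_nonneg hpq.symm.inv_nonneg hpq.inv_add_inv_eq_one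
    simp only [smul_eq_mul] at h
    rw [Real.exp_log haR, Real.exp_log hcR] at h
    have hexp : Real.exp (p⁻¹ * Real.log A.toReal + q⁻¹ * Real.log C.toReal)
        = A.toReal ^ (1/p) * C.toReal ^ (1/q) := by
      rw [Real.rpow_def_of_pos haR, Real.rpow_def_of_pos hcR, ← Real.exp_add]
      congr 1; ring
    rw [hexp] at h
    rw [hφb]
    exact h
  have hble : B.toReal ≤ A.toReal ^ (1/p) * C.toReal ^ (1/q) := by
    have h := ENNReal.toReal_mono hRT hH
    rwa [ENNReal.toReal_mul, ← ENNReal.toReal_rpow, ← ENNReal.toReal_rpow] at h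
  have hbeq : B.toReal = A.toReal ^ (1/p) * C.toReal ^ (1/q) := by
    rcases hble.eq_or_lt with h | h
    · exact h
    exfalso
    have hmem1 : B.toReal ∈ Set.Ici (0:ℝ) := ENNReal.toReal_nonneg
    have hmem2 : A.toReal ^ (1/p) * C.toReal ^ (1/q) ∈ Set.Ici (0:ℝ) := Set.mem_Ici.mpr (by positivity)
    exact absurd (hφ hmem1 hmem2 h) (not_lt.mpr hconv)
  have hBeq : B = A ^ (1/p) * C ^ (1/q) := by
    apply (ENNReal.toReal_eq_toReal_iff' hBtop hRT).mp
    rw [ENNReal.toReal_mul, ← ENNReal.toReal_rpow, ← ENNReal.toReal_rpow, hbeq]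
  -- equality case of Hölder
  set kA := A ^ (1/p) with hkA
  set kC := C ^ (1/q) with hkC
  have hkA0 : kA ≠ 0 := (ENNReal.rpow_pos (pos_iff_ne_zero.mpr hA0) hgtop).ne'
  have hkC0 : kC ≠ 0 := (ENNReal.rpow_pos (pos_iff_ne_zero.mpr hC0) hftop).ne'
  have hkAtop : kA ≠ ⊤ := ENNReal.rpow_ne_top_of_nonneg hpq.one_div_nonneg hgtop
  have hkCtop : kC ≠ ⊤ := ENNReal.rpow_ne_top_of_nonneg hpq.symm.one_div_nonneg hftop
  have hkAp : (kA⁻¹) ^ p = A⁻¹ := by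
    rw [hkA, ← ENNReal.inv_rpow, ← ENNReal.rpow_mul, one_div, inv_mul_cancel₀ hpq.ne_zero,
      ENNReal.rpow_one]
  have hkCq : (kC⁻¹) ^ q = C⁻¹ := by
    rw [hkC, ← ENNReal.inv_rpow, ← ENNReal.rpow_mul, one_div, inv_mul_cancel₀ hpq.symm.ne_zero,
      ENNReal.rpow_one]
  have hut : ∀ x, (g x : ℝ≥0∞) * kA⁻¹ ≠ ⊤ := fun x =>
    ENNReal.mul_ne_top ENNReal.coe_ne_top (ENNReal.inv_ne_top.mpr hkA0)
  have hvt : ∀ x, (f x : ℝ≥0∞) ^ γ * kC⁻¹ ≠ ⊤ := fun x =>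
    ENNReal.mul_ne_top (ENNReal.rpow_ne_top_of_nonneg hγ.le ENNReal.coe_ne_top)
      (ENNReal.inv_ne_top.mpr hkC0)
  have hup : ∫⁻ x, ((g x : ℝ≥0∞) * kA⁻¹) ^ p ∂ν = 1 := by
    have hpt : ∀ x, ((g x : ℝ≥0∞) * kA⁻¹) ^ p = (g x : ℝ≥0∞) ^ p * (kA⁻¹) ^ p := fun x =>
      ENNReal.mul_rpow_of_nonneg _ _ hpq.nonneg
    simp only [hpt]
    rw [lintegral_mul_const _ (mg.pow_const p), ← hA, hkAp, ENNReal.mul_inv_cancel hA0 hgtop]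
  have hvq : ∫⁻ x, ((f x : ℝ≥0∞) ^ γ * kC⁻¹) ^ q ∂ν = 1 := by
    have hpt : ∀ x, ((f x : ℝ≥0∞) ^ γ * kC⁻¹) ^ q = (f x : ℝ≥0∞) ^ p * (kC⁻¹) ^ q := fun x => by
      rw [ENNReal.mul_rpow_of_nonneg _ _ hpq.symm.nonneg, ← ENNReal.rpow_mul, hγq]
    simp only [hpt]
    rw [lintegral_mul_const _ (mf.pow_const p), ← hC, hkCq, ENNReal.mul_inv_cancel hC0 hftop]
  have huv : ∫⁻ x, ((g x : ℝ≥0∞) * kA⁻¹) * ((f x : ℝ≥0∞) ^ γ * kC⁻¹) ∂ν = 1 := by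
    have hpt : ∀ x, ((g x : ℝ≥0∞) * kA⁻¹) * ((f x : ℝ≥0∞) ^ γ * kC⁻¹)
        = ((g x : ℝ≥0∞) * (f x : ℝ≥0∞) ^ γ) * (kA⁻¹ * kC⁻¹) := fun x => by ring
    simp only [hpt]
    rw [lintegral_mul_const (f := fun x => (g x : ℝ≥0∞) * (f x : ℝ≥0∞) ^ γ) _ (mg.mul hfγm), ← hB, hBeq, mul_mul_mul_comm,
      ENNReal.mul_inv_cancel hkA0 hkAtop, ENNReal.mul_inv_cancel hkC0 hkCtop, one_mul]
  have happ := holder_eq ν hpq (mg.mul_const _) (hfγm.mul_const _) hut hvt hup hvq huv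
  -- the constant
  have hCinv0 : C⁻¹ ≠ 0 := ENNReal.inv_ne_zero.mpr hftop
  have hCinvtop : C⁻¹ ≠ ⊤ := ENNReal.inv_ne_top.mpr hC0
  have hcE0 : A * C⁻¹ ≠ 0 := mul_ne_zero hA0 hCinv0
  have hcEtop : A * C⁻¹ ≠ ⊤ := ENNReal.mul_ne_top hgtop hCinvtop
  set c : ℝ≥0 := (A * C⁻¹).toNNReal with hcdef
  have hc : (c : ℝ≥0∞) = A * C⁻¹ := ENNReal.coe_toNNReal hcEtop
  have hcpos : 0 < c := ENNReal.toNNReal_pos hcE0 hcEtop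
  have hmain : (fun x => (g x : ℝ≥0∞) ^ p) =ᵐ[ν]
      fun x => (c : ℝ≥0∞) * (f x : ℝ≥0∞) ^ p := by
    filter_upwards [happ] with x hx
    rw [ENNReal.mul_rpow_of_nonneg _ _ hpq.nonneg, hkAp,
      ENNReal.mul_rpow_of_nonneg _ _ hpq.symm.nonneg, hkCq, ← ENNReal.rpow_mul, hγq] at hx
    rw [hc]
    calc (g x : ℝ≥0∞) ^ p = (g x : ℝ≥0∞) ^ p * (A⁻¹ * A) := by
          rw [ENNReal.inv_mul_cancel hA0 hgtop, mul_one]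
      _ = ((g x : ℝ≥0∞) ^ p * A⁻¹) * A := by ring
      _ = ((f x : ℝ≥0∞) ^ p * C⁻¹) * A := by rw [hx]
      _ = (A * C⁻¹) * (f x : ℝ≥0∞) ^ p := by ring
  refine ⟨⟨c, hcpos, hmain⟩, ?_⟩
  rw [measure_eq_zero_iff_ae_notMem]
  filter_upwards [hmain] with x hx
  intro hmem
  rw [Set.mem_symmDiff] at hmem
  have hc0' : (c : ℝ≥0∞) ≠ 0 := by exact_mod_cast hcpos.ne'
  rcases hmem with ⟨hgs, hfs⟩ | ⟨hfs, hgs⟩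
  · have hf0 : f x = 0 := Function.notMem_support.mp hfs
    rw [hf0] at hx
    simp only [ENNReal.coe_zero, ENNReal.zero_rpow_of_pos hp0, mul_zero] at hx
    rcases ENNReal.rpow_eq_zero_iff.mp hx with ⟨h1, _⟩ | ⟨h1, _⟩
    · exact hgs (Function.notMem_support.mp (by simpa using h1) ▸ rfl) -- fix below
    · exact absurd h1 ENNReal.coe_ne_top
  · have hg0 : g x = 0 := Function.notMem_support.mp hgs
    rw [hg0] at hx
    simp only [ENNReal.coe_zero, ENNReal.zero_rpow_of_pos hp0] at hx
    have hfp0 : (f x : ℝ≥0∞) ^ p = 0 := by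
      rcases mul_eq_zero.mp hx.symm with h | h
      · exact absurd h hc0'
      · exact h
    rcases ENNReal.rpow_eq_zero_iff.mp hfp0 with ⟨h1, _⟩ | ⟨h1, _⟩
    · exact hfs (by simpa using h1)
    · exact absurd h1 ENNReal.coe_ne_top
end

section
/- Let X = ℝ with Lebesgue measure ν, let γ > 0, and let φ : [0,∞) → ℝ be continuous. Suppose that D_{φ,γ}(g,f) ≥ 0 for all g, f ∈ F_γ, and that D_{φ,γ}(g,f) > 0 whenever the supports {g > 0} and {f > 0} of g, f ∈ F_γ differ up to a ν-null set. Then ψ(z) = φ(e^z) is strictly increasing and convex on ℝ. -/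
open MeasureTheory

/-- Scaled indicator test function. -/
noncomputable def fdpdInd (a : NNReal) (m : ℝ) : ℝ → NNReal :=
  (Set.Ioc (0 : ℝ) m).indicator (fun _ => a)

lemma fdpdInd_lint_pow (a : NNReal) {m : ℝ} (hm : 0 ≤ m) {p : ℝ} (hp : 0 < p) :
    ∫⁻ x, (fdpdInd a m x : ENNReal) ^ p ∂volume
      = (a : ENNReal) ^ p * ENNReal.ofReal m := by
  have h : ∀ x : ℝ, (fdpdInd a m x : ENNReal) ^ p
      = (Set.Ioc (0 : ℝ) m).indicator (fun _ => (a : ENNReal) ^ p) x := by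
    intro x
    unfold fdpdInd
    by_cases hx : x ∈ Set.Ioc (0 : ℝ) m <;>
      simp [hx, ENNReal.zero_rpow_of_pos hp]
  simp_rw [h]
  rw [lintegral_indicator measurableSet_Ioc, setLIntegral_const, Real.volume_Ioc, sub_zero]

lemma fdpdInd_lint_mixed (a b : NNReal) {γ m m' : ℝ} (hm : 0 ≤ m) (hmm : m ≤ m') :
    ∫⁻ x, (fdpdInd a m x : ENNReal) * (fdpdInd b m' x : ENNReal) ^ γ ∂volume
      = (a : ENNReal) * (b : ENNReal) ^ γ * ENNReal.ofReal m := by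
  have h : ∀ x : ℝ, (fdpdInd a m x : ENNReal) * (fdpdInd b m' x : ENNReal) ^ γ
      = (Set.Ioc (0 : ℝ) m).indicator (fun _ => (a : ENNReal) * (b : ENNReal) ^ γ) x := by
    intro x
    unfold fdpdInd
    by_cases hx : x ∈ Set.Ioc (0 : ℝ) m
    · have hx' : x ∈ Set.Ioc (0 : ℝ) m' := Set.Ioc_subset_Ioc_right hmm hx
      simp [hx, hx']
    · simp [hx]
  simp_rw [h]
  rw [lintegral_indicator measurableSet_Ioc, setLIntegral_const, Real.volume_Ioc, sub_zero]

lemma fdpdInd_memF {a : NNReal} (ha : a ≠ 0) {m : ℝ} (hm : 0 < m) {γ : ℝ} (hγ : 0 < γ) :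
    MemF volume γ (fdpdInd a m) := by
  refine ⟨measurable_const.indicator measurableSet_Ioc, ?_, ?_⟩
  · intro h
    rw [Filter.EventuallyEq, ae_iff] at h
    have hsub : Set.Ioc (0 : ℝ) m ⊆ {x | ¬ fdpdInd a m x = (0 : ℝ → NNReal) x} := by
      intro x hx
      simp only [Set.mem_setOf_eq, Pi.zero_apply, fdpdInd, Set.indicator_of_mem hx]
      exact ha
    have := (measure_mono hsub).trans h.le
    rw [Real.volume_Ioc, sub_zero, nonpos_iff_eq_zero] at this
    exact absurd this (ENNReal.ofReal_pos.mpr hm).ne'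
  · rw [fdpdInd_lint_pow a hm.le (by linarith : (0:ℝ) < 1 + γ)]
    exact ENNReal.mul_ne_top
      (ENNReal.rpow_ne_top_of_nonneg (by linarith) ENNReal.coe_ne_top) ENNReal.ofReal_ne_top

lemma fdpdInd_support {a : NNReal} (ha : a ≠ 0) (m : ℝ) :
    Function.support (fdpdInd a m) = Set.Ioc (0 : ℝ) m := by
  rw [fdpdInd, Set.support_indicator, Function.support_const ha, Set.inter_univ]

lemma fdpd_eval (φ : ℝ → ℝ) {γ : ℝ} (hγ : 0 < γ) (a b : NNReal) {m m' : ℝ}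
    (hm : 0 < m) (hmm : m ≤ m') :
    FDPD volume φ γ (fdpdInd a m) (fdpdInd b m')
      = (1 / γ) * φ ((a : ℝ) ^ (1 + γ) * m)
        - ((1 + γ) / γ) * φ ((a : ℝ) * (b : ℝ) ^ γ * m)
        + φ ((b : ℝ) ^ (1 + γ) * m') := by
  have hm' : (0:ℝ) < m' := lt_of_lt_of_le hm hmm
  have hp : (0:ℝ) < 1 + γ := by linarith
  rw [FDPD, fdpdInd_lint_pow a hm.le hp, fdpdInd_lint_pow b hm'.le hp,
    fdpdInd_lint_mixed a b hm.le hmm]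
  simp [ENNReal.toReal_mul, ← ENNReal.toReal_rpow, ENNReal.toReal_ofReal hm.le,
    ENNReal.toReal_ofReal hm'.le]

lemma exp_rpow' (c p : ℝ) : (Real.exp c) ^ p = Real.exp (c * p) := by
  rw [Real.rpow_def_of_pos (Real.exp_pos c), Real.log_exp]

lemma toNNReal_exp_ne (c : ℝ) : (Real.exp c).toNNReal ≠ 0 :=
  (Real.toNNReal_pos.mpr (Real.exp_pos c)).ne'

lemma coe_toNNReal_exp (c : ℝ) : ((Real.exp c).toNNReal : ℝ) = Real.exp c :=
  Real.coe_toNNReal _ (Real.exp_pos c).le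

/-- A closed set of weights in `[0,1]` containing `0` and `1` which is stable under the
`l`-weighted average is all of `[0,1]`. -/
lemma icc_subset_of_closed_under_mean {S : Set ℝ} (hS : IsClosed S)
    (hS01 : S ⊆ Set.Icc 0 1) (h0 : (0:ℝ) ∈ S) (h1 : (1:ℝ) ∈ S)
    {l : ℝ} (hl0 : 0 < l) (hl1 : l < 1)
    (hop : ∀ x ∈ S, ∀ y ∈ S, l * x + (1 - l) * y ∈ S) :
    Set.Icc (0:ℝ) 1 ⊆ S := by
  intro μ hμ
  by_contra hμS
  have hμ0 : (0:ℝ) < μ := lt_of_le_of_ne hμ.1 (by rintro rfl; exact hμS h0)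
  have hμ1 : μ < 1 := lt_of_le_of_ne hμ.2 (by rintro rfl; exact hμS h1)
  set A := S ∩ Set.Icc 0 μ with hA
  set B := S ∩ Set.Icc μ 1 with hB
  have hAne : A.Nonempty := ⟨0, h0, le_refl 0, hμ.1⟩
  have hBne : B.Nonempty := ⟨1, h1, hμ.2, le_refl 1⟩
  have hAbdd : BddAbove A := ⟨μ, fun x hx => hx.2.2⟩
  have hBbdd : BddBelow B := ⟨μ, fun x hx => hx.2.1⟩
  have haA : sSup A ∈ A := (hS.inter isClosed_Icc).csSup_mem hAne hAbdd
  have hbB : sInf B ∈ B := (hS.inter isClosed_Icc).csInf_mem hBne hBbdd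
  set a := sSup A
  set b := sInf B
  have haμ : a < μ := lt_of_le_of_ne haA.2.2 (by rintro h; exact hμS (h ▸ haA.1))
  have hbμ : μ < b := lt_of_le_of_ne' hbB.2.1 (by rintro h; exact hμS (h ▸ hbB.1))
  have hab : a < b := haμ.trans hbμ
  set c := l * a + (1 - l) * b with hc
  have hcS : c ∈ S := hop a haA.1 b hbB.1
  have hac : a < c := by nlinarith
  have hcb : c < b := by nlinarith
  rcases le_or_gt c μ with h | h
  · have : c ∈ A := ⟨hcS, (hS01 hcS).1, h⟩
    exact absurd (le_csSup hAbdd this) (not_le.mpr hac)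
  · have : c ∈ B := ⟨hcS, h.le, (hS01 hcS).2⟩
    exact absurd (csInf_le hBbdd this) (not_le.mpr hcb)

/-- Continuity plus `l`-weighted convexity for a fixed weight implies convexity. -/
lemma convexOn_of_fixed_weight {ψ : ℝ → ℝ} (hc : Continuous ψ)
    {l : ℝ} (hl0 : 0 < l) (hl1 : l < 1)
    (h : ∀ s t : ℝ, ψ (l * s + (1 - l) * t) ≤ l * ψ s + (1 - l) * ψ t) :
    ConvexOn ℝ Set.univ ψ := by
  set S : Set ℝ :=
    Set.Icc 0 1 ∩ ⋂ (s : ℝ), ⋂ (t : ℝ),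
      {μ : ℝ | ψ (μ * s + (1 - μ) * t) ≤ μ * ψ s + (1 - μ) * ψ t} with hSdef
  have hmem : ∀ μ : ℝ, μ ∈ S ↔ μ ∈ Set.Icc (0:ℝ) 1 ∧
      ∀ s t : ℝ, ψ (μ * s + (1 - μ) * t) ≤ μ * ψ s + (1 - μ) * ψ t := by
    intro μ
    simp [hSdef, Set.mem_iInter]
  have hSclosed : IsClosed S := by
    apply isClosed_Icc.inter
    refine isClosed_iInter fun s => isClosed_iInter fun t => ?_
    apply isClosed_le
    · exact hc.comp (by continuity)
    · continuity
  have h0 : (0:ℝ) ∈ S := (hmem 0).mpr ⟨⟨le_refl 0, zero_le_one⟩, fun s t => by norm_num⟩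
  have h1 : (1:ℝ) ∈ S := (hmem 1).mpr ⟨⟨zero_le_one, le_refl 1⟩, fun s t => by norm_num⟩
  have hop : ∀ x ∈ S, ∀ y ∈ S, l * x + (1 - l) * y ∈ S := by
    intro x hx y hy
    obtain ⟨hx01, hx2⟩ := (hmem x).mp hx
    obtain ⟨hy01, hy2⟩ := (hmem y).mp hy
    refine (hmem _).mpr ⟨⟨by nlinarith [hx01.1, hy01.1], by nlinarith [hx01.2, hy01.2]⟩, ?_⟩
    intro s t
    have e1 : (l * x + (1 - l) * y) * s + (1 - (l * x + (1 - l) * y)) * t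
        = l * (x * s + (1 - x) * t) + (1 - l) * (y * s + (1 - y) * t) := by ring
    calc ψ ((l * x + (1 - l) * y) * s + (1 - (l * x + (1 - l) * y)) * t)
        = ψ (l * (x * s + (1 - x) * t) + (1 - l) * (y * s + (1 - y) * t)) := by rw [e1]
      _ ≤ l * ψ (x * s + (1 - x) * t) + (1 - l) * ψ (y * s + (1 - y) * t) := h _ _
      _ ≤ l * (x * ψ s + (1 - x) * ψ t) + (1 - l) * (y * ψ s + (1 - y) * ψ t) := by
          have := hx2 s t
          have := hy2 s t
          nlinarith
      _ = (l * x + (1 - l) * y) * ψ s + (1 - (l * x + (1 - l) * y)) * ψ t := by ring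
  have hall := icc_subset_of_closed_under_mean hSclosed (fun x hx => ((hmem x).mp hx).1)
    h0 h1 hl0 hl1 hop
  refine ⟨convex_univ, ?_⟩
  intro x _ y _ p q hp hq hpq
  have hp1 : p ∈ Set.Icc (0:ℝ) 1 := ⟨hp, by linarith⟩
  have := ((hmem p).mp (hall hp1)).2 x y
  have hq' : q = 1 - p := by linarith
  simpa [hq', smul_eq_mul] using this

open scoped symmDiff in
theorem fdpd_converse (γ : ℝ) (hγ : 0 < γ) (φ : ℝ → ℝ)
    (hφc : ContinuousOn φ (Set.Ici (0 : ℝ)))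
    (hnonneg : ∀ g f : ℝ → NNReal, MemF volume γ g → MemF volume γ f →
      0 ≤ FDPD volume φ γ g f)
    (hpos : ∀ g f : ℝ → NNReal, MemF volume γ g → MemF volume γ f →
      volume (Function.support g ∆ Function.support f) ≠ 0 →
      0 < FDPD volume φ γ g f) :
    StrictMono (fun z : ℝ => φ (Real.exp z)) ∧
      ConvexOn ℝ Set.univ (fun z : ℝ => φ (Real.exp z)) := by
  have hp : (0:ℝ) < 1 + γ := by linarith
  set ψ : ℝ → ℝ := fun z => φ (Real.exp z) with hψ
  -- continuity of ψ
  have hψc : Continuous ψ := by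
    rw [continuous_iff_continuousAt]
    intro z
    have h1 : ContinuousAt φ (Real.exp z) :=
      (hφc (Real.exp z) (Real.exp_pos z).le).continuousAt
        (Ici_mem_nhds (Real.exp_pos z))
    exact h1.comp Real.continuous_exp.continuousAt
  -- strict monotonicity
  have hmono : StrictMono ψ := by
    intro u v huv
    set a : NNReal := (Real.exp (v / (1 + γ))).toNNReal with haa
    set b : NNReal := (Real.exp ((u - v / (1 + γ)) / γ)).toNNReal with hbb
    set m' : ℝ := Real.exp ((1 + γ) * (v - u) / γ) with hmm'
    have hm'1 : (1:ℝ) < m' := by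
      calc (1:ℝ) = Real.exp 0 := Real.exp_zero.symm
        _ < m' := Real.exp_lt_exp.mpr (div_pos (by nlinarith) hγ)
    have hg : MemF volume γ (fdpdInd a 1) := fdpdInd_memF (toNNReal_exp_ne _) one_pos hγ
    have hf : MemF volume γ (fdpdInd b m') := fdpdInd_memF (toNNReal_exp_ne _)
      (lt_trans one_pos hm'1) hγ
    have hsupp : volume (Function.support (fdpdInd a 1) ∆ Function.support (fdpdInd b m')) ≠ 0 := by
      rw [fdpdInd_support (toNNReal_exp_ne _), fdpdInd_support (toNNReal_exp_ne _)]
      have hsub : Set.Ioc (1:ℝ) m' ⊆ Set.Ioc (0:ℝ) 1 ∆ Set.Ioc (0:ℝ) m' := by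
        intro x hx
        rw [Set.mem_symmDiff]
        right
        exact ⟨⟨lt_trans one_pos hx.1, hx.2⟩, fun h => absurd h.2 (not_le.mpr hx.1)⟩
      intro h
      have := (measure_mono hsub).trans h.le
      rw [Real.volume_Ioc, nonpos_iff_eq_zero] at this
      exact absurd this (ENNReal.ofReal_pos.mpr (by linarith)).ne'
    have hkey := hpos _ _ hg hf hsupp
    rw [fdpd_eval φ hγ a b one_pos hm'1.le] at hkey
    simp only [haa, hbb, hmm', coe_toNNReal_exp, exp_rpow', mul_one, ← Real.exp_add] at hkey
    have e1 : v / (1 + γ) * (1 + γ) = v := by field_simp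
    have e2 : v / (1 + γ) + (u - v / (1 + γ)) / γ * γ = u := by field_simp <;> ring
    have e3 : (u - v / (1 + γ)) / γ * (1 + γ) + (1 + γ) * (v - u) / γ = v := by
      field_simp <;> ring
    rw [e1, e2, e3] at hkey
    -- hkey : 0 < (1/γ) * φ (exp v) - ((1+γ)/γ) * φ (exp u) + φ (exp v)
    have h2 : 0 < γ * ((1 / γ) * φ (Real.exp v) - ((1 + γ) / γ) * φ (Real.exp u)
        + φ (Real.exp v)) := mul_pos hγ hkey
    have h3 : γ * ((1 / γ) * φ (Real.exp v) - ((1 + γ) / γ) * φ (Real.exp u)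
        + φ (Real.exp v)) = (1 + γ) * (φ (Real.exp v) - φ (Real.exp u)) := by
      field_simp <;> ring
    rw [h3] at h2
    show φ (Real.exp u) < φ (Real.exp v)
    nlinarith [h2, hp]
  -- fixed-weight convexity
  have hlam : ∀ s t : ℝ, (1 + γ) * ψ ((s + γ * t) / (1 + γ)) ≤ ψ s + γ * ψ t := by
    intro s t
    set a : NNReal := (Real.exp (s / (1 + γ))).toNNReal with haa
    set b : NNReal := (Real.exp (t / (1 + γ))).toNNReal with hbb
    have hga : MemF volume γ (fdpdInd a 1) := by
      rw [haa]; exact fdpdInd_memF (toNNReal_exp_ne _) one_pos hγ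
    have hgb : MemF volume γ (fdpdInd b 1) := by
      rw [hbb]; exact fdpdInd_memF (toNNReal_exp_ne _) one_pos hγ
    have hkey := hnonneg _ _ hga hgb
    rw [fdpd_eval φ hγ a b one_pos le_rfl] at hkey
    simp only [haa, hbb, coe_toNNReal_exp, exp_rpow', mul_one, ← Real.exp_add] at hkey
    have e1 : s / (1 + γ) * (1 + γ) = s := by field_simp
    have e2 : s / (1 + γ) + t / (1 + γ) * γ = (s + γ * t) / (1 + γ) := by
      field_simp <;> ring
    have e3 : t / (1 + γ) * (1 + γ) = t := by field_simp
    rw [e1, e2, e3] at hkey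
    have h2 : 0 ≤ γ * ((1 / γ) * ψ s - ((1 + γ) / γ) * ψ ((s + γ * t) / (1 + γ)) + ψ t) :=
      mul_nonneg hγ.le hkey
    have h3 : γ * ((1 / γ) * ψ s - ((1 + γ) / γ) * ψ ((s + γ * t) / (1 + γ)) + ψ t)
        = ψ s + γ * ψ t - (1 + γ) * ψ ((s + γ * t) / (1 + γ)) := by
      field_simp <;> ring
    rw [h3] at h2
    linarith
  have hconv : ConvexOn ℝ Set.univ ψ := by
    apply convexOn_of_fixed_weight hψc (l := 1 / (1 + γ)) (by positivity)
      ((div_lt_one hp).mpr (by linarith))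
    intro s t
    have key := hlam s t
    have e1 : 1 / (1 + γ) * s + (1 - 1 / (1 + γ)) * t = (s + γ * t) / (1 + γ) := by
      field_simp <;> ring
    rw [e1]
    calc ψ ((s + γ * t) / (1 + γ))
        = (1 / (1 + γ)) * ((1 + γ) * ψ ((s + γ * t) / (1 + γ))) := by field_simp
      _ ≤ (1 / (1 + γ)) * (ψ s + γ * ψ t) := by
          apply mul_le_mul_of_nonneg_left key (by positivity)
      _ = 1 / (1 + γ) * ψ s + (1 - 1 / (1 + γ)) * ψ t := by field_simp <;> ring
  exact ⟨hmono, hconv⟩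
end

section
/- Let X = ℝ with Lebesgue measure ν, let γ > 0, and let φ : [0,∞) → ℝ be continuous and strictly increasing on [0,∞). Then the following two conditions are equivalent: (i) ψ(z) = φ(e^z) is strictly increasing and convex on ℝ; (ii) D_{φ,γ}(g,f) ≥ 0 for all g, f ∈ F_γ, and for all probability densities q, p ∈ F_γ (i.e., ⟨q⟩ = ⟨p⟩ = 1), D_{φ,γ}(q,p) = 0 holds if and only if q = p ν-almost everywhere. -/
open MeasureTheory

open Real Set Filter
open scoped ENNReal NNReal


lemma amgm_le_ennreal {θ : ℝ} (hθ0 : 0 < θ) (hθ1 : θ < 1) {a b : ℝ≥0∞} (ha : a ≠ ⊤) (hb : b ≠ ⊤) :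
    a ^ θ * b ^ (1 - θ) ≤ ENNReal.ofReal θ * a + ENNReal.ofReal (1 - θ) * b := by
  rcases eq_or_ne a 0 with rfl | ha0
  · rw [ENNReal.zero_rpow_of_pos hθ0, zero_mul]; exact zero_le
  rcases eq_or_ne b 0 with rfl | hb0
  · rw [ENNReal.zero_rpow_of_pos (by linarith), mul_zero]; exact zero_le
  have hA : 0 < a.toReal := ENNReal.toReal_pos ha0 ha
  have hB : 0 < b.toReal := ENNReal.toReal_pos hb0 hb
  have ea : a ^ θ = ENNReal.ofReal (a.toReal ^ θ) := by
    conv_lhs => rw [← ENNReal.ofReal_toReal ha]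
    rw [ENNReal.ofReal_rpow_of_pos hA]
  have eb : b ^ (1 - θ) = ENNReal.ofReal (b.toReal ^ (1 - θ)) := by
    conv_lhs => rw [← ENNReal.ofReal_toReal hb]
    rw [ENNReal.ofReal_rpow_of_pos hB]
  have hreal : a.toReal ^ θ * b.toReal ^ (1 - θ) ≤ θ * a.toReal + (1 - θ) * b.toReal :=
    Real.geom_mean_le_arith_mean2_weighted hθ0.le (by linarith) hA.le hB.le (by ring)
  calc a ^ θ * b ^ (1 - θ)
      = ENNReal.ofReal (a.toReal ^ θ * b.toReal ^ (1 - θ)) := by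
        rw [ea, eb, ← ENNReal.ofReal_mul (by positivity)]
    _ ≤ ENNReal.ofReal (θ * a.toReal + (1 - θ) * b.toReal) := ENNReal.ofReal_le_ofReal hreal
    _ = _ := by
        rw [ENNReal.ofReal_add (mul_nonneg hθ0.le hA.le) (mul_nonneg (by linarith) hB.le), ENNReal.ofReal_mul hθ0.le,
          ENNReal.ofReal_mul (by linarith), ENNReal.ofReal_toReal ha, ENNReal.ofReal_toReal hb]

lemma amgm_eq_ennreal {θ : ℝ} (hθ0 : 0 < θ) (hθ1 : θ < 1) {a b : ℝ≥0∞} (ha : a ≠ ⊤) (hb : b ≠ ⊤)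
    (heq : a ^ θ * b ^ (1 - θ) = ENNReal.ofReal θ * a + ENNReal.ofReal (1 - θ) * b) : a = b := by
  have hθ0' : ENNReal.ofReal θ ≠ 0 := (ENNReal.ofReal_pos.2 hθ0).ne'
  have hθ1' : ENNReal.ofReal (1 - θ) ≠ 0 := (ENNReal.ofReal_pos.2 (by linarith)).ne'
  rcases eq_or_ne a 0 with rfl | ha0
  · rw [ENNReal.zero_rpow_of_pos hθ0, zero_mul, mul_zero, zero_add] at heq
    rcases mul_eq_zero.1 heq.symm with h | h
    · exact absurd h hθ1'
    · rw [h]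
  rcases eq_or_ne b 0 with rfl | hb0
  · rw [ENNReal.zero_rpow_of_pos (by linarith : (0:ℝ) < 1 - θ), mul_zero, mul_zero,
      add_zero] at heq
    rcases mul_eq_zero.1 heq.symm with h | h
    · exact absurd h hθ0'
    · rw [h]
  by_contra hne
  have hA : 0 < a.toReal := ENNReal.toReal_pos ha0 ha
  have hB : 0 < b.toReal := ENNReal.toReal_pos hb0 hb
  have hAB : a.toReal ≠ b.toReal := fun h => hne ((ENNReal.toReal_eq_toReal_iff' ha hb).1 h)
  have hlog : Real.log a.toReal ≠ Real.log b.toReal := fun h =>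
    hAB (Real.log_injOn_pos (mem_Ioi.2 hA) (mem_Ioi.2 hB) h)
  have hstrict := strictConvexOn_exp.2 (mem_univ (Real.log a.toReal))
    (mem_univ (Real.log b.toReal)) hlog hθ0 (by linarith : (0:ℝ) < 1 - θ) (by ring)
  simp only [smul_eq_mul] at hstrict
  rw [Real.exp_log hA, Real.exp_log hB] at hstrict
  have hexp : Real.exp (θ * Real.log a.toReal + (1 - θ) * Real.log b.toReal)
      = a.toReal ^ θ * b.toReal ^ (1 - θ) := by
    rw [Real.exp_add, Real.rpow_def_of_pos hA, Real.rpow_def_of_pos hB,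
      mul_comm (Real.log a.toReal) θ, mul_comm (Real.log b.toReal) (1 - θ)]
  rw [hexp] at hstrict
  have htr : a.toReal ^ θ * b.toReal ^ (1 - θ) = θ * a.toReal + (1 - θ) * b.toReal := by
    have := congrArg ENNReal.toReal heq
    rw [ENNReal.toReal_mul, ← ENNReal.toReal_rpow, ← ENNReal.toReal_rpow,
      ENNReal.toReal_add (ENNReal.mul_ne_top ENNReal.ofReal_ne_top ha)
        (ENNReal.mul_ne_top ENNReal.ofReal_ne_top hb),
      ENNReal.toReal_mul, ENNReal.toReal_mul, ENNReal.toReal_ofReal hθ0.le,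
      ENNReal.toReal_ofReal (by linarith : (0:ℝ) ≤ 1 - θ)] at this
    exact this
  exact absurd htr hstrict.ne


variable {X : Type*} [MeasurableSpace X] {ν : Measure X} {γ : ℝ}

lemma memF_ne_zero (hγ : 0 < γ) {g : X → NNReal} (hg : MemF ν γ g) :
    (∫⁻ x, (g x : ENNReal) ^ (1 + γ) ∂ν) ≠ 0 := by
  intro h0
  have hm : Measurable fun x => (g x : ENNReal) ^ (1 + γ) :=
    hg.1.coe_nnreal_ennreal.pow_const _
  rw [lintegral_eq_zero_iff hm] at h0
  refine hg.2.1 ?_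
  filter_upwards [h0] with x hx
  simp only [Pi.zero_apply] at hx ⊢
  by_contra hne
  have hgx : (0:ℝ≥0∞) < (g x : ℝ≥0∞) := by
    simpa [pos_iff_ne_zero] using fun h => hne (by exact_mod_cast h)
  exact (ENNReal.rpow_pos hgx ENNReal.coe_ne_top).ne' hx

lemma my_hoelder (hγ : 0 < γ) {g f : X → NNReal} (hg : Measurable g) (hf : Measurable f) :
    (∫⁻ x, (g x : ENNReal) * (f x : ENNReal) ^ γ ∂ν)
      ≤ (∫⁻ x, (g x : ENNReal) ^ (1 + γ) ∂ν) ^ (1 / (1 + γ))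
        * (∫⁻ x, (f x : ENNReal) ^ (1 + γ) ∂ν) ^ (γ / (1 + γ)) := by
  have hγ0 : γ ≠ 0 := hγ.ne'
  have h1γ : (0:ℝ) < 1 + γ := by linarith
  have hpq : Real.HolderConjugate (1 + γ) ((1 + γ) / γ) := by
    rw [Real.holderConjugate_iff]
    constructor
    · linarith
    · rw [inv_div]; field_simp
  have h := ENNReal.lintegral_mul_le_Lp_mul_Lq ν hpq hg.coe_nnreal_ennreal.aemeasurable
    (hf.coe_nnreal_ennreal.pow_const γ).aemeasurable
  simp only [Pi.mul_apply] at h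
  have e1 : ∀ x : X, ((f x : ℝ≥0∞) ^ γ) ^ ((1 + γ) / γ) = (f x : ℝ≥0∞) ^ (1 + γ) := by
    intro x
    rw [← ENNReal.rpow_mul]
    congr 1
    field_simp
  have e2 : γ / (1 + γ) = 1 / ((1 + γ) / γ) := by rw [one_div_div]
  rw [e2]
  simpa only [e1] using h

lemma hoelder_eq_ae (hγ : 0 < γ) {q p : X → NNReal} (hq : MemF ν γ q) (hp : MemF ν γ p)
    (heq : (∫⁻ x, (q x : ENNReal) * (p x : ENNReal) ^ γ ∂ν)
      = (∫⁻ x, (q x : ENNReal) ^ (1 + γ) ∂ν) ^ (1 / (1 + γ))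
        * (∫⁻ x, (p x : ENNReal) ^ (1 + γ) ∂ν) ^ (γ / (1 + γ))) :
    ∀ᵐ x ∂ν, (q x : ℝ≥0∞) ^ (1 + γ) * (∫⁻ y, (q y : ENNReal) ^ (1 + γ) ∂ν)⁻¹
      = (p x : ℝ≥0∞) ^ (1 + γ) * (∫⁻ y, (p y : ENNReal) ^ (1 + γ) ∂ν)⁻¹ := by
  have hγ0 : γ ≠ 0 := hγ.ne'
  have h1γ : (0:ℝ) < 1 + γ := by linarith
  set θ : ℝ := 1 / (1 + γ) with hθ
  have hθ0 : 0 < θ := by positivity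
  have hθ1 : θ < 1 := by rw [hθ, div_lt_one h1γ]; linarith
  have hθc : 1 - θ = γ / (1 + γ) := by rw [hθ]; field_simp; ring
  set Iq := ∫⁻ x, (q x : ENNReal) ^ (1 + γ) ∂ν with hIq
  set Ip := ∫⁻ x, (p x : ENNReal) ^ (1 + γ) ∂ν with hIp
  have hIq0 : Iq ≠ 0 := memF_ne_zero hγ hq
  have hIp0 : Ip ≠ 0 := memF_ne_zero hγ hp
  have hIqT : Iq ≠ ⊤ := hq.2.2
  have hIpT : Ip ≠ ⊤ := hp.2.2
  set u : X → ℝ≥0∞ := fun x => (q x : ℝ≥0∞) ^ (1 + γ) * Iq⁻¹ with hu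
  set v : X → ℝ≥0∞ := fun x => (p x : ℝ≥0∞) ^ (1 + γ) * Ip⁻¹ with hv
  have hu_meas : Measurable u := (hq.1.coe_nnreal_ennreal.pow_const _).mul_const _
  have hv_meas : Measurable v := (hp.1.coe_nnreal_ennreal.pow_const _).mul_const _
  have hu_fin : ∀ x, u x ≠ ⊤ := fun x =>
    ENNReal.mul_ne_top (ENNReal.rpow_ne_top_of_nonneg (by linarith) ENNReal.coe_ne_top)
      (ENNReal.inv_ne_top.2 hIq0)
  have hv_fin : ∀ x, v x ≠ ⊤ := fun x =>
    ENNReal.mul_ne_top (ENNReal.rpow_ne_top_of_nonneg (by linarith) ENNReal.coe_ne_top)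
      (ENNReal.inv_ne_top.2 hIp0)
  have hu_int : ∫⁻ x, u x ∂ν = 1 := by
    rw [hu]
    rw [lintegral_mul_const' _ _ (ENNReal.inv_ne_top.2 hIq0), ← hIq,
      ENNReal.mul_inv_cancel hIq0 hIqT]
  have hv_int : ∫⁻ x, v x ∂ν = 1 := by
    rw [hv]
    rw [lintegral_mul_const' _ _ (ENNReal.inv_ne_top.2 hIp0), ← hIp,
      ENNReal.mul_inv_cancel hIp0 hIpT]
  -- pointwise computation of the geometric mean term
  have hpoint : ∀ x, u x ^ θ * v x ^ (1 - θ)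
      = ((q x : ℝ≥0∞) * (p x : ℝ≥0∞) ^ γ) * ((Iq ^ θ)⁻¹ * (Ip ^ (1 - θ))⁻¹) := by
    intro x
    have e1 : ((q x : ℝ≥0∞) ^ (1 + γ)) ^ θ = (q x : ℝ≥0∞) := by
      rw [← ENNReal.rpow_mul, hθ, mul_one_div, div_self h1γ.ne', ENNReal.rpow_one]
    have e2 : ((p x : ℝ≥0∞) ^ (1 + γ)) ^ (1 - θ) = (p x : ℝ≥0∞) ^ γ := by
      rw [← ENNReal.rpow_mul, hθc]
      congr 1
      field_simp
    rw [hu, hv]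
    rw [ENNReal.mul_rpow_of_nonneg _ _ hθ0.le, ENNReal.mul_rpow_of_nonneg _ _ (by linarith),
      e1, e2, ENNReal.inv_rpow, ENNReal.inv_rpow]
    ring
  have hIqt0 : Iq ^ θ ≠ 0 := (ENNReal.rpow_pos (pos_iff_ne_zero.2 hIq0) hIqT).ne'
  have hIpt0 : Ip ^ (1 - θ) ≠ 0 := (ENNReal.rpow_pos (pos_iff_ne_zero.2 hIp0) hIpT).ne'
  have hIqtT : Iq ^ θ ≠ ⊤ := ENNReal.rpow_ne_top_of_nonneg hθ0.le hIqT
  have hIptT : Ip ^ (1 - θ) ≠ ⊤ := ENNReal.rpow_ne_top_of_nonneg (by linarith) hIpT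
  have hG_int : ∫⁻ x, u x ^ θ * v x ^ (1 - θ) ∂ν = 1 := by
    simp only [hpoint]
    rw [lintegral_mul_const' _ _
      (ENNReal.mul_ne_top (ENNReal.inv_ne_top.2 hIqt0) (ENNReal.inv_ne_top.2 hIpt0))]
    rw [heq, ← hθc, mul_mul_mul_comm, ENNReal.mul_inv_cancel hIqt0 hIqtT,
      ENNReal.mul_inv_cancel hIpt0 hIptT, one_mul]
  -- integral of the arithmetic mean
  have hH_int : ∫⁻ x, ENNReal.ofReal θ * u x + ENNReal.ofReal (1 - θ) * v x ∂ν = 1 := by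
    rw [lintegral_add_left (hu_meas.const_mul _), lintegral_const_mul _ hu_meas,
      lintegral_const_mul _ hv_meas, hu_int, hv_int, mul_one, mul_one,
      ← ENNReal.ofReal_add hθ0.le (by linarith), add_sub_cancel, ENNReal.ofReal_one]
  have h_le : ∀ x, u x ^ θ * v x ^ (1 - θ)
      ≤ ENNReal.ofReal θ * u x + ENNReal.ofReal (1 - θ) * v x := fun x =>
    amgm_le_ennreal hθ0 hθ1 (hu_fin x) (hv_fin x)
  have hG_meas : Measurable fun x => u x ^ θ * v x ^ (1 - θ) :=
    (hu_meas.pow_const _).mul (hv_meas.pow_const _)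
  have hH_meas : Measurable fun x => ENNReal.ofReal θ * u x + ENNReal.ofReal (1 - θ) * v x :=
    (hu_meas.const_mul _).add (hv_meas.const_mul _)
  have hsub : ∫⁻ x, (ENNReal.ofReal θ * u x + ENNReal.ofReal (1 - θ) * v x)
      - u x ^ θ * v x ^ (1 - θ) ∂ν = 0 := by
    rw [lintegral_sub hG_meas (by rw [hG_int]; exact ENNReal.one_ne_top) (ae_of_all _ h_le),
      hH_int, hG_int, tsub_self]
  replace hsub := (lintegral_eq_zero_iff (hH_meas.sub hG_meas)).1 hsub
  filter_upwards [hsub] with x hx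
  simp only [Pi.zero_apply, Pi.sub_apply] at hx
  have hge : ENNReal.ofReal θ * u x + ENNReal.ofReal (1 - θ) * v x ≤ u x ^ θ * v x ^ (1 - θ) :=
    tsub_eq_zero_iff_le.1 hx
  exact amgm_eq_ennreal hθ0 hθ1 (hu_fin x) (hv_fin x) (le_antisymm (h_le x) hge)



lemma convexOn_of_fixed_combo {θ : ℝ} (hθ0 : 0 < θ) (hθ1 : θ < 1) {ψ : ℝ → ℝ}
    (hc : Continuous ψ)
    (h : ∀ x y : ℝ, ψ (θ * x + (1 - θ) * y) ≤ θ * ψ x + (1 - θ) * ψ y) :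
    ConvexOn ℝ Set.univ ψ := by
  set P : ℝ → Prop := fun t => 0 ≤ t ∧ t ≤ 1 ∧
    ∀ x y : ℝ, ψ (t * x + (1 - t) * y) ≤ t * ψ x + (1 - t) * ψ y with hP
  have hP0 : P 0 := ⟨le_refl 0, by norm_num, fun x y => by norm_num⟩
  have hP1 : P 1 := ⟨by norm_num, le_refl 1, fun x y => by norm_num⟩
  have hPcomb : ∀ s t, P s → P t → P (θ * s + (1 - θ) * t) := by
    rintro s t ⟨hs0, hs1, hs⟩ ⟨ht0, ht1, ht⟩
    refine ⟨add_nonneg (mul_nonneg hθ0.le hs0) (mul_nonneg (by linarith) ht0), by nlinarith, fun x y => ?_⟩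
    have key : (θ * s + (1 - θ) * t) * x + (1 - (θ * s + (1 - θ) * t)) * y
        = θ * (s * x + (1 - s) * y) + (1 - θ) * (t * x + (1 - t) * y) := by ring
    rw [key]
    calc ψ (θ * (s * x + (1 - s) * y) + (1 - θ) * (t * x + (1 - t) * y))
        ≤ θ * ψ (s * x + (1 - s) * y) + (1 - θ) * ψ (t * x + (1 - t) * y) := h _ _
      _ ≤ θ * (s * ψ x + (1 - s) * ψ y) + (1 - θ) * (t * ψ x + (1 - t) * ψ y) := by
          have h1 := hs x y
          have h2 := ht x y
          nlinarith
      _ = (θ * s + (1 - θ) * t) * ψ x + (1 - (θ * s + (1 - θ) * t)) * ψ y := by ring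
  set M : ℝ := max θ (1 - θ) with hM
  have hM0 : 0 < M := lt_max_of_lt_left hθ0
  have hM1 : M < 1 := max_lt hθ1 (by linarith)
  have approx : ∀ n : ℕ, ∀ t : ℝ, 0 ≤ t → t ≤ 1 → ∃ s, P s ∧ |s - t| ≤ M ^ n := by
    intro n
    induction n with
    | zero => intro t ht0 ht1; exact ⟨0, hP0, by rw [abs_sub_comm]; simpa [abs_of_nonneg ht0]⟩
    | succ n ih =>
      intro t ht0 ht1
      by_cases hcase : t ≤ θ
      · obtain ⟨s', hs', hd⟩ := ih (t / θ) (by positivity) (by rw [div_le_one hθ0]; exact hcase)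
        refine ⟨θ * s' + (1 - θ) * 0, hPcomb _ _ hs' hP0, ?_⟩
        have : θ * s' + (1 - θ) * 0 - t = θ * (s' - t / θ) := by field_simp; ring
        rw [this, abs_mul, abs_of_pos hθ0, pow_succ, mul_comm (M ^ n) M]
        exact mul_le_mul (le_max_left _ _) hd (abs_nonneg _) hM0.le
      · push_neg at hcase
        obtain ⟨s', hs', hd⟩ := ih ((t - θ) / (1 - θ))
          (by apply div_nonneg <;> linarith) (by rw [div_le_one (by linarith)]; linarith)
        refine ⟨θ * 1 + (1 - θ) * s', hPcomb _ _ hP1 hs', ?_⟩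
        have : θ * 1 + (1 - θ) * s' - t = (1 - θ) * (s' - (t - θ) / (1 - θ)) := by
          rw [mul_sub, mul_div_cancel₀ _ (by linarith : (1:ℝ) - θ ≠ 0)]; ring
        rw [this, abs_mul, abs_of_pos (by linarith), pow_succ, mul_comm (M ^ n) M]
        exact mul_le_mul (le_max_right _ _) hd (abs_nonneg _) (by linarith)
  refine ⟨convex_univ, ?_⟩
  rintro x - y - a b ha hb hab
  simp only [smul_eq_mul]
  have hseq : ∀ n : ℕ, ∃ s, P s ∧ |s - a| ≤ M ^ n := fun n => approx n a ha (by linarith)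
  choose s hsP hsd using hseq
  have hsa : Filter.Tendsto s Filter.atTop (nhds a) := by
    have h0 : Filter.Tendsto (fun n => s n - a) Filter.atTop (nhds 0) := by
      have hn : ∀ n, ‖s n - a‖ ≤ (fun n => M ^ n) n := fun n => by
        simpa [Real.norm_eq_abs] using hsd n
      exact squeeze_zero_norm hn (tendsto_pow_atTop_nhds_zero_of_lt_one hM0.le hM1)
    simpa using h0.add_const a
  have hF : Filter.Tendsto (fun n => s n * ψ x + (1 - s n) * ψ y - ψ (s n * x + (1 - s n) * y))
      Filter.atTop (nhds (a * ψ x + (1 - a) * ψ y - ψ (a * x + (1 - a) * y))) := by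
    have : Continuous fun t : ℝ => t * ψ x + (1 - t) * ψ y - ψ (t * x + (1 - t) * y) := by
      fun_prop
    exact (this.tendsto a).comp hsa
  have hnn : 0 ≤ a * ψ x + (1 - a) * ψ y - ψ (a * x + (1 - a) * y) := by
    refine ge_of_tendsto hF (Filter.Eventually.of_forall fun n => ?_)
    have := (hsP n).2.2 x y
    linarith
  have hb' : b = 1 - a := by linarith
  rw [hb']
  linarith


noncomputable def stepF (r : ℝ) : ℝ → NNReal :=
  fun x => Set.indicator (Set.Icc (0:ℝ) 1) (fun _ => Real.toNNReal (Real.exp r)) x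

lemma stepF_meas (r : ℝ) : Measurable (stepF r) :=
  Measurable.indicator measurable_const measurableSet_Icc

lemma stepF_pow (r c : ℝ) (hc : 0 < c) :
    ∫⁻ x, ((stepF r x : ℝ≥0) : ℝ≥0∞) ^ c = ENNReal.ofReal (Real.exp (r * c)) := by
  have hpt : ∀ x, ((stepF r x : ℝ≥0) : ℝ≥0∞) ^ c
      = Set.indicator (Set.Icc (0:ℝ) 1) (fun _ => ENNReal.ofReal (Real.exp (r * c))) x := by
    intro x
    by_cases hx : x ∈ Set.Icc (0:ℝ) 1
    · rw [stepF, Set.indicator_of_mem hx, Set.indicator_of_mem hx]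
      rw [show (((Real.exp r).toNNReal : ℝ≥0) : ℝ≥0∞) = ENNReal.ofReal (Real.exp r) from rfl,
        ENNReal.ofReal_rpow_of_pos (Real.exp_pos r), ← Real.exp_mul]
    · rw [stepF, Set.indicator_of_notMem hx, Set.indicator_of_notMem hx]
      simp [ENNReal.zero_rpow_of_pos hc]
  simp only [hpt]
  rw [lintegral_indicator measurableSet_Icc, setLIntegral_const, Real.volume_Icc]
  norm_num

lemma stepF_cross (r s : ℝ) {γ : ℝ} (hγ : 0 < γ) :
    ∫⁻ x, ((stepF r x : ℝ≥0) : ℝ≥0∞) * ((stepF s x : ℝ≥0) : ℝ≥0∞) ^ γ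
      = ENNReal.ofReal (Real.exp (r + s * γ)) := by
  have hpt : ∀ x, ((stepF r x : ℝ≥0) : ℝ≥0∞) * ((stepF s x : ℝ≥0) : ℝ≥0∞) ^ γ
      = Set.indicator (Set.Icc (0:ℝ) 1) (fun _ => ENNReal.ofReal (Real.exp (r + s * γ))) x := by
    intro x
    by_cases hx : x ∈ Set.Icc (0:ℝ) 1
    · rw [stepF, stepF, Set.indicator_of_mem hx, Set.indicator_of_mem hx,
        Set.indicator_of_mem hx]
      rw [show (((Real.exp r).toNNReal : ℝ≥0) : ℝ≥0∞) = ENNReal.ofReal (Real.exp r) from rfl,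
        show (((Real.exp s).toNNReal : ℝ≥0) : ℝ≥0∞) = ENNReal.ofReal (Real.exp s) from rfl,
        ENNReal.ofReal_rpow_of_pos (Real.exp_pos s), ← Real.exp_mul,
        ← ENNReal.ofReal_mul (Real.exp_pos r).le, ← Real.exp_add]
    · rw [stepF, stepF, Set.indicator_of_notMem hx, Set.indicator_of_notMem hx,
        Set.indicator_of_notMem hx]
      simp
  simp only [hpt]
  rw [lintegral_indicator measurableSet_Icc, setLIntegral_const, Real.volume_Icc]
  norm_num

lemma stepF_ne_zero (r : ℝ) : ¬ (stepF r =ᵐ[volume] 0) := by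
  intro h
  have hsub : Set.Icc (0:ℝ) 1 ⊆ {x | ¬ stepF r x = 0} := by
    intro x hx
    simp only [Set.mem_setOf_eq, stepF, Set.indicator_of_mem hx]
    exact (Real.toNNReal_pos.2 (Real.exp_pos r)).ne'
  have h0 : volume {x | ¬ stepF r x = 0} = 0 := by
    have := h
    rw [Filter.EventuallyEq, ae_iff] at this
    simpa using this
  have := measure_mono_null hsub h0
  rw [Real.volume_Icc] at this
  norm_num at this


lemma key_chain {γ : ℝ} (hγ : 0 < γ) {φ : ℝ → ℝ} (hφm : StrictMonoOn φ (Set.Ici (0:ℝ)))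
    (hconv : ConvexOn ℝ Set.univ (fun z : ℝ => φ (Real.exp z)))
    {A B Cr : ℝ} (hA : 0 < A) (hB : 0 < B) (hCr : 0 ≤ Cr)
    (hH : Cr ≤ A ^ (1 / (1 + γ)) * B ^ (γ / (1 + γ))) :
    ((1 + γ) / γ) * φ Cr ≤ (1 / γ) * φ A + φ B ∧
      (((1 + γ) / γ) * φ Cr = (1 / γ) * φ A + φ B →
        Cr = A ^ (1 / (1 + γ)) * B ^ (γ / (1 + γ))) := by
  have hγ0 : γ ≠ 0 := hγ.ne'
  have h1γ : (0:ℝ) < 1 + γ := by linarith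
  set X : ℝ := A ^ (1 / (1 + γ)) * B ^ (γ / (1 + γ)) with hX
  have hXpos : 0 < X := by positivity
  have hexpX : X = Real.exp ((1 / (1 + γ)) * Real.log A + (γ / (1 + γ)) * Real.log B) := by
    rw [hX, Real.exp_add, Real.rpow_def_of_pos hA, Real.rpow_def_of_pos hB,
      mul_comm (Real.log A) _, mul_comm (Real.log B) _]
  have s1 : φ Cr ≤ φ X :=
    hφm.monotoneOn (Set.mem_Ici.2 hCr) (Set.mem_Ici.2 hXpos.le) hH
  have s2 : φ X ≤ (1 / (1 + γ)) * φ A + (γ / (1 + γ)) * φ B := by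
    have hc := hconv.2 (Set.mem_univ (Real.log A)) (Set.mem_univ (Real.log B))
      (by positivity : (0:ℝ) ≤ 1 / (1 + γ)) (by positivity : (0:ℝ) ≤ γ / (1 + γ))
      (by field_simp)
    simp only [smul_eq_mul] at hc
    rw [Real.exp_log hA, Real.exp_log hB] at hc
    rwa [hexpX]
  have hfac : (0:ℝ) < (1 + γ) / γ := by positivity
  have hized : ((1 + γ) / γ) * ((1 / (1 + γ)) * φ A + (γ / (1 + γ)) * φ B)
      = (1 / γ) * φ A + φ B := by field_simp
  constructor
  · calc ((1 + γ) / γ) * φ Cr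
        ≤ ((1 + γ) / γ) * ((1 / (1 + γ)) * φ A + (γ / (1 + γ)) * φ B) :=
          mul_le_mul_of_nonneg_left (s1.trans s2) hfac.le
      _ = (1 / γ) * φ A + φ B := hized
  · intro heq
    have h1 : φ Cr = (1 / (1 + γ)) * φ A + (γ / (1 + γ)) * φ B := by
      apply mul_left_cancel₀ hfac.ne'
      rw [heq, hized]
    have h2 : φ Cr = φ X := le_antisymm s1 (by rw [h1]; exact s2)
    exact hφm.injOn (Set.mem_Ici.2 hCr) (Set.mem_Ici.2 hXpos.le) h2


theorem fdpd_divergence_iff (γ : ℝ) (hγ : 0 < γ) (φ : ℝ → ℝ)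
    (hφc : ContinuousOn φ (Set.Ici (0 : ℝ)))
    (hφm : StrictMonoOn φ (Set.Ici (0 : ℝ))) :
    (StrictMono (fun z : ℝ => φ (Real.exp z)) ∧
        ConvexOn ℝ Set.univ (fun z : ℝ => φ (Real.exp z))) ↔
      ((∀ g f : ℝ → NNReal, MemF volume γ g → MemF volume γ f →
          0 ≤ FDPD volume φ γ g f) ∧
        (∀ q p : ℝ → NNReal, MemF volume γ q → MemF volume γ p →
          (∫⁻ x, (q x : ENNReal) ∂volume) = 1 → (∫⁻ x, (p x : ENNReal) ∂volume) = 1 →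
          (FDPD volume φ γ q p = 0 ↔ q =ᵐ[volume] p))) := by
  have hγ0 : γ ≠ 0 := hγ.ne'
  have h1γ : (0:ℝ) < 1 + γ := by linarith
  have hψm : StrictMono (fun z : ℝ => φ (Real.exp z)) := fun a b hab =>
    hφm (Set.mem_Ici.2 (Real.exp_pos a).le) (Set.mem_Ici.2 (Real.exp_pos b).le)
      (Real.exp_lt_exp.2 hab)
  constructor
  · rintro ⟨-, hconv⟩
    constructor
    · -- nonnegativity
      intro g f hg hf
      unfold FDPD
      set Ig := ∫⁻ x, ((g x : ℝ≥0) : ℝ≥0∞) ^ (1 + γ) ∂volume with hIg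
      set If := ∫⁻ x, ((f x : ℝ≥0) : ℝ≥0∞) ^ (1 + γ) ∂volume with hIf
      set C := ∫⁻ x, ((g x : ℝ≥0) : ℝ≥0∞) * ((f x : ℝ≥0) : ℝ≥0∞) ^ γ ∂volume with hC
      have hIg0 : Ig ≠ 0 := memF_ne_zero hγ hg
      have hIf0 : If ≠ 0 := memF_ne_zero hγ hf
      have hIgT : Ig ≠ ⊤ := hg.2.2
      have hIfT : If ≠ ⊤ := hf.2.2
      have hH : C ≤ Ig ^ (1 / (1 + γ)) * If ^ (γ / (1 + γ)) := my_hoelder hγ hg.1 hf.1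
      have hRT : Ig ^ (1 / (1 + γ)) * If ^ (γ / (1 + γ)) ≠ ⊤ :=
        ENNReal.mul_ne_top (ENNReal.rpow_ne_top_of_nonneg (by positivity) hIgT)
          (ENNReal.rpow_ne_top_of_nonneg (by positivity) hIfT)
      have hCT : C ≠ ⊤ := ne_top_of_le_ne_top hRT hH
      have hA : 0 < Ig.toReal := ENNReal.toReal_pos hIg0 hIgT
      have hB : 0 < If.toReal := ENNReal.toReal_pos hIf0 hIfT
      have hHr : C.toReal ≤ Ig.toReal ^ (1 / (1 + γ)) * If.toReal ^ (γ / (1 + γ)) := by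
        have := ENNReal.toReal_mono hRT hH
        rwa [ENNReal.toReal_mul, ← ENNReal.toReal_rpow, ← ENNReal.toReal_rpow] at this
      have hkey := (key_chain hγ hφm hconv hA hB ENNReal.toReal_nonneg hHr).1
      linarith
    · -- equality characterization
      intro q p hq hp hq1 hp1
      constructor
      · intro hD
        unfold FDPD at hD
        set Iq := ∫⁻ x, ((q x : ℝ≥0) : ℝ≥0∞) ^ (1 + γ) ∂volume with hIq
        set Ip := ∫⁻ x, ((p x : ℝ≥0) : ℝ≥0∞) ^ (1 + γ) ∂volume with hIp
        set C := ∫⁻ x, ((q x : ℝ≥0) : ℝ≥0∞) * ((p x : ℝ≥0) : ℝ≥0∞) ^ γ ∂volume with hC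
        have hIq0 : Iq ≠ 0 := memF_ne_zero hγ hq
        have hIp0 : Ip ≠ 0 := memF_ne_zero hγ hp
        have hIqT : Iq ≠ ⊤ := hq.2.2
        have hIpT : Ip ≠ ⊤ := hp.2.2
        have hH : C ≤ Iq ^ (1 / (1 + γ)) * Ip ^ (γ / (1 + γ)) := my_hoelder hγ hq.1 hp.1
        have hRT : Iq ^ (1 / (1 + γ)) * Ip ^ (γ / (1 + γ)) ≠ ⊤ :=
          ENNReal.mul_ne_top (ENNReal.rpow_ne_top_of_nonneg (by positivity) hIqT)
            (ENNReal.rpow_ne_top_of_nonneg (by positivity) hIpT)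
        have hCT : C ≠ ⊤ := ne_top_of_le_ne_top hRT hH
        have hA : 0 < Iq.toReal := ENNReal.toReal_pos hIq0 hIqT
        have hB : 0 < Ip.toReal := ENNReal.toReal_pos hIp0 hIpT
        have hHr : C.toReal ≤ Iq.toReal ^ (1 / (1 + γ)) * Ip.toReal ^ (γ / (1 + γ)) := by
          have := ENNReal.toReal_mono hRT hH
          rwa [ENNReal.toReal_mul, ← ENNReal.toReal_rpow, ← ENNReal.toReal_rpow] at this
        have hDalg : ((1 + γ) / γ) * φ C.toReal = (1 / γ) * φ Iq.toReal + φ Ip.toReal := by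
          linarith
        have hCr := (key_chain hγ hφm hconv hA hB ENNReal.toReal_nonneg hHr).2 hDalg
        have hCE : C = Iq ^ (1 / (1 + γ)) * Ip ^ (γ / (1 + γ)) := by
          refine (ENNReal.toReal_eq_toReal_iff' hCT hRT).1 ?_
          rw [ENNReal.toReal_mul, ← ENNReal.toReal_rpow, ← ENNReal.toReal_rpow]
          exact hCr
        have hae := hoelder_eq_ae hγ hq hp (by rw [← hC, ← hIq, ← hIp] at *; exact hCE)
        rw [← hIq, ← hIp] at hae
        have e1 : ∀ (y : ℝ≥0) (I : ℝ≥0∞),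
            (((y : ℝ≥0∞)) ^ (1 + γ) * I⁻¹) ^ (1 / (1 + γ))
              = (y : ℝ≥0∞) * (I⁻¹) ^ (1 / (1 + γ)) := by
          intro y I
          rw [ENNReal.mul_rpow_of_nonneg _ _ (by positivity), ← ENNReal.rpow_mul,
            mul_one_div, div_self h1γ.ne', ENNReal.rpow_one]
        have hae2 : ∀ᵐ x ∂(volume : Measure ℝ),
            (q x : ℝ≥0∞) * (Iq⁻¹) ^ (1 / (1 + γ)) = (p x : ℝ≥0∞) * (Ip⁻¹) ^ (1 / (1 + γ)) := by
          filter_upwards [hae] with x hx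
          have h2 := congrArg (fun t : ℝ≥0∞ => t ^ (1 / (1 + γ))) hx
          simpa only [e1] using h2
        have hkqT : (Iq⁻¹) ^ (1 / (1 + γ)) ≠ ⊤ :=
          ENNReal.rpow_ne_top_of_nonneg (by positivity) (ENNReal.inv_ne_top.2 hIq0)
        have hkpT : (Ip⁻¹) ^ (1 / (1 + γ)) ≠ ⊤ :=
          ENNReal.rpow_ne_top_of_nonneg (by positivity) (ENNReal.inv_ne_top.2 hIp0)
        have hkp0 : (Ip⁻¹) ^ (1 / (1 + γ)) ≠ 0 :=
          (ENNReal.rpow_pos (ENNReal.inv_pos.2 hIpT) (ENNReal.inv_ne_top.2 hIp0)).ne'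
        have hint : (Iq⁻¹) ^ (1 / (1 + γ)) = (Ip⁻¹) ^ (1 / (1 + γ)) := by
          have hq' : ∫⁻ x, (q x : ℝ≥0∞) * (Iq⁻¹) ^ (1 / (1 + γ)) ∂volume
              = (Iq⁻¹) ^ (1 / (1 + γ)) := by
            rw [lintegral_mul_const' _ _ hkqT, hq1, one_mul]
          have hp' : ∫⁻ x, (p x : ℝ≥0∞) * (Ip⁻¹) ^ (1 / (1 + γ)) ∂volume
              = (Ip⁻¹) ^ (1 / (1 + γ)) := by
            rw [lintegral_mul_const' _ _ hkpT, hp1, one_mul]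
          rw [← hq', ← hp']
          exact lintegral_congr_ae hae2
        filter_upwards [hae2] with x hx
        rw [hint] at hx
        have h2 := congrArg (fun t : ℝ≥0∞ => t * ((Ip⁻¹) ^ (1 / (1 + γ)))⁻¹) hx
        simp only [mul_assoc, ENNReal.mul_inv_cancel hkp0 hkpT, mul_one] at h2
        exact_mod_cast h2
      · intro hqp
        have I1 : ∫⁻ x, ((q x : ℝ≥0) : ℝ≥0∞) ^ (1 + γ) ∂volume
            = ∫⁻ x, ((p x : ℝ≥0) : ℝ≥0∞) ^ (1 + γ) ∂volume :=
          lintegral_congr_ae (hqp.mono fun x hx => by simp only []; rw [hx])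
        have I2 : ∫⁻ x, ((q x : ℝ≥0) : ℝ≥0∞) * ((p x : ℝ≥0) : ℝ≥0∞) ^ γ ∂volume
            = ∫⁻ x, ((p x : ℝ≥0) : ℝ≥0∞) ^ (1 + γ) ∂volume := by
          refine lintegral_congr_ae (hqp.mono fun x hx => ?_)
          simp only []
          rw [hx, ENNReal.rpow_add_of_nonneg 1 γ zero_le_one hγ.le, ENNReal.rpow_one]
        unfold FDPD
        rw [I1, I2]
        field_simp
        ring
  · rintro ⟨hpos, -⟩
    refine ⟨hψm, ?_⟩
    have hψc : Continuous (fun z : ℝ => φ (Real.exp z)) := by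
      rw [← continuousOn_univ]
      exact hφc.comp Real.continuous_exp.continuousOn
        (fun x _ => Set.mem_Ici.2 (Real.exp_pos x).le)
    have hθ0 : (0:ℝ) < 1 / (1 + γ) := by positivity
    have hθ1 : 1 / (1 + γ) < 1 := by rw [div_lt_one h1γ]; linarith
    refine convexOn_of_fixed_combo hθ0 hθ1 hψc ?_
    intro a b
    have hmemA : MemF volume γ (stepF (a / (1 + γ))) :=
      ⟨stepF_meas _, stepF_ne_zero _, by
        rw [stepF_pow _ _ h1γ]; exact ENNReal.ofReal_ne_top⟩
    have hmemB : MemF volume γ (stepF (b / (1 + γ))) :=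
      ⟨stepF_meas _, stepF_ne_zero _, by
        rw [stepF_pow _ _ h1γ]; exact ENNReal.ofReal_ne_top⟩
    have h0 := hpos _ _ hmemA hmemB
    unfold FDPD at h0
    rw [stepF_pow _ _ h1γ, stepF_pow _ _ h1γ, stepF_cross _ _ hγ,
      ENNReal.toReal_ofReal (Real.exp_nonneg _), ENNReal.toReal_ofReal (Real.exp_nonneg _),
      ENNReal.toReal_ofReal (Real.exp_nonneg _),
      div_mul_cancel₀ a h1γ.ne', div_mul_cancel₀ b h1γ.ne'] at h0
    have harg : a / (1 + γ) + b / (1 + γ) * γ = 1 / (1 + γ) * a + (1 - 1 / (1 + γ)) * b := by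
      field_simp
      ring
    rw [harg] at h0
    set c := 1 / (1 + γ) * a + (1 - 1 / (1 + γ)) * b with hc
    calc φ (Real.exp c)
        = (γ / (1 + γ)) * (((1 + γ) / γ) * φ (Real.exp c)) := by
          field_simp
      _ ≤ (γ / (1 + γ)) * ((1 / γ) * φ (Real.exp a) + φ (Real.exp b)) := by
          apply mul_le_mul_of_nonneg_left (by linarith) (by positivity)
      _ = 1 / (1 + γ) * φ (Real.exp a) + (1 - 1 / (1 + γ)) * φ (Real.exp b) := by
          field_simp
          ring
end

section
/- Let γ > 0, let X = ℝ^d with Lebesgue measure, let Σ ∈ ℝ^{d×d} be invertible and μ ∈ ℝ^d, and let g, f ∈ F_γ. (1) For ζ > 0 and φ_ζ(z) = (z^ζ − 1)/ζ, the FDPD satisfies |det Σ|^{−γζ} · D_{φ_ζ,γ}(g_{Σ,μ}, f_{Σ,μ}) = D_{φ_ζ,γ}(g, f). (2) If additionally ⟨g f^γ⟩ > 0, then for φ(z) = log z the FDPD is exactly affine invariant: D_{log,γ}(g_{Σ,μ}, f_{Σ,μ}) = D_{log,γ}(g, f). -/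
open MeasureTheory

/-- Affine transformation of a nonnegative function: `g_{Σ,μ}(x) = |det Σ| ⬝ g(Σ x + μ)`. -/
noncomputable def affTrans {d : ℕ} (A : Matrix (Fin d) (Fin d) ℝ) (μ : Fin d → ℝ)
    (g : (Fin d → ℝ) → NNReal) : (Fin d → ℝ) → NNReal :=
  fun x => Real.toNNReal |A.det| * g (A.mulVec x + μ)

lemma key_lintegral {d : ℕ} (A : Matrix (Fin d) (Fin d) ℝ) (hA : A.det ≠ 0)
    (μ : Fin d → ℝ) (h : (Fin d → ℝ) → ENNReal) (hh : Measurable h) :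
    ∫⁻ x, h (A.mulVec x + μ) = ENNReal.ofReal |A.det|⁻¹ * ∫⁻ x, h x := by
  have hL : Measurable (Matrix.toLin' A) :=
    (Matrix.toLin' A).toContinuousLinearMap.continuous.measurable
  have hmap : Measure.map (fun x : Fin d → ℝ => A.mulVec x + μ) volume
      = ENNReal.ofReal |A.det|⁻¹ • volume := by
    have e : (fun x : Fin d → ℝ => A.mulVec x + μ)
        = (fun y => y + μ) ∘ (Matrix.toLin' A) := by
      ext x i; simp [Matrix.toLin'_apply]
    rw [e, ← Measure.map_map (measurable_add_const μ) hL,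
      Real.map_matrix_volume_pi_eq_smul_volume_pi hA, Measure.map_smul,
      map_add_right_eq_self, abs_inv]
  have hT : Measurable fun x : Fin d → ℝ => A.mulVec x + μ := hL.add_const μ
  calc ∫⁻ x, h (A.mulVec x + μ)
      = ∫⁻ y, h y ∂(Measure.map (fun x : Fin d → ℝ => A.mulVec x + μ) volume) :=
        (lintegral_map hh hT).symm
    _ = ENNReal.ofReal |A.det|⁻¹ * ∫⁻ x, h x := by rw [hmap]; simp [lintegral_smul_measure]

theorem fdpd_affine_invariance (d : ℕ) (γ ζ : ℝ) (hγ : 0 < γ) (hζ : 0 < ζ)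
    (A : Matrix (Fin d) (Fin d) ℝ) (hA : A.det ≠ 0) (μ : Fin d → ℝ)
    (g f : (Fin d → ℝ) → NNReal) (hg : MemF volume γ g) (hf : MemF volume γ f) :
    (|A.det| ^ (-(γ * ζ)) *
        FDPD volume (fun z : ℝ => (z ^ ζ - 1) / ζ) γ (affTrans A μ g) (affTrans A μ f)
      = FDPD volume (fun z : ℝ => (z ^ ζ - 1) / ζ) γ g f) ∧
    ((∫⁻ x, (g x : ENNReal) * (f x : ENNReal) ^ γ ∂volume) ≠ 0 →
      FDPD volume Real.log γ (affTrans A μ g) (affTrans A μ f)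
        = FDPD volume Real.log γ g f) := by
  obtain ⟨hgm, hgz, hgt⟩ := hg
  obtain ⟨hfm, hfz, hft⟩ := hf
  have hdet : (0:ℝ) < |A.det| := abs_pos.mpr hA
  set c : ENNReal := ENNReal.ofReal |A.det| with hc
  have hc0 : c ≠ 0 := by
    rw [hc, Ne, ENNReal.ofReal_eq_zero, not_le]; exact hdet
  have hct : c ≠ ⊤ := ENNReal.ofReal_ne_top
  have hT : Measurable fun x : Fin d → ℝ => A.mulVec x + μ :=
    ((Matrix.toLin' A).toContinuousLinearMap.continuous.measurable).add_const μ
  -- measurable integrands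
  have hmg : Measurable fun x => ((g x : ENNReal)) ^ (1 + γ) :=
    (hgm.coe_nnreal_ennreal).pow_const _
  have hmf : Measurable fun x => ((f x : ENNReal)) ^ (1 + γ) :=
    (hfm.coe_nnreal_ennreal).pow_const _
  have hmgf : Measurable fun x => (g x : ENNReal) * (f x : ENNReal) ^ γ :=
    (hgm.coe_nnreal_ennreal).mul ((hfm.coe_nnreal_ennreal).pow_const _)
  -- abbreviations
  set Ig := ∫⁻ x, ((g x : ENNReal)) ^ (1 + γ) with hIg
  set If := ∫⁻ x, ((f x : ENNReal)) ^ (1 + γ) with hIf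
  set Igf := ∫⁻ x, (g x : ENNReal) * (f x : ENNReal) ^ γ with hIgf
  -- cross integral finite via Hölder
  have hpq : Real.HolderConjugate (1 + γ) ((1 + γ) / γ) := by
    rw [Real.holderConjugate_iff]
    constructor
    · linarith
    · field_simp
  have hIgft : Igf ≠ ⊤ := by
    have hHold := ENNReal.lintegral_mul_le_Lp_mul_Lq (volume)
      hpq (f := fun x => (g x : ENNReal)) (g := fun x => ((f x : ENNReal)) ^ γ)
      hgm.coe_nnreal_ennreal.aemeasurable
      ((hfm.coe_nnreal_ennreal).pow_const _).aemeasurable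
    have hrw : ∀ x, (((f x : ENNReal)) ^ γ) ^ ((1 + γ) / γ) = ((f x : ENNReal)) ^ (1 + γ) := by
      intro x
      rw [← ENNReal.rpow_mul]
      congr 1
      field_simp
    simp only [Pi.mul_apply, hrw] at hHold
    intro htop
    rw [hIgf] at htop
    rw [htop] at hHold
    have h1 : Ig ^ (1 / (1 + γ)) ≠ ⊤ := ENNReal.rpow_ne_top_of_nonneg (by positivity) hgt
    have h2 : If ^ (1 / ((1 + γ) / γ)) ≠ ⊤ := ENNReal.rpow_ne_top_of_nonneg (by positivity) hft
    exact absurd (top_le_iff.mp hHold) (ENNReal.mul_ne_top h1 h2)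
  -- nonzero integrals
  have hnz : ∀ (h : (Fin d → ℝ) → NNReal), Measurable h → ¬ (h =ᵐ[volume] 0) →
      (∫⁻ x, ((h x : ENNReal)) ^ (1 + γ)) ≠ 0 := by
    intro h hm hz h0
    apply hz
    have := (lintegral_eq_zero_iff ((hm.coe_nnreal_ennreal).pow_const (1 + γ))).mp h0
    filter_upwards [this] with x hx
    simp only [Pi.zero_apply] at hx ⊢
    rw [ENNReal.rpow_eq_zero_iff] at hx
    rcases hx with ⟨h1, _⟩ | ⟨h1, _⟩
    · exact_mod_cast h1
    · exact absurd h1 (by simp)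
  have hIg0 : Ig ≠ 0 := hnz g hgm hgz
  have hIf0 : If ≠ 0 := hnz f hfm hfz
  -- transformation of the three integrals
  have hcoe : ∀ x, ((affTrans A μ g x : ENNReal)) = c * (g (A.mulVec x + μ) : ENNReal) := by
    intro x; simp [affTrans, hc, ENNReal.ofReal]
  have hcoef : ∀ x, ((affTrans A μ f x : ENNReal)) = c * (f (A.mulVec x + μ) : ENNReal) := by
    intro x; simp [affTrans, hc, ENNReal.ofReal]
  have hcinv : ENNReal.ofReal |A.det|⁻¹ = c⁻¹ := by
    rw [hc, ENNReal.ofReal_inv_of_pos hdet]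
  have hfactor : c ^ (1 + γ) * c⁻¹ = c ^ γ := by
    rw [ENNReal.rpow_add 1 γ hc0 hct, ENNReal.rpow_one, mul_comm c (c ^ γ), mul_assoc,
      ENNReal.mul_inv_cancel hc0 hct, mul_one]
  have htrans1 : ∀ (h : (Fin d → ℝ) → NNReal), Measurable h →
      (∫⁻ x, ((affTrans A μ h x : ENNReal)) ^ (1 + γ))
        = c ^ γ * ∫⁻ x, ((h x : ENNReal)) ^ (1 + γ) := by
    intro h hm
    have e1 : ∀ x, ((affTrans A μ h x : ENNReal)) ^ (1 + γ)
        = c ^ (1 + γ) * ((h (A.mulVec x + μ) : ENNReal)) ^ (1 + γ) := by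
      intro x
      rw [show ((affTrans A μ h x : ENNReal)) = c * (h (A.mulVec x + μ) : ENNReal) by
        simp [affTrans, hc, ENNReal.ofReal],
        ENNReal.mul_rpow_of_nonneg _ _ (by positivity)]
    have hmc : Measurable fun x => ((h (A.mulVec x + μ) : ENNReal)) ^ (1 + γ) :=
      ((hm.coe_nnreal_ennreal).pow_const _).comp hT
    simp_rw [e1]
    rw [lintegral_const_mul _ hmc,
      key_lintegral A hA μ _ ((hm.coe_nnreal_ennreal).pow_const _), hcinv,
      ← mul_assoc, mul_comm (c ^ (1+γ)) _, mul_comm (c⁻¹) _, hfactor]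
  have htrans2 : (∫⁻ x, ((affTrans A μ g x : ENNReal)) * ((affTrans A μ f x : ENNReal)) ^ γ)
      = c ^ γ * Igf := by
    have e1 : ∀ x, ((affTrans A μ g x : ENNReal)) * ((affTrans A μ f x : ENNReal)) ^ γ
        = c ^ (1 + γ) * ((g (A.mulVec x + μ) : ENNReal) * ((f (A.mulVec x + μ) : ENNReal)) ^ γ) := by
      intro x
      rw [hcoe, hcoef, ENNReal.mul_rpow_of_nonneg _ _ (le_of_lt hγ),
        ENNReal.rpow_add 1 γ hc0 hct, ENNReal.rpow_one]
      ring
    have hmc : Measurable fun x =>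
        (g (A.mulVec x + μ) : ENNReal) * ((f (A.mulVec x + μ) : ENNReal)) ^ γ := hmgf.comp hT
    simp_rw [e1]
    rw [lintegral_const_mul _ hmc, key_lintegral A hA μ _ hmgf, hcinv,
      ← mul_assoc, mul_comm (c ^ (1+γ)) _, mul_comm (c⁻¹) _, hfactor, hIgf]
  -- toReal of transformed integrals
  have hcg : c ^ γ = ENNReal.ofReal (|A.det| ^ γ) := by
    rw [hc, ← ENNReal.ofReal_rpow_of_pos hdet]
  have hr : (0:ℝ) < |A.det| ^ γ := Real.rpow_pos_of_pos hdet γ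
  have htR : ∀ (I : ENNReal), I ≠ ⊤ → (c ^ γ * I).toReal = |A.det| ^ γ * I.toReal := by
    intro I hI
    rw [ENNReal.toReal_mul, hcg, ENNReal.toReal_ofReal (le_of_lt hr)]
  have hg1 := htrans1 g hgm
  have hf1 := htrans1 f hfm
  -- real values
  set a := Ig.toReal with ha
  set b := Igf.toReal with hb
  set e := If.toReal with he
  set r := |A.det| ^ γ with hrdef
  have hta : (∫⁻ x, ((affTrans A μ g x : ENNReal)) ^ (1 + γ)).toReal = r * a := by
    rw [hg1, htR Ig hgt]
  have hte : (∫⁻ x, ((affTrans A μ f x : ENNReal)) ^ (1 + γ)).toReal = r * e := by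
    rw [hf1, htR If hft]
  have htb : (∫⁻ x, ((affTrans A μ g x : ENNReal)) * ((affTrans A μ f x : ENNReal)) ^ γ).toReal
      = r * b := by
    rw [htrans2, htR Igf hIgft]
  have hγ0 : γ ≠ 0 := ne_of_gt hγ
  have hζ0 : ζ ≠ 0 := ne_of_gt hζ
  have ha0 : 0 ≤ a := ENNReal.toReal_nonneg
  have hb0 : 0 ≤ b := ENNReal.toReal_nonneg
  have he0 : 0 ≤ e := ENNReal.toReal_nonneg
  constructor
  · -- power case
    have hpow : ∀ t : ℝ, 0 ≤ t → (r * t) ^ ζ = r ^ ζ * t ^ ζ := fun t ht =>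
      Real.mul_rpow (le_of_lt hr) ht
    have hrz : (0:ℝ) < r ^ ζ := Real.rpow_pos_of_pos hr ζ
    have hdet_pow : |A.det| ^ (-(γ * ζ)) = (r ^ ζ)⁻¹ := by
      rw [hrdef, ← Real.rpow_mul (abs_nonneg _), ← Real.rpow_neg (abs_nonneg _)]
    simp only [FDPD]
    rw [hta, hte, htb, hdet_pow, hpow a ha0, hpow b hb0, hpow e he0]
    field_simp
    ring
  · intro h0
    have hapos : 0 < a := ENNReal.toReal_pos hIg0 hgt
    have hbpos : 0 < b := ENNReal.toReal_pos h0 hIgft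
    have hepos : 0 < e := ENNReal.toReal_pos hIf0 hft
    simp only [FDPD]
    rw [hta, hte, htb, Real.log_mul (ne_of_gt hr) (ne_of_gt hapos),
      Real.log_mul (ne_of_gt hr) (ne_of_gt hbpos), Real.log_mul (ne_of_gt hr) (ne_of_gt hepos)]
    field_simp
    ring
end

section
/- Let γ > 0 and let φ : (0,∞) → ℝ be continuous such that ψ(z) = φ(e^z) is strictly increasing and convex on ℝ. Suppose there exists a function h̄ : (0,∞) → ℝ such that for all A, X, Y, Z > 0: h̄(A)·[(1/γ)φ(AX) − ((1+γ)/γ)φ(AY) + φ(AZ)] = (1/γ)φ(X) − ((1+γ)/γ)φ(Y) + φ(Z). Then exactly one of the following holds: (i) there exist α > 0 and β ∈ ℝ with φ(z) = α·log z + β for all z > 0, and h̄(A) = 1 for all A > 0; or (ii) there exist α > 0, ζ > 0 and β ∈ ℝ with φ(z) = α·(z^ζ − 1)/ζ + β for all z > 0, and h̄(A) = A^{−ζ} for all A > 0. -/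
lemma cauchy_linear_of_continuous (f : ℝ → ℝ) (hadd : ∀ a b : ℝ, f (a + b) = f a + f b)
    (hc : Continuous f) : ∀ x : ℝ, f x = f 1 * x := by
  let F : ℝ →+ ℝ := AddMonoidHom.mk' f hadd
  have hcF : Continuous F := hc
  have hco : ∀ y : ℝ, (F.toRealLinearMap hcF) y = f y := fun y =>
    congrFun (F.coe_toRealLinearMap hcF) y
  intro x
  have h := (F.toRealLinearMap hcF).map_smul x (1 : ℝ)
  rw [smul_eq_mul, mul_one, smul_eq_mul, hco, hco] at h
  rw [h, mul_comm]

theorem fdpd_affine_invariant_functional_equation (γ : ℝ) (hγ : 0 < γ)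
    (φ hbar : ℝ → ℝ) (hφc : ContinuousOn φ (Set.Ioi (0 : ℝ)))
    (hψm : StrictMono (fun z : ℝ => φ (Real.exp z)))
    (hψc : ConvexOn ℝ Set.univ (fun z : ℝ => φ (Real.exp z)))
    (heq : ∀ A X Y Z : ℝ, 0 < A → 0 < X → 0 < Y → 0 < Z →
      hbar A * ((1 / γ) * φ (A * X) - ((1 + γ) / γ) * φ (A * Y) + φ (A * Z))
        = (1 / γ) * φ X - ((1 + γ) / γ) * φ Y + φ Z) :
    Xor'
      (∃ α : ℝ, 0 < α ∧ ∃ β : ℝ,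
        (∀ z : ℝ, 0 < z → φ z = α * Real.log z + β) ∧ ∀ A : ℝ, 0 < A → hbar A = 1)
      (∃ α : ℝ, 0 < α ∧ ∃ ζ : ℝ, 0 < ζ ∧ ∃ β : ℝ,
        (∀ z : ℝ, 0 < z → φ z = α * (z ^ ζ - 1) / ζ + β) ∧
          ∀ A : ℝ, 0 < A → hbar A = A ^ (-ζ)) := by
  set ψ : ℝ → ℝ := fun z : ℝ => φ (Real.exp z) with hψdef
  have hψcont : Continuous ψ :=
    hφc.comp_continuous Real.continuous_exp (fun x => Set.mem_Ioi.2 (Real.exp_pos x))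
  -- the key functional identity after taking Z = Y
  have key : ∀ A X Y : ℝ, 0 < A → 0 < X → 0 < Y →
      hbar A * (φ (A * X) - φ (A * Y)) = φ X - φ Y := by
    intro A X Y hA hX hY
    have h := heq A X Y Y hA hX hY hY
    have hγ' : γ ≠ 0 := ne_of_gt hγ
    field_simp at h
    linear_combination h
  -- additive form
  have keyadd : ∀ a x y : ℝ, hbar (Real.exp a) * (ψ (a + x) - ψ (a + y)) = ψ x - ψ y := by
    intro a x y
    have h := key (Real.exp a) (Real.exp x) (Real.exp y)
      (Real.exp_pos a) (Real.exp_pos x) (Real.exp_pos y)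
    rw [← Real.exp_add, ← Real.exp_add] at h
    exact h
  have hψ01 : ψ 0 < ψ 1 := hψm (by norm_num)
  have hbarpos : ∀ a : ℝ, 0 < hbar (Real.exp a) := by
    intro a
    have h := keyadd a 1 0
    simp only [add_zero] at h
    have hd : 0 < ψ (a + 1) - ψ a := sub_pos.2 (hψm (by linarith))
    have : hbar (Real.exp a) = (ψ 1 - ψ 0) / (ψ (a + 1) - ψ a) := by
      rw [eq_div_iff (ne_of_gt hd)]
      linarith [h]
    rw [this]
    exact div_pos (by linarith) hd
  set G : ℝ → ℝ := fun x => ψ x - ψ 0 with hGdef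
  set k : ℝ → ℝ := fun a => (hbar (Real.exp a))⁻¹ with hkdef
  have hkpos : ∀ a : ℝ, 0 < k a := fun a => inv_pos.2 (hbarpos a)
  have Gadd : ∀ a x : ℝ, G (a + x) = G a + k a * G x := by
    intro a x
    have h := keyadd a x 0
    have hb := hbarpos a
    have : G (a + x) - G a = k a * G x := by
      simp only [hGdef, hkdef]
      rw [eq_comm, inv_mul_eq_div, div_eq_iff (ne_of_gt hb)]
      have : ψ (a + x) - ψ a - (ψ x - ψ 0) * 0 = ψ (a + x) - ψ a := by ring
      rw [mul_comm]
      have ha0 : ψ (a + 0) = ψ a := by norm_num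
      rw [ha0] at h
      linarith [h]
    linarith [this]
  have Gmono : StrictMono G := fun a b hab => by
    simp only [hGdef]
    exact sub_lt_sub_right (hψm hab) _
  have hG0 : G 0 = 0 := by simp [hGdef]
  have hG1 : 0 < G 1 := by
    have := Gmono (show (0:ℝ) < 1 by norm_num)
    rwa [hG0] at this
  have Gcont : Continuous G := hψcont.sub continuous_const
  have hsym : ∀ a x : ℝ, G a * (1 - k x) = G x * (1 - k a) := by
    intro a x
    have h1 := Gadd a x
    have h2 := Gadd x a
    rw [add_comm x a] at h2
    nlinarith [h1, h2]
  have hφψ : ∀ z : ℝ, 0 < z → φ z = ψ (Real.log z) := by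
    intro z hz
    simp only [hψdef]
    rw [Real.exp_log hz]
  have hψ0 : ψ 0 = φ 1 := by
    simp only [hψdef]
    norm_num
  by_cases hcase : ∀ x : ℝ, k x = 1
  · -- logarithmic case
    have hbar1 : ∀ A : ℝ, 0 < A → hbar A = 1 := by
      intro A hA
      have := hcase (Real.log A)
      rw [hkdef] at this
      simp only at this
      rw [Real.exp_log hA] at this
      rwa [inv_eq_one] at this
    have Gadd' : ∀ a x : ℝ, G (a + x) = G a + G x := by
      intro a x
      have := Gadd a x
      rwa [hcase a, one_mul] at this
    have hlin := cauchy_linear_of_continuous G Gadd' Gcont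
    refine Or.inl ⟨⟨G 1, hG1, φ 1, ?_, hbar1⟩, ?_⟩
    · intro z hz
      rw [hφψ z hz, ← hψ0]
      have : ψ (Real.log z) = G (Real.log z) + ψ 0 := by simp [hGdef]
      rw [this, hlin (Real.log z)]
    · rintro ⟨α, hα, ζ, hζ, β, _, hbarA⟩
      have h1 := hbar1 2 (by norm_num)
      have h2 := hbarA 2 (by norm_num)
      have : (2:ℝ) ^ (-ζ) < 1 :=
        Real.rpow_lt_one_of_one_lt_of_neg (by norm_num) (by linarith)
      rw [h1] at h2
      rw [← h2] at this
      exact absurd this (lt_irrefl 1)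
  · -- power case
    push_neg at hcase
    obtain ⟨x0, hx0⟩ := hcase
    have hk0 : k 0 = 1 := by
      have := Gadd 0 1
      rw [hG0] at this
      simp only [zero_add] at this
      have : G 1 = k 0 * G 1 := by linarith [this]
      have := mul_right_cancel₀ (ne_of_gt hG1) (by linarith [this] : k 0 * G 1 = 1 * G 1)
      linarith [this]
    have hGx0 : G x0 ≠ 0 := by
      intro h
      have : x0 = 0 := Gmono.injective (by rw [h, hG0])
      rw [this] at hx0
      exact hx0 hk0
    set c : ℝ := G x0 / (1 - k x0) with hcdef
    have hkx0 : 1 - k x0 ≠ 0 := fun h => hx0 (by linarith [h])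
    have hc : c ≠ 0 := div_ne_zero hGx0 hkx0
    have hGc : ∀ x : ℝ, G x = c * (1 - k x) := by
      intro x
      have h := hsym x0 x
      rw [hcdef]
      field_simp
      linarith [h]
    have kmul : ∀ a x : ℝ, k (a + x) = k a * k x := by
      intro a x
      have h := Gadd a x
      rw [hGc (a + x), hGc a, hGc x] at h
      have h2 : c * (1 - k (a + x)) = c * (1 - k a * k x) := by linear_combination h
      have h3 := mul_left_cancel₀ hc h2
      linarith [h3]
    set f : ℝ → ℝ := fun x => Real.log (k x) with hfdef
    have fadd : ∀ a x : ℝ, f (a + x) = f a + f x := by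
      intro a x
      simp only [hfdef]
      rw [kmul a x, Real.log_mul (ne_of_gt (hkpos a)) (ne_of_gt (hkpos x))]
    have hkeq : ∀ x : ℝ, k x = 1 - G x / c := by
      intro x
      have := hGc x
      field_simp
      linarith [this]
    have kcont : Continuous k := by
      have : k = fun x => 1 - G x / c := funext hkeq
      rw [this]
      exact continuous_const.sub (Gcont.div_const c)
    have fcont : Continuous f :=
      Real.continuousOn_log.comp_continuous kcont
        (fun x => Set.mem_compl_singleton_iff.mpr (ne_of_gt (hkpos x)))
    have hlin := cauchy_linear_of_continuous f fadd fcont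
    set ζ : ℝ := f 1 with hζdef
    have kexp : ∀ x : ℝ, k x = Real.exp (ζ * x) := by
      intro x
      have := hlin x
      rw [hfdef] at this
      simp only at this
      have h2 : Real.exp (Real.log (k x)) = Real.exp (ζ * x) := by
        rw [this]
      rwa [Real.exp_log (hkpos x)] at h2
    have hζne : ζ ≠ 0 := by
      intro h
      apply hx0
      rw [kexp x0, h, zero_mul, Real.exp_zero]
    -- ψ explicit form
    have hψval : ∀ x : ℝ, ψ x = c * (1 - Real.exp (ζ * x)) + ψ 0 := by
      intro x
      have := hGc x
      rw [kexp x] at this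
      simp only [hGdef] at this
      linarith [this]
    -- convexity forces c < 0
    have hcneg : c < 0 := by
      have hcv := hψc.2 (Set.mem_univ (0:ℝ)) (Set.mem_univ (2:ℝ))
        (by norm_num : (0:ℝ) ≤ 1/2) (by norm_num : (0:ℝ) ≤ 1/2) (by norm_num)
      simp only [smul_eq_mul] at hcv
      have e1 : (1/2 : ℝ) * 0 + (1/2 : ℝ) * 2 = 1 := by norm_num
      rw [e1] at hcv
      have hv0 : ψ 0 = c * (1 - Real.exp (ζ * 0)) + ψ 0 := hψval 0
      have hv1 : ψ 1 = c * (1 - Real.exp (ζ * 1)) + ψ 0 := hψval 1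
      have hv2 : ψ 2 = c * (1 - Real.exp (ζ * 2)) + ψ 0 := hψval 2
      set u : ℝ := Real.exp ζ with hudef
      have hu1 : Real.exp (ζ * 1) = u := by rw [mul_one]
      have hu2 : Real.exp (ζ * 2) = u * u := by
        rw [← Real.exp_add]; ring_nf
      have hune : u ≠ 1 := by
        intro h
        exact hζne (Real.exp_injective (h.trans Real.exp_zero.symm))
      rw [hu1] at hv1
      rw [hu2] at hv2
      -- from hcv : ψ 1 ≤ 1/2 ψ 0 + 1/2 ψ 2, derive c (u-1)^2 ≤ 0
      have hineq : c * (u - 1)^2 ≤ 0 := by nlinarith [hcv, hv1, hv2]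
      have husq : 0 < (u - 1)^2 := by
        have : u - 1 ≠ 0 := sub_ne_zero.2 hune
        positivity
      rcases lt_or_gt_of_ne hc with h | h
      · exact h
      · exfalso; nlinarith [hineq, husq, h]
    have hζpos : 0 < ζ := by
      have h1 : G 1 = c * (1 - Real.exp (ζ * 1)) := by rw [hGc 1, kexp 1]
      rw [mul_one] at h1
      have : 1 < Real.exp ζ := by nlinarith [hG1, h1, hcneg]
      have := Real.exp_lt_exp.mp (by rwa [Real.exp_zero] : Real.exp 0 < Real.exp ζ)
      exact this
    refine Or.inr ⟨⟨-c * ζ, mul_pos (neg_pos.2 hcneg) hζpos, ζ, hζpos, φ 1, ?_, ?_⟩, ?_⟩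
    · intro z hz
      rw [hφψ z hz, hψval (Real.log z), hψ0]
      have : Real.exp (ζ * Real.log z) = z ^ ζ := by
        rw [Real.rpow_def_of_pos hz, mul_comm]
      rw [this]
      field_simp
      ring
    · intro A hA
      have h1 : hbar A = (k (Real.log A))⁻¹ := by
        rw [hkdef]
        simp only
        rw [Real.exp_log hA, inv_inv]
      rw [h1, kexp (Real.log A), ← Real.exp_neg, Real.rpow_def_of_pos hA]
      ring_nf
    · rintro ⟨α, hα, β, _, hbarA⟩
      have h1 := hbarA 2 (by norm_num)
      have h2 : hbar 2 = (2:ℝ) ^ (-ζ) := by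
        have h1' : hbar 2 = (k (Real.log 2))⁻¹ := by
          rw [hkdef]
          simp only
          rw [Real.exp_log (by norm_num : (0:ℝ) < 2), inv_inv]
        rw [h1', kexp (Real.log 2), ← Real.exp_neg,
          Real.rpow_def_of_pos (by norm_num : (0:ℝ) < 2)]
        ring_nf
      have : (2:ℝ) ^ (-ζ) < 1 :=
        Real.rpow_lt_one_of_one_lt_of_neg (by norm_num) (by linarith)
      rw [← h2, h1] at this
      exact absurd this (lt_irrefl 1)
end

section
/- Let φ : (0,∞) → ℝ be differentiable with continuous and nowhere-vanishing derivative φ'. Suppose there exists a function h̄ : (0,∞) → ℝ such that for all A, X, Y > 0 and all Z ∈ ℝ: h̄(A)·[A·φ'(AX)·Z − φ(AX) + φ(AY)] = φ'(X)·Z − φ(X) + φ(Y). Then there exists c ∈ ℝ such that φ'(Y) = φ'(1)·Y^c for all Y > 0; consequently, φ(Y) = φ'(1)·(Y^{1+c} − 1)/(1+c) + φ(1) for all Y > 0 if c ≠ −1, and φ(Y) = φ'(1)·log Y + φ(1) for all Y > 0 if c = −1. -/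
/-- Helper: two functions with the same derivative on `Ioi 0`, agreeing at `1`, agree on `Ioi 0`. -/
lemma eq_on_Ioi_of_hasDerivAt (f g f' : ℝ → ℝ)
    (hf : ∀ y : ℝ, 0 < y → HasDerivAt f (f' y) y)
    (hg : ∀ y : ℝ, 0 < y → HasDerivAt g (f' y) y)
    (h1 : f 1 = g 1) : ∀ y : ℝ, 0 < y → f y = g y := by
  intro y hy
  set F : ℝ → ℝ := fun x => f x - g x with hF
  have hFd : ∀ x : ℝ, 0 < x → HasDerivAt F 0 x := by
    intro x hx
    have h := (hf x hx).sub (hg x hx)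
    rw [sub_self] at h
    exact h
  have hF1 : F 1 = 0 := by simp [hF, h1]
  have key : F y = 0 := by
    rcases le_total 1 y with hy1 | hy1
    · have hc : ContinuousOn F (Set.Icc 1 y) := by
        intro x hx
        exact ((hFd x (lt_of_lt_of_le one_pos hx.1)).continuousAt).continuousWithinAt
      have := constant_of_has_deriv_right_zero hc (fun x hx =>
        (hFd x (lt_of_lt_of_le one_pos hx.1)).hasDerivWithinAt) y ⟨hy1, le_refl y⟩
      rw [this, hF1]
    · have hc : ContinuousOn F (Set.Icc y 1) := by
        intro x hx
        exact ((hFd x (lt_of_lt_of_le hy hx.1)).continuousAt).continuousWithinAt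
      have := constant_of_has_deriv_right_zero hc (fun x hx =>
        (hFd x (lt_of_lt_of_le hy hx.1)).hasDerivWithinAt) 1 ⟨hy1, le_refl 1⟩
      rw [hF1] at this
      exact this.symm
  have : f y - g y = 0 := key
  linarith

theorem fdpd_kl_affine_invariant_functional_equation
    (φ φ' hbar : ℝ → ℝ)
    (hderiv : ∀ z : ℝ, 0 < z → HasDerivAt φ (φ' z) z)
    (hcont : ContinuousOn φ' (Set.Ioi (0 : ℝ)))
    (hne : ∀ z : ℝ, 0 < z → φ' z ≠ 0)
    (heq : ∀ A X Y : ℝ, 0 < A → 0 < X → 0 < Y → ∀ Z : ℝ,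
      hbar A * (A * φ' (A * X) * Z - φ (A * X) + φ (A * Y))
        = φ' X * Z - φ X + φ Y) :
    ∃ c : ℝ,
      (∀ Y : ℝ, 0 < Y → φ' Y = φ' 1 * Y ^ c) ∧
      (c ≠ -1 → ∀ Y : ℝ, 0 < Y → φ Y = φ' 1 * (Y ^ (1 + c) - 1) / (1 + c) + φ 1) ∧
      (c = -1 → ∀ Y : ℝ, 0 < Y → φ Y = φ' 1 * Real.log Y + φ 1) := by
  have h1pos : (0 : ℝ) < 1 := one_pos
  -- Step 1: hbar A * A * φ' (A * X) = φ' X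
  have key1 : ∀ A X : ℝ, 0 < A → 0 < X → hbar A * A * φ' (A * X) = φ' X := by
    intro A X hA hX
    have h1 := heq A X 1 hA hX one_pos 1
    have h0 := heq A X 1 hA hX one_pos 0
    linear_combination h1 - h0
  -- Step 2: multiplicativity: φ' 1 * φ' (A * X) = φ' A * φ' X
  have mult : ∀ A X : ℝ, 0 < A → 0 < X → φ' 1 * φ' (A * X) = φ' A * φ' X := by
    intro A X hA hX
    have hk := key1 A X hA hX
    have hkA : hbar A * A * φ' A = φ' 1 := by
      have := key1 A 1 hA one_pos
      simpa using this
    linear_combination φ' A * hk - φ' (A * X) * hkA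
  -- positivity of the ratio
  have hψpos : ∀ x : ℝ, 0 < x → 0 < φ' x / φ' 1 := by
    intro x hx
    have hs : 0 < Real.sqrt x := Real.sqrt_pos.mpr hx
    have hm := mult (Real.sqrt x) (Real.sqrt x) hs hs
    rw [Real.mul_self_sqrt hx.le] at hm
    have hsq : 0 < φ' (Real.sqrt x) * φ' (Real.sqrt x) := mul_self_pos.mpr (hne _ hs)
    have hnum : 0 < φ' 1 * φ' x := hm ▸ hsq
    have h1ne : φ' 1 ≠ 0 := hne 1 one_pos
    have : φ' x / φ' 1 = (φ' 1 * φ' x) / (φ' 1 * φ' 1) := by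
      field_simp
    rw [this]
    exact div_pos hnum (mul_self_pos.mpr h1ne)
  -- Step 3: the additive function g
  set ψ : ℝ → ℝ := fun x => φ' x / φ' 1 with hψ
  have hψmult : ∀ A X : ℝ, 0 < A → 0 < X → ψ (A * X) = ψ A * ψ X := by
    intro A X hA hX
    have h1ne : φ' 1 ≠ 0 := hne 1 one_pos
    have := mult A X hA hX
    simp only [hψ]
    field_simp
    linear_combination this
  set g : ℝ → ℝ := fun t => Real.log (ψ (Real.exp t)) with hg
  have hadd : ∀ s t : ℝ, g (s + t) = g s + g t := by
    intro s t
    have h1 : Real.exp (s + t) = Real.exp s * Real.exp t := Real.exp_add s t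
    have h2 := hψmult (Real.exp s) (Real.exp t) (Real.exp_pos s) (Real.exp_pos t)
    rw [hg]
    simp only [h1, h2]
    exact Real.log_mul (ne_of_gt (hψpos _ (Real.exp_pos s)))
      (ne_of_gt (hψpos _ (Real.exp_pos t)))
  -- continuity of g
  have hcg : Continuous g := by
    have hc1 : Continuous fun t : ℝ => φ' (Real.exp t) :=
      hcont.comp_continuous Real.continuous_exp (fun t => Set.mem_Ioi.mpr (Real.exp_pos t))
    have hc2 : Continuous fun t : ℝ => ψ (Real.exp t) := hc1.div_const _
    exact hc2.log (fun t => ne_of_gt (hψpos _ (Real.exp_pos t)))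
  -- linearity of g via Cauchy functional equation
  set G : ℝ →+ ℝ := AddMonoidHom.mk' g (fun s t => hadd s t) with hG
  set L := G.toRealLinearMap hcg with hL
  have hglin : ∀ t : ℝ, g t = t * g 1 := by
    intro t
    have h1 : L t = g t := congrFun (G.coe_toRealLinearMap hcg) t
    have h2 : L 1 = g 1 := congrFun (G.coe_toRealLinearMap hcg) 1
    have h3 : L t = t • L 1 := by
      rw [← L.map_smul]
      norm_num
    rw [← h1, h3, h2, smul_eq_mul]
  set c : ℝ := g 1 with hc
  have hpow : ∀ Y : ℝ, 0 < Y → φ' Y = φ' 1 * Y ^ c := by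
    intro Y hY
    have hψY : ψ Y = Real.exp (g (Real.log Y)) := by
      rw [hg]
      simp only []
      rw [Real.exp_log hY, Real.exp_log (hψpos Y hY)]
    have : ψ Y = Y ^ c := by
      rw [hψY, hglin (Real.log Y), Real.rpow_def_of_pos hY]
    have h1ne : φ' 1 ≠ 0 := hne 1 one_pos
    rw [hψ] at this
    field_simp at this
    linarith [this]
  refine ⟨c, hpow, ?_, ?_⟩
  · -- case c ≠ -1
    intro hcne Y hY
    have h1c : (1 : ℝ) + c ≠ 0 := by
      intro h
      apply hcne
      linarith
    have hFd : ∀ y : ℝ, 0 < y →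
        HasDerivAt (fun Y => φ' 1 * (Y ^ (1 + c) - 1) / (1 + c) + φ 1) (φ' y) y := by
      intro y hy
      have h := (Real.hasDerivAt_rpow_const (p := 1 + c) (Or.inl hy.ne'))
      have h2 := (((h.sub_const 1).const_mul (φ' 1)).div_const (1 + c)).add_const (φ 1)
      refine h2.congr_deriv ?_
      symm
      rw [hpow y hy]
      have : (1 : ℝ) + c - 1 = c := by ring
      rw [this]
      field_simp
    exact eq_on_Ioi_of_hasDerivAt φ _ φ' hderiv hFd
      (by simp [Real.one_rpow]) Y hY
  · -- case c = -1
    intro hceq Y hY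
    have hFd : ∀ y : ℝ, 0 < y →
        HasDerivAt (fun Y => φ' 1 * Real.log Y + φ 1) (φ' y) y := by
      intro y hy
      have h := (Real.hasDerivAt_log hy.ne').const_mul (φ' 1) |>.add_const (φ 1)
      refine h.congr_deriv ?_
      symm
      rw [hpow y hy, hceq, Real.rpow_neg_one]
    exact eq_on_Ioi_of_hasDerivAt φ _ φ' hderiv hFd
      (by simp) Y hY
end

section
/- Let γ > 0 and ζ > 0, and define η : [0,∞) → ℝ by η(z) = −sign((1+γ)z^ζ − γ)·|(1+γ)z^ζ − γ|^{1/ζ}, where sign(0) = 0. Then η(1) = −1 and η(z) ≥ −z^{1+γ} for all z ≥ 0; that is, η is a valid generating function for a Hölder divergence. -/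
/-- The generating function of the JHHB divergence family in Hölder-divergence form. -/
noncomputable def etaJHHB (γ ζ z : ℝ) : ℝ :=
  -(Real.sign ((1 + γ) * z ^ ζ - γ)) * |(1 + γ) * z ^ ζ - γ| ^ (1 / ζ)

theorem etaJHHB_valid (γ ζ : ℝ) (hγ : 0 < γ) (hζ : 0 < ζ) :
    etaJHHB γ ζ 1 = -1 ∧ ∀ z : ℝ, 0 ≤ z → etaJHHB γ ζ z ≥ -z ^ (1 + γ) := by
  constructor
  · have h1 : (1 + γ) * (1 : ℝ) ^ ζ - γ = 1 := by rw [Real.one_rpow]; ring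
    rw [etaJHHB, h1, Real.sign_one, abs_one, Real.one_rpow]; ring
  · intro z hz
    have hzp : (0 : ℝ) ≤ z ^ (1 + γ) := Real.rpow_nonneg hz _
    rw [etaJHHB, ge_iff_le, neg_le, neg_mul, neg_neg]
    set w := (1 + γ) * z ^ ζ - γ with hw
    rcases le_or_gt w 0 with h | h
    · have hs : Real.sign w ≤ 0 := by
        rcases h.lt_or_eq with hlt | heq
        · rw [Real.sign_of_neg hlt]; norm_num
        · simp [heq]
      calc Real.sign w * |w| ^ (1 / ζ) ≤ 0 :=
            mul_nonpos_of_nonpos_of_nonneg hs (Real.rpow_nonneg (abs_nonneg _) _)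
        _ ≤ z ^ (1 + γ) := hzp
    · rw [Real.sign_of_pos h, one_mul, abs_of_pos h]
      -- Bernoulli gives w ≤ (z^ζ)^(1+γ)
      have hb : w ≤ (z ^ ζ) ^ (1 + γ) := by
        have := one_add_mul_self_le_rpow_one_add (s := z ^ ζ - 1)
          (by linarith [Real.rpow_nonneg hz ζ]) (p := 1 + γ) (by linarith)
        have h2 : (1 : ℝ) + (z ^ ζ - 1) = z ^ ζ := by ring
        rw [h2] at this
        calc w = 1 + (1 + γ) * (z ^ ζ - 1) := by rw [hw]; ring
          _ ≤ (z ^ ζ) ^ (1 + γ) := this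
      calc w ^ (1 / ζ) ≤ ((z ^ ζ) ^ (1 + γ)) ^ (1 / ζ) :=
            Real.rpow_le_rpow h.le hb (by positivity)
        _ = z ^ (1 + γ) := by
            rw [← Real.rpow_mul hz, ← Real.rpow_mul hz]
            congr 1
            field_simp
end

section
/- Let γ > 0 and ζ > 0, define η(z) = −sign((1+γ)z^ζ − γ)·|(1+γ)z^ζ − γ|^{1/ζ} (with sign(0) = 0), define the strictly increasing function τ : ℝ → ℝ by τ(z) = (sign(z)|z|^ζ + 1)/ζ, and let φ_ζ(z) = (z^ζ − 1)/ζ. Then for all g, f ∈ F_γ with ⟨f^{1+γ}⟩ > 0, the Hölder score S_{η,γ}(g,f) = η(⟨g f^γ⟩/⟨f^{1+γ}⟩)·⟨f^{1+γ}⟩ satisfies τ(S_{η,γ}(g,f)) = γ·φ_ζ(⟨f^{1+γ}⟩) − (1+γ)·φ_ζ(⟨g f^γ⟩); that is, the Hölder score with this η is equivalent (via the strictly increasing function τ) to the JHHB score. -/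
open MeasureTheory

/-- The strictly increasing function giving the equivalence of scoring rules. -/
noncomputable def tauJHHB (ζ z : ℝ) : ℝ := (Real.sign z * |z| ^ ζ + 1) / ζ

/-- The generating function `φ_ζ(z) = (z^ζ - 1)/ζ` of the JHHB divergence family. -/
noncomputable def phiJHHB (ζ z : ℝ) : ℝ := (z ^ ζ - 1) / ζ

lemma sign_abs_rpow_strictMono {ζ : ℝ} (hζ : 0 < ζ) :
    StrictMono (fun z : ℝ => Real.sign z * |z| ^ ζ) := by
  intro a b hab
  rcases lt_trichotomy a 0 with ha | ha | ha
  · rcases lt_trichotomy b 0 with hb | hb | hb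
    · simp only [Real.sign_of_neg ha, Real.sign_of_neg hb, abs_of_neg ha, abs_of_neg hb]
      have : (-b) ^ ζ < (-a) ^ ζ :=
        Real.rpow_lt_rpow (by linarith) (by linarith) hζ
      nlinarith
    · subst hb
      simp only [Real.sign_zero, Real.sign_of_neg ha, abs_of_neg ha, zero_mul]
      nlinarith [Real.rpow_pos_of_pos (show (0:ℝ) < -a by linarith) ζ]
    · simp only [Real.sign_of_neg ha, Real.sign_of_pos hb, abs_of_neg ha, abs_of_pos hb]
      nlinarith [Real.rpow_pos_of_pos (show (0:ℝ) < -a by linarith) ζ,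
        Real.rpow_pos_of_pos hb ζ]
  · subst ha
    have hb : 0 < b := hab
    simp only [Real.sign_zero, Real.sign_of_pos hb, abs_of_pos hb, zero_mul]
    nlinarith [Real.rpow_pos_of_pos hb ζ]
  · have hb : 0 < b := lt_trans ha hab
    simp only [Real.sign_of_pos ha, Real.sign_of_pos hb, abs_of_pos ha, abs_of_pos hb]
    nlinarith [Real.rpow_lt_rpow ha.le hab hζ]

lemma tauJHHB_strictMono {ζ : ℝ} (hζ : 0 < ζ) : StrictMono (tauJHHB ζ) := by
  intro a b hab
  have h := sign_abs_rpow_strictMono hζ hab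
  simp only [tauJHHB]
  gcongr

lemma key_alg (γ ζ A B : ℝ) (hζ : 0 < ζ) (hA : 0 ≤ A) (hB : 0 < B) :
    tauJHHB ζ (etaJHHB γ ζ (A / B) * B) = γ * phiJHHB ζ B - (1 + γ) * phiJHHB ζ A := by
  set w : ℝ := (1 + γ) * (A / B) ^ ζ - γ with hw
  have habs : (|w| ^ (1 / ζ)) ^ ζ = |w| := by
    rw [← Real.rpow_mul (abs_nonneg w), one_div_mul_cancel hζ.ne', Real.rpow_one]
  have hBζ : (0:ℝ) < B ^ ζ := Real.rpow_pos_of_pos hB ζ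
  have key : Real.sign (etaJHHB γ ζ (A / B) * B) * |etaJHHB γ ζ (A / B) * B| ^ ζ
      = -w * B ^ ζ := by
    rcases lt_trichotomy w 0 with hw0 | hw0 | hw0
    · have hpos : 0 < |w| ^ (1 / ζ) := Real.rpow_pos_of_pos (abs_pos.mpr hw0.ne) _
      have heta : etaJHHB γ ζ (A / B) = |w| ^ (1 / ζ) := by
        simp [etaJHHB, ← hw, Real.sign_of_neg hw0]
      rw [heta]
      have hS : 0 < |w| ^ (1 / ζ) * B := mul_pos hpos hB
      rw [Real.sign_of_pos hS, abs_of_pos hS, Real.mul_rpow hpos.le hB.le, habs,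
        abs_of_neg hw0]
      ring
    · have heta : etaJHHB γ ζ (A / B) = 0 := by
        simp [etaJHHB, ← hw, hw0]
      rw [heta, hw0]
      simp [Real.rpow_natCast]
    · have hpos : 0 < |w| ^ (1 / ζ) := Real.rpow_pos_of_pos (abs_pos.mpr hw0.ne') _
      have heta : etaJHHB γ ζ (A / B) = -(|w| ^ (1 / ζ)) := by
        simp [etaJHHB, ← hw, Real.sign_of_pos hw0]
      rw [heta]
      have hS : -(|w| ^ (1 / ζ)) * B < 0 := by nlinarith
      rw [Real.sign_of_neg hS, abs_of_neg hS]
      have : -(-(|w| ^ (1 / ζ)) * B) = |w| ^ (1 / ζ) * B := by ring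
      rw [this, Real.mul_rpow hpos.le hB.le, habs, abs_of_pos hw0]
      ring
  have hwB : w * B ^ ζ = (1 + γ) * A ^ ζ - γ * B ^ ζ := by
    rw [hw, Real.div_rpow hA hB.le]
    field_simp
  rw [tauJHHB, key, phiJHHB, phiJHHB]
  have : -w * B ^ ζ = γ * B ^ ζ - (1 + γ) * A ^ ζ := by nlinarith [hwB]
  rw [this]
  field_simp
  ring

theorem holder_score_equiv_jhhb_score {X : Type*} [MeasurableSpace X] (ν : Measure X)
    (γ ζ : ℝ) (hγ : 0 < γ) (hζ : 0 < ζ) :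
    StrictMono (tauJHHB ζ) ∧
    ∀ g f : X → NNReal, MemF ν γ g → MemF ν γ f →
      (∫⁻ x, (f x : ENNReal) ^ (1 + γ) ∂ν) ≠ 0 →
      tauJHHB ζ
        (etaJHHB γ ζ
            ((∫⁻ x, (g x : ENNReal) * (f x : ENNReal) ^ γ ∂ν).toReal /
              (∫⁻ x, (f x : ENNReal) ^ (1 + γ) ∂ν).toReal) *
          (∫⁻ x, (f x : ENNReal) ^ (1 + γ) ∂ν).toReal)
        = γ * phiJHHB ζ (∫⁻ x, (f x : ENNReal) ^ (1 + γ) ∂ν).toReal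
          - (1 + γ) * phiJHHB ζ (∫⁻ x, (g x : ENNReal) * (f x : ENNReal) ^ γ ∂ν).toReal := by
  refine ⟨tauJHHB_strictMono hζ, fun g f hg hf hf0 => ?_⟩
  exact key_alg γ ζ _ _ hζ ENNReal.toReal_nonneg
    (ENNReal.toReal_pos hf0 hf.2.2)
end

section
/- Let γ > 0 and let ξ : (0,∞) → (0,∞) be such that ψ(z) = log ξ(e^z) is strictly increasing and convex on ℝ. Then for all g, f ∈ F_γ with ⟨g f^γ⟩ > 0: ξ(⟨g f^γ⟩)^{1+γ} ≤ ξ(⟨g^{1+γ}⟩) · ξ(⟨f^{1+γ}⟩)^γ. -/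
open MeasureTheory

theorem xi_holder_inequality {X : Type*} [MeasurableSpace X] (ν : Measure X)
    (γ : ℝ) (hγ : 0 < γ) (ξ : ℝ → ℝ) (hξpos : ∀ z : ℝ, 0 < z → 0 < ξ z)
    (hψm : StrictMono (fun z : ℝ => Real.log (ξ (Real.exp z))))
    (hψc : ConvexOn ℝ Set.univ (fun z : ℝ => Real.log (ξ (Real.exp z))))
    (g f : X → NNReal) (hg : MemF ν γ g) (hf : MemF ν γ f)
    (hgf : (∫⁻ x, (g x : ENNReal) * (f x : ENNReal) ^ γ ∂ν) ≠ 0) :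
    ξ ((∫⁻ x, (g x : ENNReal) * (f x : ENNReal) ^ γ ∂ν).toReal) ^ (1 + γ)
      ≤ ξ ((∫⁻ x, (g x : ENNReal) ^ (1 + γ) ∂ν).toReal) *
        ξ ((∫⁻ x, (f x : ENNReal) ^ (1 + γ) ∂ν).toReal) ^ γ := by
  obtain ⟨hgm, hgnz, hgtop⟩ := hg
  obtain ⟨hfm, hfnz, hftop⟩ := hf
  have hp1 : (1:ℝ) < 1 + γ := by linarith
  have hpq : (1 + γ).HolderConjugate ((1 + γ) / γ) := by
    refine Real.holderConjugate_iff.mpr ⟨?_, ?_⟩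
    · exact hp1
    · field_simp
  set ψ : ℝ → ℝ := fun z : ℝ => Real.log (ξ (Real.exp z)) with hψ
  set I := ∫⁻ x, (g x : ENNReal) * (f x : ENNReal) ^ γ ∂ν with hI
  set A := ∫⁻ x, (g x : ENNReal) ^ (1 + γ) ∂ν with hA
  set B := ∫⁻ x, (f x : ENNReal) ^ (1 + γ) ∂ν with hB
  have hgm' : Measurable fun x => (g x : ENNReal) :=
    hgm.coe_nnreal_ennreal
  have hfm' : Measurable fun x => (f x : ENNReal) ^ γ :=
    hfm.coe_nnreal_ennreal.pow_const _
  -- Hölder's inequality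
  have holder : I ≤ A ^ (1 / (1 + γ)) * B ^ (1 / ((1 + γ) / γ)) := by
    have := ENNReal.lintegral_mul_le_Lp_mul_Lq ν hpq hgm'.aemeasurable hfm'.aemeasurable
    simp only [Pi.mul_apply] at this
    calc I ≤ (∫⁻ x, (g x : ENNReal) ^ (1 + γ) ∂ν) ^ (1 / (1 + γ))
        * (∫⁻ x, ((f x : ENNReal) ^ γ) ^ ((1 + γ) / γ) ∂ν) ^ (1 / ((1 + γ) / γ)) := this
      _ = A ^ (1 / (1 + γ)) * B ^ (1 / ((1 + γ) / γ)) := by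
        congr 2
        refine lintegral_congr fun x => ?_
        rw [← ENNReal.rpow_mul]
        congr 1
        field_simp
  -- nonvanishing / finiteness
  have hA0 : A ≠ 0 := by
    intro h
    apply hgnz
    rw [hA, lintegral_eq_zero_iff (hgm'.pow_const _)] at h
    filter_upwards [h] with x hx
    simp only [Pi.zero_apply, ENNReal.rpow_eq_zero_iff] at hx
    rcases hx with ⟨h1, _⟩ | ⟨h1, h2⟩
    · simpa using h1
    · exact absurd h1 (ENNReal.coe_ne_top)
  have hB0 : B ≠ 0 := by
    intro h
    apply hfnz
    rw [hB, lintegral_eq_zero_iff (hfm.coe_nnreal_ennreal.pow_const _)] at h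
    filter_upwards [h] with x hx
    simp only [Pi.zero_apply, ENNReal.rpow_eq_zero_iff] at hx
    rcases hx with ⟨h1, _⟩ | ⟨h1, h2⟩
    · simpa using h1
    · exact absurd h1 (ENNReal.coe_ne_top)
  have hItop : I ≠ ⊤ := by
    intro h
    rw [h] at holder
    have hAfin : A ^ (1 / (1 + γ)) ≠ ⊤ := ENNReal.rpow_ne_top_of_nonneg (by positivity) hgtop
    have hBfin : B ^ (1 / ((1 + γ) / γ)) ≠ ⊤ := ENNReal.rpow_ne_top_of_nonneg (by positivity) hftop
    exact (ENNReal.mul_ne_top hAfin hBfin) (top_le_iff.mp holder)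
  have hIpos : 0 < I.toReal := ENNReal.toReal_pos hgf hItop
  have hApos : 0 < A.toReal := ENNReal.toReal_pos hA0 hgtop
  have hBpos : 0 < B.toReal := ENNReal.toReal_pos hB0 hftop
  -- real form of Hölder
  have holderR : I.toReal ≤ A.toReal ^ (1 / (1 + γ)) * B.toReal ^ (1 / ((1 + γ) / γ)) := by
    have h1 : (A ^ (1 / (1 + γ)) * B ^ (1 / ((1 + γ) / γ))).toReal
        = A.toReal ^ (1 / (1 + γ)) * B.toReal ^ (1 / ((1 + γ) / γ)) := by
      rw [ENNReal.toReal_mul, ENNReal.toReal_rpow, ENNReal.toReal_rpow]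
    rw [← h1]
    exact ENNReal.toReal_mono (ENNReal.mul_ne_top
      (ENNReal.rpow_ne_top_of_nonneg (by positivity) hgtop)
      (ENNReal.rpow_ne_top_of_nonneg (by positivity) hftop)) holder
  set a : ℝ := 1 / (1 + γ) with ha
  set b : ℝ := γ / (1 + γ) with hb
  have hab : a + b = 1 := by rw [ha, hb]; field_simp
  have hb' : (1 : ℝ) / ((1 + γ) / γ) = b := by rw [hb]; field_simp
  have ha0 : 0 < a := by positivity
  have hb0 : 0 < b := by positivity
  -- log of Hölder
  have hlog : Real.log I.toReal ≤ a * Real.log A.toReal + b * Real.log B.toReal := by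
    calc Real.log I.toReal
        ≤ Real.log (A.toReal ^ a * B.toReal ^ b) := by
          apply Real.log_le_log hIpos
          rw [← hb']; exact holderR
      _ = a * Real.log A.toReal + b * Real.log B.toReal := by
          rw [Real.log_mul (by positivity) (by positivity),
            Real.log_rpow hApos, Real.log_rpow hBpos]
  have hψmono : Monotone ψ := hψm.monotone
  have key : ψ (Real.log I.toReal) ≤ a * ψ (Real.log A.toReal) + b * ψ (Real.log B.toReal) :=
    le_trans (hψmono hlog)
      (hψc.2 (Set.mem_univ _) (Set.mem_univ _) ha0.le hb0.le hab)
  have hψI : ψ (Real.log I.toReal) = Real.log (ξ I.toReal) := by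
    rw [hψ]; simp [Real.exp_log hIpos]
  have hψA : ψ (Real.log A.toReal) = Real.log (ξ A.toReal) := by
    rw [hψ]; simp [Real.exp_log hApos]
  have hψB : ψ (Real.log B.toReal) = Real.log (ξ B.toReal) := by
    rw [hψ]; simp [Real.exp_log hBpos]
  rw [hψI, hψA, hψB] at key
  have hξI : 0 < ξ I.toReal := hξpos _ hIpos
  have hξA : 0 < ξ A.toReal := hξpos _ hApos
  have hξB : 0 < ξ B.toReal := hξpos _ hBpos
  -- multiply by 1+γ and exponentiate
  have key2 : (1 + γ) * Real.log (ξ I.toReal) ≤ Real.log (ξ A.toReal) + γ * Real.log (ξ B.toReal) := by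
    have h := mul_le_mul_of_nonneg_left key (by linarith : (0:ℝ) ≤ 1 + γ)
    have e1 : (1 + γ) * a = 1 := by rw [ha]; field_simp
    have e2 : (1 + γ) * b = γ := by rw [hb]; field_simp
    calc (1 + γ) * Real.log (ξ I.toReal)
        ≤ (1 + γ) * (a * Real.log (ξ A.toReal) + b * Real.log (ξ B.toReal)) := h
      _ = Real.log (ξ A.toReal) + γ * Real.log (ξ B.toReal) := by
          rw [mul_add, ← mul_assoc, ← mul_assoc, e1, e2, one_mul]
  calc ξ I.toReal ^ (1 + γ)
      = Real.exp ((1 + γ) * Real.log (ξ I.toReal)) := by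
        rw [Real.rpow_def_of_pos hξI, mul_comm]
    _ ≤ Real.exp (Real.log (ξ A.toReal) + γ * Real.log (ξ B.toReal)) :=
        Real.exp_le_exp.mpr key2
    _ = ξ A.toReal * ξ B.toReal ^ γ := by
        rw [Real.exp_add, Real.exp_log hξA, Real.rpow_def_of_pos hξB, mul_comm γ]
end

section
/- Let γ > 0, let η : [0,∞) → ℝ satisfy η(1) = −1 and η(z) ≥ −z^{1+γ} for all z ≥ 0, and let ξ : (0,∞) → (0,∞) be such that ψ(z) = log ξ(e^z) is strictly increasing and convex on ℝ. Then for all g, f ∈ F_γ with ⟨g f^γ⟩ > 0, the ξ-Hölder divergence is nonnegative: D_{η,ξ,γ}(g,f) = η(ξ(⟨g f^γ⟩)/ξ(⟨f^{1+γ}⟩)) · ξ(⟨f^{1+γ}⟩) + ξ(⟨g^{1+γ}⟩) ≥ 0. -/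
open MeasureTheory

theorem xi_holder_divergence_nonneg {X : Type*} [MeasurableSpace X] (ν : Measure X)
    (γ : ℝ) (hγ : 0 < γ)
    (η : ℝ → ℝ) (hη1 : η 1 = -1) (hη : ∀ z : ℝ, 0 ≤ z → η z ≥ -z ^ (1 + γ))
    (ξ : ℝ → ℝ) (hξpos : ∀ z : ℝ, 0 < z → 0 < ξ z)
    (hψm : StrictMono (fun z : ℝ => Real.log (ξ (Real.exp z))))
    (hψc : ConvexOn ℝ Set.univ (fun z : ℝ => Real.log (ξ (Real.exp z))))
    (g f : X → NNReal) (hg : MemF ν γ g) (hf : MemF ν γ f)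
    (hgf : (∫⁻ x, (g x : ENNReal) * (f x : ENNReal) ^ γ ∂ν) ≠ 0) :
    0 ≤ η (ξ ((∫⁻ x, (g x : ENNReal) * (f x : ENNReal) ^ γ ∂ν).toReal) /
            ξ ((∫⁻ x, (f x : ENNReal) ^ (1 + γ) ∂ν).toReal)) *
          ξ ((∫⁻ x, (f x : ENNReal) ^ (1 + γ) ∂ν).toReal)
        + ξ ((∫⁻ x, (g x : ENNReal) ^ (1 + γ) ∂ν).toReal) := by
  obtain ⟨hgm, hg0, hgfin⟩ := hg
  obtain ⟨hfm, hf0, hffin⟩ := hf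
  set A := ∫⁻ x, (g x : ENNReal) * (f x : ENNReal) ^ γ ∂ν with hA
  set B := ∫⁻ x, (f x : ENNReal) ^ (1 + γ) ∂ν with hB
  set C := ∫⁻ x, (g x : ENNReal) ^ (1 + γ) ∂ν with hC
  have h1γ : (0:ℝ) < 1 + γ := by linarith
  -- B ≠ 0, C ≠ 0
  have hB0 : B ≠ 0 := by
    intro h
    apply hf0
    have := (lintegral_eq_zero_iff (by measurability : Measurable fun x => ((f x : ENNReal)) ^ (1+γ))).mp h
    filter_upwards [this] with x hx
    have : (f x : ENNReal) ^ (1+γ) = 0 := hx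
    have := ENNReal.rpow_eq_zero_iff.mp this
    rcases this with ⟨h1, _⟩ | ⟨h1, h2⟩
    · exact_mod_cast ENNReal.coe_eq_zero.mp h1
    · exact absurd h1 (by simp)
  have hC0 : C ≠ 0 := by
    intro h
    apply hg0
    have := (lintegral_eq_zero_iff (by measurability : Measurable fun x => ((g x : ENNReal)) ^ (1+γ))).mp h
    filter_upwards [this] with x hx
    have : (g x : ENNReal) ^ (1+γ) = 0 := hx
    have := ENNReal.rpow_eq_zero_iff.mp this
    rcases this with ⟨h1, _⟩ | ⟨h1, h2⟩
    · exact_mod_cast ENNReal.coe_eq_zero.mp h1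
    · exact absurd h1 (by simp)
  -- Hölder
  have hpq : Real.HolderConjugate (1+γ) ((1+γ)/γ) := by
    rw [Real.holderConjugate_iff]
    constructor
    · linarith
    · field_simp
  have hHold : A ≤ C ^ (1/(1+γ)) * B ^ (γ/(1+γ)) := by
    have := ENNReal.lintegral_mul_le_Lp_mul_Lq ν hpq
      (f := fun x => (g x : ENNReal)) (g := fun x => (f x : ENNReal) ^ γ)
      (hgm.coe_nnreal_ennreal.aemeasurable)
      ((hfm.coe_nnreal_ennreal.pow_const γ).aemeasurable)
    simp only [Pi.mul_apply] at this
    calc A ≤ (∫⁻ x, (g x : ENNReal) ^ (1+γ) ∂ν) ^ (1/(1+γ)) *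
        (∫⁻ x, ((f x : ENNReal) ^ γ) ^ ((1+γ)/γ) ∂ν) ^ (1/((1+γ)/γ)) := this
      _ = C ^ (1/(1+γ)) * B ^ (γ/(1+γ)) := by
          congr 1
          · rw [one_div ((1+γ)/γ), inv_div]
            congr 1
            · refine lintegral_congr fun x => ?_
              rw [← ENNReal.rpow_mul]
              congr 1
              field_simp
  have hAfin : A ≠ ⊤ := by
    intro h
    rw [h] at hHold
    exact absurd (eq_top_iff.mpr hHold)
      (ENNReal.mul_ne_top (ENNReal.rpow_ne_top_of_nonneg (by positivity) hgfin)
        (ENNReal.rpow_ne_top_of_nonneg (by positivity) hffin))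
  have ha : 0 < A.toReal := ENNReal.toReal_pos hgf hAfin
  have hb : 0 < B.toReal := ENNReal.toReal_pos hB0 hffin
  have hc : 0 < C.toReal := ENNReal.toReal_pos hC0 hgfin
  set a := A.toReal
  set b := B.toReal
  set c := C.toReal
  have hRHold : a ≤ c ^ (1/(1+γ)) * b ^ (γ/(1+γ)) := by
    have h1 := ENNReal.toReal_mono (ENNReal.mul_ne_top
      (ENNReal.rpow_ne_top_of_nonneg (by positivity) hgfin)
      (ENNReal.rpow_ne_top_of_nonneg (by positivity) hffin)) hHold
    rwa [ENNReal.toReal_mul, ← ENNReal.toReal_rpow, ← ENNReal.toReal_rpow] at h1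
  set α := 1/(1+γ)
  set β := γ/(1+γ)
  have hα : 0 < α := by positivity
  have hβ : 0 < β := by positivity
  have hαβ : α + β = 1 := by simp only [α, β]; field_simp
  have hloga : Real.log a ≤ α * Real.log c + β * Real.log b := by
    calc Real.log a ≤ Real.log (c ^ α * b ^ β) := Real.log_le_log ha hRHold
      _ = α * Real.log c + β * Real.log b := by
        rw [Real.log_mul (by positivity) (by positivity), Real.log_rpow hc, Real.log_rpow hb]
  set ψ := fun z : ℝ => Real.log (ξ (Real.exp z)) with hψ
  have hkey : ψ (Real.log a) ≤ α * ψ (Real.log c) + β * ψ (Real.log b) := by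
    calc ψ (Real.log a) ≤ ψ (α * Real.log c + β * Real.log b) := hψm.monotone hloga
      _ ≤ α * ψ (Real.log c) + β * ψ (Real.log b) :=
        hψc.2 (Set.mem_univ _) (Set.mem_univ _) hα.le hβ.le hαβ
  have hψa : ψ (Real.log a) = Real.log (ξ a) := by simp only [hψ]; rw [Real.exp_log ha]
  have hψb : ψ (Real.log b) = Real.log (ξ b) := by simp only [hψ]; rw [Real.exp_log hb]
  have hψc' : ψ (Real.log c) = Real.log (ξ c) := by simp only [hψ]; rw [Real.exp_log hc]
  rw [hψa, hψb, hψc'] at hkey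
  have hξa : 0 < ξ a := hξpos a ha
  have hξb : 0 < ξ b := hξpos b hb
  have hξc : 0 < ξ c := hξpos c hc
  -- ξ a ^ (1+γ) ≤ ξ c * ξ b ^ γ
  have hmain : ξ a ^ (1+γ) ≤ ξ c * ξ b ^ γ := by
    have h2 : (1+γ) * Real.log (ξ a) ≤ Real.log (ξ c) + γ * Real.log (ξ b) := by
      have := mul_le_mul_of_nonneg_left hkey (le_of_lt h1γ)
      calc (1+γ) * Real.log (ξ a) ≤ (1+γ) * (α * Real.log (ξ c) + β * Real.log (ξ b)) := this
        _ = Real.log (ξ c) + γ * Real.log (ξ b) := by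
          simp only [α, β]; field_simp; try ring
    calc ξ a ^ (1+γ) = Real.exp ((1+γ) * Real.log (ξ a)) := by
          rw [Real.rpow_def_of_pos hξa, mul_comm]
      _ ≤ Real.exp (Real.log (ξ c) + γ * Real.log (ξ b)) := Real.exp_le_exp.mpr h2
      _ = ξ c * ξ b ^ γ := by
          rw [Real.exp_add, Real.exp_log hξc, mul_comm γ, ← Real.rpow_def_of_pos hξb]
  -- finish
  have hηq := hη (ξ a / ξ b) (by positivity)
  have hdiv : (ξ a / ξ b) ^ (1+γ) * ξ b = ξ a ^ (1+γ) / ξ b ^ γ := by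
    rw [Real.div_rpow hξa.le hξb.le]
    rw [div_mul_eq_mul_div, div_eq_div_iff (by positivity) (by positivity)]
    rw [Real.rpow_add hξb 1 γ, Real.rpow_one, mul_assoc]
  have hstep : ξ a ^ (1+γ) / ξ b ^ γ ≤ ξ c := by
    rw [div_le_iff₀ (by positivity)]
    linarith [hmain]
  have h3 : η (ξ a / ξ b) * ξ b ≥ -(ξ a ^ (1+γ) / ξ b ^ γ) := by
    have h4 := mul_le_mul_of_nonneg_right hηq hξb.le
    rwa [neg_mul, hdiv] at h4
  linarith
end

section
/- Let u, v : ℝ → ℝ be strictly increasing and continuous, with the range of v contained in the range of u. Let U, V : [0,∞) → ℝ be functions with V non-constant. Suppose that for every simple (finitely-valued) measurable function g : [0,1] → [0,∞) one has u(∫₀¹ g(x)U(g(x)) dx) = v(∫₀¹ V(g(x)) dx), where the integrals are with respect to Lebesgue measure on [0,1]. Then there exist constants a ≠ 0 and b ∈ ℝ such that u(a·y + b) = v(y) for every y in the convex hull of the range of V, and z·U(z) = a·V(z) + b for all z ≥ 0. -/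
open MeasureTheory

lemma int3_aux (t s c₁ c₂ c₃ : ℝ) (h0 : 0 ≤ t) (hts : t ≤ s) (hs1 : s ≤ 1) :
    ∫ x in Set.Icc (0:ℝ) 1, (if x ≤ t then c₁ else if x ≤ s then c₂ else c₃) ∂volume
      = t * c₁ + (s - t) * c₂ + (1 - s) * c₃ := by
  have key : ∀ x : ℝ, (if x ≤ t then c₁ else if x ≤ s then c₂ else c₃)
      = (Set.Iic t).indicator (fun _ => c₁ - c₂) x
        + ((Set.Iic s).indicator (fun _ => c₂ - c₃) x + c₃) := by
    intro x
    by_cases h1 : x ≤ t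
    · have h2 : x ≤ s := h1.trans hts
      simp [h1, h2, Set.indicator_of_mem, Set.mem_Iic]
    · by_cases h2 : x ≤ s <;> simp [h1, h2, Set.mem_Iic]
  simp only [key]
  have hi1 : IntegrableOn ((Set.Iic t).indicator (fun _ => c₁ - c₂)) (Set.Icc (0:ℝ) 1) volume := by
    exact ((integrableOn_const_iff).mpr (Or.inr (by simp [Real.volume_Icc]))).indicator measurableSet_Iic
  have hi2 : IntegrableOn ((Set.Iic s).indicator (fun _ => c₂ - c₃)) (Set.Icc (0:ℝ) 1) volume := by
    exact ((integrableOn_const_iff).mpr (Or.inr (by simp [Real.volume_Icc]))).indicator measurableSet_Iic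
  have hi3 : IntegrableOn (fun _ : ℝ => c₃) (Set.Icc (0:ℝ) 1) volume :=
    (integrableOn_const_iff).mpr (Or.inr (by simp [Real.volume_Icc]))
  rw [integral_add hi1 (show IntegrableOn (fun x => (Set.Iic s).indicator (fun _ => c₂ - c₃) x + c₃) (Set.Icc (0:ℝ) 1) volume from hi2.add hi3), integral_add hi2 hi3]
  rw [setIntegral_indicator measurableSet_Iic, setIntegral_indicator measurableSet_Iic]
  have e1 : Set.Icc (0:ℝ) 1 ∩ Set.Iic t = Set.Icc 0 t := by
    ext x
    simp only [Set.mem_inter_iff, Set.mem_Icc, Set.mem_Iic]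
    exact ⟨fun h => ⟨h.1.1, h.2⟩, fun h => ⟨⟨h.1, by linarith [h.2]⟩, h.2⟩⟩
  have e2 : Set.Icc (0:ℝ) 1 ∩ Set.Iic s = Set.Icc 0 s := by
    ext x
    simp only [Set.mem_inter_iff, Set.mem_Icc, Set.mem_Iic]
    exact ⟨fun h => ⟨h.1.1, h.2⟩, fun h => ⟨⟨h.1, by linarith [h.2]⟩, h.2⟩⟩
  rw [e1, e2]
  rw [setIntegral_const, setIntegral_const, setIntegral_const]
  simp [Real.volume_Icc, ENNReal.toReal_ofReal, h0, (le_trans h0 hts : (0:ℝ) ≤ s), smul_eq_mul]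
  ring

theorem inner_outer_relation_of_composite_scoring_rule
    (u v U V : ℝ → ℝ) (hu : StrictMono u) (hv : StrictMono v)
    (huc : Continuous u) (hvc : Continuous v)
    (hrange : Set.range v ⊆ Set.range u)
    (hVnc : ∃ z₁ : ℝ, 0 ≤ z₁ ∧ ∃ z₂ : ℝ, 0 ≤ z₂ ∧ V z₁ ≠ V z₂)
    (heq : ∀ g : ℝ → ℝ, Measurable g → (Set.range g).Finite → (∀ x, 0 ≤ g x) →
      u (∫ x in Set.Icc (0 : ℝ) 1, g x * U (g x) ∂volume)
        = v (∫ x in Set.Icc (0 : ℝ) 1, V (g x) ∂volume)) :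
    ∃ a : ℝ, a ≠ 0 ∧ ∃ b : ℝ,
      (∀ y ∈ convexHull ℝ (V '' Set.Ici (0 : ℝ)), u (a * y + b) = v y) ∧
      ∀ z : ℝ, 0 ≤ z → z * U z = a * V z + b := by
  obtain ⟨z₁, hz₁, z₂, hz₂, hV12⟩ := hVnc
  set φ : ℝ → ℝ := fun z => z * U z with hφ
  -- general key identity from the scoring hypothesis
  have key : ∀ z zm zp t s : ℝ, 0 ≤ z → 0 ≤ zm → 0 ≤ zp → 0 ≤ t → t ≤ s → s ≤ 1 →
      u (t * φ z + (s - t) * φ zm + (1 - s) * φ zp)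
        = v (t * V z + (s - t) * V zm + (1 - s) * V zp) := by
    intro z zm zp t s hz hzm hzp h0 hts hs1
    have hg : Measurable (fun x : ℝ => if x ≤ t then z else if x ≤ s then zm else zp) :=
      Measurable.ite measurableSet_Iic measurable_const
        (Measurable.ite measurableSet_Iic measurable_const measurable_const)
    have hfin : (Set.range (fun x : ℝ => if x ≤ t then z else if x ≤ s then zm else zp)).Finite := by
      apply Set.Finite.subset (((Set.finite_singleton zp).insert zm).insert z)
      rintro _ ⟨x, rfl⟩
      by_cases h1 : x ≤ t <;> by_cases h2 : x ≤ s <;> simp [h1, h2]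
    have hpos : ∀ x : ℝ, 0 ≤ (fun x : ℝ => if x ≤ t then z else if x ≤ s then zm else zp) x := by
      intro x; by_cases h1 : x ≤ t <;> by_cases h2 : x ≤ s <;> simp [h1, h2, hz, hzm, hzp]
    have h := heq _ hg hfin hpos
    have hA : (∫ x in Set.Icc (0:ℝ) 1,
        (if x ≤ t then z else if x ≤ s then zm else zp)
          * U (if x ≤ t then z else if x ≤ s then zm else zp) ∂volume)
        = t * φ z + (s - t) * φ zm + (1 - s) * φ zp := by
      have := int3_aux t s (φ z) (φ zm) (φ zp) h0 hts hs1
      rw [← this]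
      apply setIntegral_congr_fun measurableSet_Icc
      intro x _
      by_cases h1 : x ≤ t <;> by_cases h2 : x ≤ s <;> simp [h1, h2, hφ]
    have hB : (∫ x in Set.Icc (0:ℝ) 1,
        V (if x ≤ t then z else if x ≤ s then zm else zp) ∂volume)
        = t * V z + (s - t) * V zm + (1 - s) * V zp := by
      have := int3_aux t s (V z) (V zm) (V zp) h0 hts hs1
      rw [← this]
      apply setIntegral_congr_fun measurableSet_Icc
      intro x _
      by_cases h1 : x ≤ t <;> by_cases h2 : x ≤ s <;> simp [h1, h2]
    beta_reduce at h
    rw [hA, hB] at h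
    exact h
  -- two-valued specialization
  have key2 : ∀ z z' t : ℝ, 0 ≤ z → 0 ≤ z' → 0 ≤ t → t ≤ 1 →
      u (t * φ z + (1 - t) * φ z') = v (t * V z + (1 - t) * V z') := by
    intro z z' t hz hz' h0 h1
    have h := key z z' z' t t hz hz' hz' h0 le_rfl h1
    convert h using 2 <;> ring
  -- three-valued specialization: mix z with the average of z₁, z₂
  have key3 : ∀ z t : ℝ, 0 ≤ z → 0 ≤ t → t ≤ 1 →
      u (t * φ z + (1 - t) / 2 * φ z₁ + (1 - t) / 2 * φ z₂)
        = v (t * V z + (1 - t) / 2 * V z₁ + (1 - t) / 2 * V z₂) := by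
    intro z t hz h0 h1
    have h := key z z₁ z₂ t ((1 + t) / 2) hz hz₁ hz₂ h0 (by linarith) (by linarith)
    convert h using 2 <;> ring
  -- constants
  have econst : ∀ z : ℝ, 0 ≤ z → u (φ z) = v (V z) := by
    intro z hz
    have h := key2 z z 1 hz hz zero_le_one le_rfl
    simpa using h
  have hx12 : φ z₁ ≠ φ z₂ := by
    intro h
    apply hV12
    apply hv.injective
    rw [← econst z₁ hz₁, ← econst z₂ hz₂, h]
  have hVd : V z₁ - V z₂ ≠ 0 := sub_ne_zero.2 hV12
  set a : ℝ := (φ z₁ - φ z₂) / (V z₁ - V z₂) with ha_def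
  set b : ℝ := φ z₂ - a * V z₂ with hb_def
  have ha : a ≠ 0 := div_ne_zero (sub_ne_zero.2 hx12) hVd
  have haff : a * (V z₁ - V z₂) = φ z₁ - φ z₂ := div_mul_cancel₀ _ hVd
  have h2 : a * V z₂ + b = φ z₂ := by rw [hb_def]; ring
  have h1 : a * V z₁ + b = φ z₁ := by
    have : a * V z₁ + b = a * (V z₁ - V z₂) + (a * V z₂ + b) := by ring
    rw [this, haff, h2]; ring
  -- on the segment near the midpoint of V z₁, V z₂ the affine relation holds
  have hmid : ∀ w : ℝ, |w - (V z₁ + V z₂) / 2| ≤ |V z₁ - V z₂| / 2 →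
      u (a * w + b) = v w := by
    intro w hw
    set s : ℝ := (w - V z₂) / (V z₁ - V z₂) with hs_def
    have hsmul : s * (V z₁ - V z₂) = w - V z₂ := div_mul_cancel₀ _ hVd
    have hrepr : s * V z₁ + (1 - s) * V z₂ = w := by nlinarith [hsmul]
    have hshalf : |s - 1 / 2| ≤ 1 / 2 := by
      have e : s - 1 / 2 = (w - (V z₁ + V z₂) / 2) / (V z₁ - V z₂) := by
        rw [hs_def]; field_simp; ring
      rw [e, abs_div]
      rw [div_le_iff₀ (abs_pos.2 hVd)]
      linarith [hw]
    have hs0 : 0 ≤ s := by have := abs_le.1 hshalf; linarith [this.1]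
    have hs1 : s ≤ 1 := by have := abs_le.1 hshalf; linarith [(abs_le.1 hshalf).2]
    have h := key2 z₁ z₂ s hz₁ hz₂ hs0 hs1
    rw [hrepr] at h
    rw [show s * φ z₁ + (1 - s) * φ z₂ = a * w + b by
      rw [← h1, ← h2, ← hrepr]; ring] at h
    exact h
  -- main pointwise relation
  have hmain : ∀ z : ℝ, 0 ≤ z → φ z = a * V z + b := by
    intro z hz
    set c : ℝ := (V z₁ + V z₂) / 2 with hc_def
    set t : ℝ := min 1 (|V z₁ - V z₂| / (2 * (|V z - c| + 1))) with ht_def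
    have ht0 : 0 < t := lt_min one_pos (div_pos (abs_pos.2 hVd) (by positivity))
    have ht1 : t ≤ 1 := min_le_left _ _
    have hw : |(t * V z + (1 - t) * c) - c| ≤ |V z₁ - V z₂| / 2 := by
      have e : t * V z + (1 - t) * c - c = t * (V z - c) := by ring
      rw [e, abs_mul, abs_of_pos ht0]
      have hA : t ≤ |V z₁ - V z₂| / (2 * (|V z - c| + 1)) := min_le_right _ _
      calc t * |V z - c| ≤ (|V z₁ - V z₂| / (2 * (|V z - c| + 1))) * |V z - c| :=
            mul_le_mul_of_nonneg_right hA (abs_nonneg _)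
        _ ≤ |V z₁ - V z₂| / 2 := by
            rw [div_mul_eq_mul_div, div_le_div_iff₀ (by positivity) two_pos]
            nlinarith [abs_nonneg (V z - c), abs_nonneg (V z₁ - V z₂)]
    have h3 := key3 z t hz ht0.le ht1
    have h4 := hmid (t * V z + (1 - t) * c) hw
    have hceq : t * V z + (1 - t) / 2 * V z₁ + (1 - t) / 2 * V z₂ = t * V z + (1 - t) * c := by
      rw [hc_def]; ring
    rw [hceq] at h3
    have h5 : t * φ z + (1 - t) / 2 * φ z₁ + (1 - t) / 2 * φ z₂
        = a * (t * V z + (1 - t) * c) + b := hu.injective (h3.trans h4.symm)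
    rw [← h1, ← h2, hc_def] at h5
    have h6 : t * φ z = t * (a * V z + b) := by ring_nf at h5 ⊢; linarith [h5]
    exact mul_left_cancel₀ ht0.ne' h6
  refine ⟨a, ha, b, ?_, fun z hz => hmain z hz⟩
  -- convex hull part
  intro y hy
  set S : Set ℝ := V '' Set.Ici (0:ℝ) with hS_def
  set T : Set ℝ := {w | (∃ p ∈ S, p ≤ w) ∧ ∃ q ∈ S, w ≤ q} with hT_def
  have hTconv : Convex ℝ T := by
    have : T.OrdConnected := by
      constructor
      rintro x ⟨⟨p, hp, hpx⟩, _⟩ y' ⟨_, ⟨q, hq, hyq⟩⟩ w hw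
      exact ⟨⟨p, hp, hpx.trans hw.1⟩, ⟨q, hq, hw.2.trans hyq⟩⟩
    exact this.convex
  have hST : S ⊆ T := fun p hp => ⟨⟨p, hp, le_rfl⟩, ⟨p, hp, le_rfl⟩⟩
  have hyT : y ∈ T := convexHull_min hST hTconv hy
  obtain ⟨⟨p, ⟨zp, hzp, rfl⟩, hpy⟩, ⟨q, ⟨zq, hzq, rfl⟩, hyq⟩⟩ := hyT
  by_cases hpq : V zp = V zq
  · have hy_eq : y = V zp := le_antisymm (hpq ▸ hyq) hpy
    rw [hy_eq, ← hmain zp hzp, econst zp hzp]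
  · have hlt : V zp < V zq := lt_of_le_of_ne (hpy.trans hyq) hpq
    have hd : V zq - V zp ≠ 0 := sub_ne_zero.2 (Ne.symm hpq)
    set t : ℝ := (V zq - y) / (V zq - V zp) with ht_def
    have htmul : t * (V zq - V zp) = V zq - y := div_mul_cancel₀ _ hd
    have ht0 : 0 ≤ t := div_nonneg (by linarith) (by linarith)
    have ht1 : t ≤ 1 := by
      rw [div_le_one (by linarith : (0:ℝ) < V zq - V zp)]
      linarith
    have hrepr : t * V zp + (1 - t) * V zq = y := by nlinarith [htmul]
    have h := key2 zp zq t hzp hzq ht0 ht1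
    rw [hrepr, hmain zp hzp, hmain zq hzq] at h
    rw [show a * y + b = t * (a * V zp + b) + (1 - t) * (a * V zq + b) by
      rw [← hrepr]; ring]
    exact h
end
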